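/- arXiv:1908.11308 — 7 statements merged into one kernel-verified Lean document; each statement's English description precedes it below -/
import Mathlib

section
/- For a connected undirected graph G on n ≥ 2 vertices, the inequality ∑_{i=2}^n 1/λᵢ ≥ (n-1)²/(n·d̃) holds with equality if and only if G is the complete graph Kₙ. -/
open Finset Matrix Filter

section AuxSpectral

variable {m : ℕ} {A : Matrix (Fin m) (Fin m) ℝ}

lemma aux_trace (hA : A.IsHermitian) : ∑ i, hA.eigenvalues i = A.trace := by
  conv_rhs => rw [hA.spectral_theorem]
  rw [Unitary.conjStarAlgAut_apply, trace_mul_cycle, Unitary.coe_star_mul_self, one_mul, trace_diagonal]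
  simp

lemma aux_sq_of_eigs (hA : A.IsHermitian) (c : ℝ)
    (h : ∀ i, hA.eigenvalues i * hA.eigenvalues i = c * hA.eigenvalues i) :
    A * A = c • A := by
  set U : Matrix (Fin m) (Fin m) ℝ := ↑hA.eigenvectorUnitary with hUdef
  set D : Matrix (Fin m) (Fin m) ℝ := diagonal (RCLike.ofReal ∘ hA.eigenvalues) with hDdef
  have hU : star U * U = 1 := Unitary.coe_star_mul_self _
  have hDD : D * D = c • D := by
    rw [hDdef, diagonal_mul_diagonal]
    ext i j
    rcases eq_or_ne i j with rfl | hij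
    · simp [h i]
    · simp [diagonal_apply_ne _ hij]
  have hspec : A = U * D * star U := by
    have := hA.spectral_theorem; rwa [Unitary.conjStarAlgAut_apply] at this
  rw [hspec, Matrix.mul_assoc (U*D) (star U) (U*D*star U),
    ← Matrix.mul_assoc (star U) (U*D) (star U), ← Matrix.mul_assoc (star U) U D, hU,
    Matrix.one_mul, ← Matrix.mul_assoc (U*D) D (star U), Matrix.mul_assoc U D D, hDD,
    Matrix.mul_smul, Matrix.smul_mul]

lemma aux_eigs_of_sq (hA : A.IsHermitian) (c : ℝ) (hsq : A * A = c • A) (i : Fin m) :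
    hA.eigenvalues i * hA.eigenvalues i = c * hA.eigenvalues i := by
  have hv : A *ᵥ ⇑(hA.eigenvectorBasis i) = hA.eigenvalues i • ⇑(hA.eigenvectorBasis i) :=
    hA.mulVec_eigenvectorBasis i
  have h1 : (A * A) *ᵥ ⇑(hA.eigenvectorBasis i)
      = (hA.eigenvalues i * hA.eigenvalues i) • ⇑(hA.eigenvectorBasis i) := by
    rw [← mulVec_mulVec, hv, mulVec_smul, hv, smul_smul]
  have h2 : (c • A) *ᵥ ⇑(hA.eigenvectorBasis i)
      = (c * hA.eigenvalues i) • ⇑(hA.eigenvectorBasis i) := by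
    rw [smul_mulVec, hv, smul_smul]
  rw [hsq, h2] at h1
  have hne : ⇑(hA.eigenvectorBasis i) ≠ 0 := by
    intro h0
    exact hA.eigenvectorBasis.orthonormal.ne_zero i (by ext j; exact congrFun h0 j)
  exact smul_left_injective ℝ hne h1.symm

lemma aux_rank (hA : A.IsHermitian) :
    Fintype.card {i // hA.eigenvalues i ≠ 0}
      + Module.finrank ℝ (LinearMap.ker (Matrix.toLin' A)) = m := by
  have h1 : Matrix.toLin' A = A.mulVecLin := by
    ext v i
    rfl
  rw [h1, ← hA.rank_eq_card_non_zero_eigs]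
  have := LinearMap.finrank_range_add_finrank_ker (A.mulVecLin)
  rw [Module.finrank_pi, Fintype.card_fin] at this
  exact this

end AuxSpectral

section AuxGraph

lemma aux_walk_adj {V : Type*} {G : SimpleGraph V}
    (H : ∀ u k w, G.Adj u k → G.Adj k w → u = w ∨ G.Adj u w)
    {u w : V} (p : G.Walk u w) : u = w ∨ G.Adj u w := by
  induction p with
  | nil => exact Or.inl rfl
  | @cons a b c h q ih =>
    rcases ih with rfl | h2
    · exact Or.inr h
    · exact H _ _ _ h h2

lemma aux_eq_top {V : Type*} {G : SimpleGraph V} (hG : G.Connected)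
    (H : ∀ u k w, G.Adj u k → G.Adj k w → u = w ∨ G.Adj u w) :
    G = (⊤ : SimpleGraph V) := by
  apply le_antisymm le_top
  intro u w huw
  rw [SimpleGraph.top_adj] at huw
  rcases aux_walk_adj H (hG.preconnected u w).some with rfl | h
  · exact absurd rfl huw
  · exact h

lemma aux_card_cc {V : Type*} [Fintype V] {G : SimpleGraph V} [DecidableEq V]
    [DecidableRel G.Adj] (hG : G.Connected) : Fintype.card G.ConnectedComponent = 1 := by
  haveI hsub := hG.preconnected.subsingleton_connectedComponent
  haveI hne : Nonempty V := hG.nonempty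
  haveI : Nonempty G.ConnectedComponent := ⟨G.connectedComponentMk (Classical.arbitrary V)⟩
  have h1 := Fintype.card_le_one_iff_subsingleton.mpr hsub
  have h2 := Fintype.card_pos (α := G.ConnectedComponent)
  omega

lemma aux_lap_offdiag {n : ℕ} (G : SimpleGraph (Fin n)) [DecidableRel G.Adj]
    {a b : Fin n} (hab : a ≠ b) :
    G.lapMatrix ℝ a b = - (if G.Adj a b then 1 else 0) := by
  simp [SimpleGraph.lapMatrix, SimpleGraph.degMatrix, Matrix.sub_apply,
    Matrix.diagonal_apply_ne _ hab]

lemma aux_lap_diag {n : ℕ} (G : SimpleGraph (Fin n)) [DecidableRel G.Adj] (a : Fin n) :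
    G.lapMatrix ℝ a a = (G.degree a : ℝ) := by
  simp [SimpleGraph.lapMatrix, SimpleGraph.degMatrix, Matrix.sub_apply]

lemma aux_adj_of_sq {n : ℕ} (G : SimpleGraph (Fin n)) [DecidableRel G.Adj] (c : ℝ)
    (hsq : G.lapMatrix ℝ * G.lapMatrix ℝ = c • G.lapMatrix ℝ)
    (u k w : Fin n) (h1 : G.Adj u k) (h2 : G.Adj k w) : u = w ∨ G.Adj u w := by
  by_contra hc
  push_neg at hc
  obtain ⟨hne, hna⟩ := hc
  have hLuw : G.lapMatrix ℝ u w = 0 := by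
    rw [aux_lap_offdiag G hne]
    simp [hna]
  have h0 : (G.lapMatrix ℝ * G.lapMatrix ℝ) u w = 0 := by
    rw [hsq, Matrix.smul_apply, hLuw, smul_zero]
  rw [Matrix.mul_apply] at h0
  have hnonneg : ∀ x ∈ Finset.univ, 0 ≤ G.lapMatrix ℝ u x * G.lapMatrix ℝ x w := by
    intro x _
    rcases eq_or_ne x u with rfl | hxu
    · rw [hLuw, mul_zero]
    · rcases eq_or_ne x w with rfl | hxw
      · rw [hLuw, zero_mul]
      · rw [aux_lap_offdiag G (Ne.symm hxu), aux_lap_offdiag G hxw, neg_mul_neg]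
        split_ifs <;> norm_num
  have hterm := (Finset.sum_eq_zero_iff_of_nonneg hnonneg).mp h0 k (Finset.mem_univ k)
  rw [aux_lap_offdiag G h1.ne, aux_lap_offdiag G h2.ne] at hterm
  simp [h1, h2] at hterm

lemma aux_top_lap_apply {n : ℕ} (hn : 1 ≤ n)
    [inst : DecidableRel (⊤ : SimpleGraph (Fin n)).Adj] (a b : Fin n) :
    (⊤ : SimpleGraph (Fin n)).lapMatrix ℝ a b = (if a = b then (n:ℝ) else 0) - 1 := by
  rcases eq_or_ne a b with rfl | hab
  · have hdeg : (⊤ : SimpleGraph (Fin n)).degree a = n - 1 := by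
      rw [SimpleGraph.degree, SimpleGraph.neighborFinset_eq_filter]
      simp only [SimpleGraph.top_adj]
      rw [show (Finset.univ.filter fun x => a ≠ x) = Finset.univ.erase a by
          convert Finset.filter_ne Finset.univ a, Finset.card_erase_of_mem (Finset.mem_univ a), Finset.card_univ,
        Fintype.card_fin]
    rw [aux_lap_diag, hdeg, if_pos rfl]
    push_cast [Nat.cast_sub hn]
    ring
  · rw [aux_lap_offdiag _ hab, if_neg hab]
    simp [hab]

lemma aux_top_sq {n : ℕ} (hn : 1 ≤ n) [inst : DecidableRel (⊤ : SimpleGraph (Fin n)).Adj] :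
    (⊤ : SimpleGraph (Fin n)).lapMatrix ℝ * (⊤ : SimpleGraph (Fin n)).lapMatrix ℝ
      = (n : ℝ) • (⊤ : SimpleGraph (Fin n)).lapMatrix ℝ := by
  ext a b
  rw [Matrix.mul_apply, Matrix.smul_apply, smul_eq_mul]
  simp only [aux_top_lap_apply hn]
  simp only [sub_mul, mul_sub, one_mul, mul_one, ite_mul, zero_mul, mul_ite, mul_zero,
    Finset.sum_sub_distrib, Finset.sum_ite_eq, Finset.sum_ite_eq', Finset.mem_univ, if_true,
    Finset.sum_const, Finset.card_univ, Fintype.card_fin, nsmul_eq_mul]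
  split_ifs with h
  · ring
  · ring

end AuxGraph

/-- Eigenvalues (unordered) of the unweighted Laplacian of `G`. -/
noncomputable def lapEigs {n : ℕ} (G : SimpleGraph (Fin n)) : Fin n → ℝ :=
  letI := Classical.decRel G.Adj
  (SimpleGraph.posSemidef_lapMatrix ℝ G).isHermitian.eigenvalues

/-- Eigenvalues of the Laplacian sorted in increasing order:
`sortedLapEigs G 0 = λ₁ ≤ sortedLapEigs G 1 = λ₂ ≤ ...`. -/
noncomputable def sortedLapEigs {n : ℕ} (G : SimpleGraph (Fin n)) : Fin n → ℝ :=
  lapEigs G ∘ Tuple.sort (lapEigs G)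

/-- Structural vulnerability `H*(G) = (1/(2n)) ∑_{i=2}^n 1/λᵢ`. Since `(0:ℝ)⁻¹ = 0` in Lean,
summing `(λᵢ)⁻¹` over all eigenvalues skips the single zero eigenvalue of a connected graph. -/
noncomputable def Hstar {n : ℕ} (G : SimpleGraph (Fin n)) : ℝ :=
  (1 / (2 * n)) * ∑ i, (lapEigs G i)⁻¹

/-- Kirchhoff index `K_f(G) = n ∑_{i=2}^n 1/λᵢ` (spectral formula, valid for connected graphs). -/
noncomputable def Kf {n : ℕ} (G : SimpleGraph (Fin n)) : ℝ :=
  (n : ℝ) * ∑ i, (lapEigs G i)⁻¹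

/-- Average degree `d̃(G) = (∑ᵥ dᵥ)/n = 2|E|/n`. -/
noncomputable def avgDeg {V : Type*} [Fintype V] (G : SimpleGraph V) : ℝ :=
  letI := Classical.decRel G.Adj
  (∑ v, (G.degree v : ℝ)) / Fintype.card V

/-- Sum of pairwise shortest-path distances `∑_{i<j} δ_{ij}`. -/
noncomputable def distSum {n : ℕ} (G : SimpleGraph (Fin n)) : ℝ :=
  ∑ p ∈ Finset.univ.filter (fun p : Fin n × Fin n => p.1 < p.2), (G.dist p.1 p.2 : ℝ)

/-- Average pairwise distance `δ̃(G) = (2/(n²-n)) ∑_{i<j} δ_{ij}`. -/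
noncomputable def avgDist {n : ℕ} (G : SimpleGraph (Fin n)) : ℝ :=
  (2 / ((n : ℝ)^2 - n)) * distSum G

/-- The star graph on `Fin n`: vertex `0` is adjacent to every other vertex. -/
noncomputable def starGraph (n : ℕ) : SimpleGraph (Fin n) :=
  SimpleGraph.fromRel (fun i _ => i.val = 0)

/-- the bound `∑_{i=2}^n 1/λᵢ ≥ (n-1)²/(n·d̃)` holds with equality
iff `G` is the complete graph. -/
theorem stmt_1 {n : ℕ} (hn : 2 ≤ n) (G : SimpleGraph (Fin n)) (hG : G.Connected) :
    (∑ i, (lapEigs G i)⁻¹ = ((n : ℝ) - 1)^2 / ((n : ℝ) * avgDeg G)) ↔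
      G = (⊤ : SimpleGraph (Fin n)) := by
  letI := Classical.decRel G.Adj
  have hL := SimpleGraph.posSemidef_lapMatrix ℝ G
  have hH := hL.isHermitian
  set μ : Fin n → ℝ := hH.eigenvalues with hμdef
  have hμ : lapEigs G = μ := rfl
  -- basic numeric facts
  have hnR : (2:ℝ) ≤ (n:ℝ) := by exact_mod_cast hn
  have hn1 : (0:ℝ) < (n:ℝ) - 1 := by linarith
  have hn0 : (0:ℝ) < (n:ℝ) := by linarith
  -- nonnegativity
  have hnonneg : ∀ i, 0 ≤ μ i := fun i => hL.eigenvalues_nonneg i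
  -- trace = sum of degrees
  have htr : ∑ i, μ i = ∑ v, (G.degree v : ℝ) := by
    rw [aux_trace hH, Matrix.trace]
    congr 1
    funext i
    exact aux_lap_diag G i
  set T : ℝ := ∑ i, μ i with hTdef
  -- the support of μ
  set S : Finset (Fin n) := Finset.univ.filter (fun i => μ i ≠ 0) with hSdef
  have hScard : S.card = n - 1 := by
    have h1 := aux_rank hH
    have h2 : Module.finrank ℝ (LinearMap.ker (Matrix.toLin' (G.lapMatrix ℝ))) = 1 := by
      rw [← SimpleGraph.card_connectedComponent_eq_finrank_ker_toLin'_lapMatrix]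
      exact aux_card_cc hG
    rw [h2, Fintype.card_subtype] at h1
    have h3 : S.card = (Finset.univ.filter (fun i => hH.eigenvalues i ≠ 0)).card := by
      rw [hSdef]
    omega
  have hScardR : (S.card : ℝ) = (n:ℝ) - 1 := by
    rw [hScard]
    push_cast [Nat.cast_sub (by omega : 1 ≤ n)]
    ring
  have hSne : S.Nonempty := by
    rw [← Finset.card_pos, hScard]
    omega
  -- positivity of T
  obtain ⟨i0, hi0⟩ := hSne
  have hi0' : μ i0 ≠ 0 := by
    rw [hSdef] at hi0
    exact (Finset.mem_filter.mp hi0).2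
  have hT : 0 < T :=
    Finset.sum_pos' (fun i _ => hnonneg i)
      ⟨i0, Finset.mem_univ i0, lt_of_le_of_ne (hnonneg i0) (Ne.symm hi0')⟩
  -- avgDeg
  have havg : (n : ℝ) * avgDeg G = T := by
    rw [avgDeg, htr]
    rw [Fintype.card_fin]
    field_simp
  -- restricting sums to S
  have hsum_inv : ∑ i, (μ i)⁻¹ = ∑ i ∈ S, (μ i)⁻¹ := by
    refine (Finset.sum_subset (Finset.subset_univ S) ?_).symm
    intro i _ hiS
    have : μ i = 0 := by
      by_contra h
      exact hiS (Finset.mem_filter.mpr ⟨Finset.mem_univ i, h⟩)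
    simp [this]
  have hsum_S : ∑ i ∈ S, μ i = T := by
    refine Finset.sum_subset (Finset.subset_univ S) ?_
    intro i _ hiS
    by_contra h
    exact hiS (Finset.mem_filter.mpr ⟨Finset.mem_univ i, h⟩)
  set c : ℝ := T / ((n:ℝ) - 1) with hcdef
  have hc : 0 < c := div_pos hT hn1
  -- key identity
  have hkey : ∑ i ∈ S, ((μ i)⁻¹ - 2/c + μ i/c^2)
      = (∑ i ∈ S, (μ i)⁻¹) - ((n:ℝ)-1)^2 / T := by
    rw [Finset.sum_add_distrib, Finset.sum_sub_distrib, Finset.sum_const, ← Finset.sum_div,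
      hsum_S, nsmul_eq_mul, hScardR, hcdef]
    field_simp
    ring
  -- termwise formula
  have hterm : ∀ i ∈ S, (μ i)⁻¹ - 2/c + μ i/c^2 = (μ i - c)^2 / (μ i * c^2) := by
    intro i hiS
    have hipos : 0 < μ i :=
      lt_of_le_of_ne (hnonneg i) (Ne.symm (Finset.mem_filter.mp hiS).2)
    field_simp
    ring
  constructor
  · -- equality ⇒ complete
    intro heq
    rw [hμ, havg] at heq
    have hzero : ∑ i ∈ S, ((μ i)⁻¹ - 2/c + μ i/c^2) = 0 := by
      rw [hkey, ← hsum_inv, heq]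
      ring
    have hall : ∀ i ∈ S, (μ i)⁻¹ - 2/c + μ i/c^2 = 0 := by
      refine (Finset.sum_eq_zero_iff_of_nonneg ?_).mp hzero
      intro i hiS
      rw [hterm i hiS]
      have hipos : 0 < μ i :=
        lt_of_le_of_ne (hnonneg i) (Ne.symm (Finset.mem_filter.mp hiS).2)
      positivity
    have hallc : ∀ i ∈ S, μ i = c := by
      intro i hiS
      have hipos : 0 < μ i :=
        lt_of_le_of_ne (hnonneg i) (Ne.symm (Finset.mem_filter.mp hiS).2)
      have h1 := hall i hiS
      rw [hterm i hiS] at h1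
      have h2 : (μ i - c)^2 = 0 := by
        have hden : μ i * c^2 ≠ 0 := by positivity
        exact (div_eq_zero_iff.mp h1).resolve_right hden
      have := pow_eq_zero_iff (n := 2) (by norm_num) |>.mp h2
      linarith
    have heigs : ∀ i, μ i * μ i = c * μ i := by
      intro i
      by_cases hiS : i ∈ S
      · rw [hallc i hiS, mul_comm]
      · have : μ i = 0 := by
          by_contra h
          exact hiS (Finset.mem_filter.mpr ⟨Finset.mem_univ i, h⟩)
        rw [this, mul_zero, mul_zero]
    have hsq : G.lapMatrix ℝ * G.lapMatrix ℝ = c • G.lapMatrix ℝ :=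
      aux_sq_of_eigs hH c heigs
    exact aux_eq_top hG (fun u k w h1 h2 => aux_adj_of_sq G c hsq u k w h1 h2)
  · -- complete ⇒ equality
    intro htop
    subst htop
    have hsq := aux_top_sq (n := n) (by omega)
    have heigs := fun i => aux_eigs_of_sq hH (n:ℝ) hsq i
    have heigs' : ∀ i, μ i = 0 ∨ μ i = (n:ℝ) := by
      intro i
      have h1 : μ i * (μ i - (n:ℝ)) = 0 := by
        have := heigs i
        ring_nf
        ring_nf at this
        linarith
      rcases mul_eq_zero.mp h1 with h | h
      · exact Or.inl h
      · right; linarith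
    have hμS : ∀ i ∈ S, μ i = (n:ℝ) := by
      intro i hiS
      rcases heigs' i with h | h
      · exact absurd h (Finset.mem_filter.mp hiS).2
      · exact h
    have hTn : T = ((n:ℝ) - 1) * n := by
      rw [← hsum_S, Finset.sum_congr rfl hμS, Finset.sum_const, nsmul_eq_mul, hScardR]
    rw [hμ, havg, hsum_inv, Finset.sum_congr rfl (fun i hiS => by rw [hμS i hiS]),
      Finset.sum_const, nsmul_eq_mul, hScardR, hTn]
    field_simp
end

section
/- For any connected weighted undirected graph with edge weights w satisfying 0 < w ≤ 1 (componentwise), each eigenvalue of the weighted Laplacian L_w is at most the corresponding eigenvalue of the unweighted Laplacian L; consequently ∑_{i=2}^n 1/λᵢ(L_w) ≥ ∑_{i=2}^n 1/λᵢ(L), so the minimum of H(G,w) = (1/2n)∑_{i=2}^n 1/λᵢ(L_w) over 0 < w ≤ 1 is attained at w = 1. -/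
open Finset Matrix Filter

open Classical in
/-- The weighted Laplacian `L_w` of `G` with edge weights `w`. -/
noncomputable def wLap {n : ℕ} (G : SimpleGraph (Fin n)) (w : Fin n → Fin n → ℝ) :
    Matrix (Fin n) (Fin n) ℝ :=
  Matrix.of fun i j =>
    if i = j then ∑ k, (if G.Adj i k then w i k else 0)
    else if G.Adj i j then -(w i j) else 0

section AuxStmt4

/-- The `i`-th eigenvector of a Hermitian matrix, as a plain function. -/
noncomputable def evec {n : ℕ} {A : Matrix (Fin n) (Fin n) ℝ} (hA : A.IsHermitian) (i : Fin n) :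
    Fin n → ℝ := (WithLp.equiv 2 (Fin n → ℝ)) (hA.eigenvectorBasis i)

lemma evec_mulVec {n : ℕ} {A : Matrix (Fin n) (Fin n) ℝ} (hA : A.IsHermitian) (i : Fin n) :
    A *ᵥ evec hA i = hA.eigenvalues i • evec hA i := hA.mulVec_eigenvectorBasis i

lemma dp_sum_left {n : ℕ} {ι : Type} [Fintype ι] (f : ι → Fin n → ℝ) (y : Fin n → ℝ) :
    (∑ j, f j) ⬝ᵥ y = ∑ j, f j ⬝ᵥ y := by
  simp only [dotProduct, Finset.sum_apply, Finset.sum_mul]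
  exact Finset.sum_comm

lemma dp_sum_right {n : ℕ} {ι : Type} [Fintype ι] (f : ι → Fin n → ℝ) (y : Fin n → ℝ) :
    y ⬝ᵥ (∑ j, f j) = ∑ j, y ⬝ᵥ f j := by
  simp only [dotProduct, Finset.sum_apply, Finset.mul_sum]
  exact Finset.sum_comm

lemma mv_sum {n : ℕ} {ι : Type} [Fintype ι] (A : Matrix (Fin n) (Fin n) ℝ) (f : ι → Fin n → ℝ) :
    A *ᵥ (∑ j, f j) = ∑ j, A *ᵥ f j := by
  simpa only [Matrix.mulVecLin_apply] using map_sum A.mulVecLin f Finset.univ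

lemma evec_dot {n : ℕ} {A : Matrix (Fin n) (Fin n) ℝ} (hA : A.IsHermitian) (i j : Fin n) :
    evec hA i ⬝ᵥ evec hA j = if i = j then 1 else 0 := by
  have h := hA.eigenvectorBasis.orthonormal
  rw [orthonormal_iff_ite] at h
  simpa [evec, PiLp.inner_apply, RCLike.inner_apply, dotProduct, mul_comm] using h i j

lemma evec_ne_zero {n : ℕ} {A : Matrix (Fin n) (Fin n) ℝ} (hA : A.IsHermitian) (i : Fin n) :
    evec hA i ≠ 0 := by
  intro h
  have := evec_dot hA i i
  rw [h] at this
  simp at this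

lemma eig_quad_eval {n : ℕ} {A : Matrix (Fin n) (Fin n) ℝ} (hA : A.IsHermitian)
    {ι : Type} [Fintype ι] [DecidableEq ι] (e : ι → Fin n) (he : Function.Injective e)
    (c : ι → ℝ) :
    (∑ j, c j • evec hA (e j)) ⬝ᵥ A *ᵥ (∑ j, c j • evec hA (e j))
      = ∑ j, hA.eigenvalues (e j) * (c j)^2 := by
  have hm : A *ᵥ (∑ j, c j • evec hA (e j))
      = ∑ j, (hA.eigenvalues (e j) * c j) • evec hA (e j) := by
    rw [mv_sum]
    refine Finset.sum_congr rfl fun j _ => ?_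
    rw [Matrix.mulVec_smul, evec_mulVec hA]
    rw [smul_smul, mul_comm]
  rw [hm, dp_sum_right]
  simp_rw [dotProduct_smul, dp_sum_left, smul_dotProduct, evec_dot hA, smul_eq_mul,
    mul_ite, mul_one, mul_zero, he.eq_iff]
  simp only [Finset.sum_ite_eq', Finset.mem_univ, if_true]
  exact Finset.sum_congr rfl fun j _ => by ring

lemma eig_dot_eval {n : ℕ} {A : Matrix (Fin n) (Fin n) ℝ} (hA : A.IsHermitian)
    {ι : Type} [Fintype ι] [DecidableEq ι] (e : ι → Fin n) (he : Function.Injective e)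
    (c : ι → ℝ) :
    (∑ j, c j • evec hA (e j)) ⬝ᵥ (∑ j, c j • evec hA (e j)) = ∑ j, (c j)^2 := by
  rw [dp_sum_right]
  simp_rw [dotProduct_smul, dp_sum_left, smul_dotProduct, evec_dot hA, smul_eq_mul,
    mul_ite, mul_one, mul_zero, he.eq_iff]
  simp only [Finset.sum_ite_eq', Finset.mem_univ, if_true]
  exact Finset.sum_congr rfl fun j _ => by ring

/-- Monotonicity of sorted eigenvalues for the Loewner-type order (Courant–Fischer style). -/
lemma eig_mono {n : ℕ} {A B : Matrix (Fin n) (Fin n) ℝ} (hA : A.IsHermitian)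
    (hB : B.IsHermitian)
    (h : ∀ x : Fin n → ℝ, x ⬝ᵥ A *ᵥ x ≤ x ⬝ᵥ B *ᵥ x) (k : Fin n) :
    (hA.eigenvalues ∘ Tuple.sort hA.eigenvalues) k
      ≤ (hB.eigenvalues ∘ Tuple.sort hB.eigenvalues) k := by
  classical
  set σ := Tuple.sort hA.eigenvalues with hσ
  set τ := Tuple.sort hB.eigenvalues with hτ
  set eA : {j : Fin n // k ≤ j} → Fin n := fun j => σ j.1 with heA
  set eB : {j : Fin n // j ≤ k} → Fin n := fun j => τ j.1 with heB
  have heAinj : Function.Injective eA := fun a b hab => Subtype.ext (σ.injective hab)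
  have heBinj : Function.Injective eB := fun a b hab => Subtype.ext (τ.injective hab)
  set vA : {j : Fin n // k ≤ j} → EuclideanSpace ℝ (Fin n) := fun j => hA.eigenvectorBasis (eA j)
  set vB : {j : Fin n // j ≤ k} → EuclideanSpace ℝ (Fin n) := fun j => hB.eigenvectorBasis (eB j)
  have hliA : LinearIndependent ℝ vA :=
    (hA.eigenvectorBasis.orthonormal.comp eA heAinj).linearIndependent
  have hliB : LinearIndependent ℝ vB :=
    (hB.eigenvectorBasis.orthonormal.comp eB heBinj).linearIndependent
  set V := Submodule.span ℝ (Set.range vA)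
  set W := Submodule.span ℝ (Set.range vB)
  have hdV : Module.finrank ℝ V = Fintype.card {j : Fin n // k ≤ j} := finrank_span_eq_card hliA
  have hdW : Module.finrank ℝ W = Fintype.card {j : Fin n // j ≤ k} := finrank_span_eq_card hliB
  have hcard : Fintype.card {j : Fin n // k ≤ j} + Fintype.card {j : Fin n // j ≤ k} = n + 1 := by
    rw [Fintype.card_subtype, Fintype.card_subtype]
    have h1 : Finset.univ.filter (fun j : Fin n => k ≤ j) = Finset.Ici k := by
      ext j; simp
    have h2 : Finset.univ.filter (fun j : Fin n => j ≤ k) = Finset.Iic k := by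
      ext j; simp
    rw [h1, h2, Fin.card_Ici, Fin.card_Iic]
    omega
  have hfin : 0 < Module.finrank ℝ ↥(V ⊓ W) := by
    have hsum := Submodule.finrank_sup_add_finrank_inf_eq V W
    have hle : Module.finrank ℝ ↥(V ⊔ W) ≤ n := by
      have := Submodule.finrank_le (V ⊔ W)
      rwa [finrank_euclideanSpace, Fintype.card_fin] at this
    omega
  obtain ⟨⟨x, hxVW⟩, hxne⟩ :=
    @exists_ne _ (Module.nontrivial_of_finrank_pos (R := ℝ) hfin) (0 : ↥(V ⊓ W))
  have hxV : x ∈ V := hxVW.1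
  have hxW : x ∈ W := hxVW.2
  have hx0 : x ≠ 0 := fun h => hxne (Subtype.ext h)
  obtain ⟨c, hc⟩ := (Submodule.mem_span_range_iff_exists_fun ℝ).mp hxV
  obtain ⟨d, hd⟩ := (Submodule.mem_span_range_iff_exists_fun ℝ).mp hxW
  set xf : Fin n → ℝ := (WithLp.equiv 2 (Fin n → ℝ)) x with hxf
  have hcf : (∑ j, c j • evec hA (eA j)) = xf := by
    rw [hxf, ← hc]; simp [evec, vA]
  have hdf : (∑ j, d j • evec hB (eB j)) = xf := by
    rw [hxf, ← hd]; simp [evec, vB]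
  have hxf0 : xf ≠ 0 := by
    intro h0
    exact hx0 ((WithLp.equiv 2 (Fin n → ℝ)).injective (h0.trans rfl))
  set S : ℝ := xf ⬝ᵥ xf with hS
  have hSpos : 0 < S := by
    rcases lt_or_eq_of_le (Finset.sum_nonneg fun i _ => mul_self_nonneg (xf i)) with h' | h'
    · exact h'
    · exact absurd (dotProduct_self_eq_zero.mp h'.symm) hxf0
  have hq1 : hA.eigenvalues (σ k) * S ≤ xf ⬝ᵥ A *ᵥ xf := by
    rw [hS, ← hcf, eig_quad_eval hA eA heAinj c, eig_dot_eval hA eA heAinj c, Finset.mul_sum]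
    refine Finset.sum_le_sum fun j _ => ?_
    exact mul_le_mul_of_nonneg_right (Tuple.monotone_sort hA.eigenvalues j.2) (sq_nonneg _)
  have hq2 : xf ⬝ᵥ B *ᵥ xf ≤ hB.eigenvalues (τ k) * S := by
    rw [hS, ← hdf, eig_quad_eval hB eB heBinj d, eig_dot_eval hB eB heBinj d, Finset.mul_sum]
    refine Finset.sum_le_sum fun j _ => ?_
    exact mul_le_mul_of_nonneg_right (Tuple.monotone_sort hB.eigenvalues j.2) (sq_nonneg _)
  exact le_of_mul_le_mul_right ((hq1.trans (h xf)).trans hq2) hSpos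

open Classical in
lemma wLap_quad {n : ℕ} (G : SimpleGraph (Fin n)) (w : Fin n → Fin n → ℝ)
    (hsym : ∀ i j, w i j = w j i) (x : Fin n → ℝ) :
    x ⬝ᵥ wLap G w *ᵥ x
      = (∑ i, ∑ j, if G.Adj i j then w i j * (x i - x j)^2 else 0) / 2 := by
  classical
  have hM : ∀ i j, wLap G w i j
      = (if i = j then (∑ k, if G.Adj i k then w i k else 0) else 0)
        + (if G.Adj i j then -(w i j) else 0) := by
    intro i j
    by_cases h : i = j
    · subst h
      simp only [wLap, Matrix.of_apply, if_pos rfl]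
      rw [if_neg (G.irrefl), add_zero]
    · simp only [wLap, Matrix.of_apply, if_neg h, zero_add]
  have key : x ⬝ᵥ wLap G w *ᵥ x
      = (∑ i, ∑ j, if G.Adj i j then w i j * x i * x i else 0)
        - ∑ i, ∑ j, if G.Adj i j then w i j * x i * x j else 0 := by
    simp only [dotProduct, Matrix.mulVec, Finset.mul_sum]
    rw [← Finset.sum_sub_distrib]
    refine Finset.sum_congr rfl fun i _ => ?_
    rw [← Finset.sum_sub_distrib]
    have : ∀ j, x i * (wLap G w i j * x j)
        = (if i = j then (∑ k, if G.Adj i k then w i k else 0) * x i * x i else 0)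
          + (if G.Adj i j then -(w i j * x i * x j) else 0) := by
      intro j
      rw [hM i j]
      by_cases h : i = j
      · subst h
        simp only [if_pos rfl, if_neg G.irrefl]
        ring_nf
        simp
      · rw [if_neg h, if_neg h]
        by_cases ha : G.Adj i j
        · rw [if_pos ha, if_pos ha]; ring
        · rw [if_neg ha, if_neg ha]; ring
    simp_rw [this]
    rw [Finset.sum_add_distrib, Finset.sum_ite_eq Finset.univ i
      (fun j => (∑ k, if G.Adj i k then w i k else 0) * x i * x i)]
    simp only [Finset.mem_univ, if_true, Finset.sum_mul, ite_mul, zero_mul,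
      Finset.sum_neg_distrib]
    rw [← Finset.sum_add_distrib]
    refine Finset.sum_congr rfl fun j _ => ?_
    by_cases ha : G.Adj i j <;> simp [ha] <;> ring
  have hswap : ∑ i, ∑ j, (if G.Adj i j then w i j * x j * x j else 0)
      = ∑ i, ∑ j, (if G.Adj i j then w i j * x i * x i else 0) := by
    rw [Finset.sum_comm]
    refine Finset.sum_congr rfl fun i _ => Finset.sum_congr rfl fun j _ => ?_
    rw [hsym j i, if_congr (G.adj_comm j i) rfl rfl]
  have hterm : ∀ i j, (if G.Adj i j then w i j * (x i - x j)^2 else 0)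
      = (if G.Adj i j then w i j * x i * x i else 0)
        - 2 * (if G.Adj i j then w i j * x i * x j else 0)
        + (if G.Adj i j then w i j * x j * x j else 0) := by
    intro i j
    by_cases ha : G.Adj i j <;> simp [ha] <;> ring
  have hexp : ∑ i, ∑ j, (if G.Adj i j then w i j * (x i - x j)^2 else 0)
      = (∑ i, ∑ j, if G.Adj i j then w i j * x i * x i else 0)
        - 2 * (∑ i, ∑ j, if G.Adj i j then w i j * x i * x j else 0)
        + ∑ i, ∑ j, (if G.Adj i j then w i j * x j * x j else 0) := by
    simp_rw [hterm, Finset.sum_add_distrib, Finset.sum_sub_distrib, Finset.mul_sum]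
  rw [key, hexp, hswap]
  ring

end AuxStmt4

/-- for weights `0 < w ≤ 1` on the edges, each (sorted) eigenvalue of `L_w`
is at most the corresponding eigenvalue of `L`; consequently
`∑ 1/λᵢ(L_w) ≥ ∑ 1/λᵢ(L)`, i.e. `H(G,w)` is minimized at `w = 1`. -/
theorem stmt_4 {n : ℕ} (hn : 2 ≤ n) (G : SimpleGraph (Fin n)) (hG : G.Connected)
    (w : Fin n → Fin n → ℝ) (hsym : ∀ i j, w i j = w j i)
    (hpos : ∀ i j, G.Adj i j → 0 < w i j) (hone : ∀ i j, G.Adj i j → w i j ≤ 1)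
    (hH : (wLap G w).IsHermitian) :
    (∀ i, (hH.eigenvalues ∘ Tuple.sort hH.eigenvalues) i ≤ sortedLapEigs G i) ∧
    (∑ i, (lapEigs G i)⁻¹ ≤ ∑ i, (hH.eigenvalues i)⁻¹) ∧
    Hstar G ≤ (1 / (2 * n)) * ∑ i, (hH.eigenvalues i)⁻¹ := by
  classical
  letI instD : DecidableRel G.Adj := Classical.decRel G.Adj
  have hLpsd := SimpleGraph.posSemidef_lapMatrix ℝ G
  have hLher : (G.lapMatrix ℝ).IsHermitian := hLpsd.isHermitian
  have hEigs : lapEigs G = hLher.eigenvalues := rfl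
  -- quadratic form comparison
  have hcmp : ∀ x : Fin n → ℝ, x ⬝ᵥ wLap G w *ᵥ x ≤ x ⬝ᵥ G.lapMatrix ℝ *ᵥ x := by
    intro x
    rw [wLap_quad G w hsym x, ← Matrix.toLinearMap₂'_apply',
      SimpleGraph.lapMatrix_toLinearMap₂']
    have h2 : (∑ i, ∑ j, if G.Adj i j then w i j * (x i - x j)^2 else 0)
        ≤ ∑ i, ∑ j, if G.Adj i j then (x i - x j)^2 else 0 := by
      refine Finset.sum_le_sum fun i _ => Finset.sum_le_sum fun j _ => ?_
      by_cases ha : G.Adj i j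
      · simp only [if_pos ha]
        nlinarith [sq_nonneg (x i - x j), hone i j ha, hpos i j ha]
      · simp [ha]
    linarith
  have hmono := eig_mono hH hLher hcmp
  have hmono' : ∀ i, (hH.eigenvalues ∘ Tuple.sort hH.eigenvalues) i ≤ sortedLapEigs G i :=
    fun i => hmono i
  -- nonnegativity of eigenvalues
  have hqnn : ∀ x : Fin n → ℝ, 0 ≤ x ⬝ᵥ wLap G w *ᵥ x := by
    intro x
    rw [wLap_quad G w hsym x]
    apply div_nonneg _ (by norm_num)
    refine Finset.sum_nonneg fun i _ => Finset.sum_nonneg fun j _ => ?_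
    by_cases ha : G.Adj i j
    · simp only [if_pos ha]
      exact mul_nonneg (hpos i j ha).le (sq_nonneg _)
    · simp [ha]
  have hPSDw : (wLap G w).PosSemidef :=
    .of_dotProduct_mulVec_nonneg hH fun x => by rw [star_trivial]; exact hqnn x
  have hwnn : ∀ i, 0 ≤ hH.eigenvalues i := fun i => hPSDw.eigenvalues_nonneg i
  have hLnn : ∀ i, 0 ≤ hLher.eigenvalues i := fun i => hLpsd.eigenvalues_nonneg i
  -- kernel of wLap consists of constant vectors
  have hker : ∀ v : Fin n → ℝ, wLap G w *ᵥ v = 0 → ∀ p q, v p = v q := by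
    intro v hv
    have h0 : (∑ i, ∑ j, if G.Adj i j then w i j * (v i - v j)^2 else 0) = 0 := by
      have hq := wLap_quad G w hsym v
      rw [hv, dotProduct_zero] at hq
      linarith
    have hnn : ∀ i : Fin n, i ∈ Finset.univ →
        (0:ℝ) ≤ ∑ j, if G.Adj i j then w i j * (v i - v j)^2 else 0 := by
      intro i _
      refine Finset.sum_nonneg fun j _ => ?_
      by_cases ha : G.Adj i j
      · simp only [if_pos ha]
        exact mul_nonneg (hpos i j ha).le (sq_nonneg _)
      · simp [ha]
    have hadj : ∀ i j, G.Adj i j → v i = v j := by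
      intro i j ha
      have hi := (Finset.sum_eq_zero_iff_of_nonneg hnn).mp h0 i (Finset.mem_univ i)
      have hnn2 : ∀ j : Fin n, j ∈ Finset.univ →
          (0:ℝ) ≤ if G.Adj i j then w i j * (v i - v j)^2 else 0 := by
        intro j _
        by_cases ha' : G.Adj i j
        · simp only [if_pos ha']
          exact mul_nonneg (hpos i j ha').le (sq_nonneg _)
        · simp [ha']
      have hj := (Finset.sum_eq_zero_iff_of_nonneg hnn2).mp hi j (Finset.mem_univ j)
      rw [if_pos ha] at hj
      rcases mul_eq_zero.mp hj with h | h
      · exact absurd h (hpos i j ha).ne'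
      · have := sq_eq_zero_iff.mp h
        linarith [this]
    suffices hreach : ∀ p q, G.Reachable p q → v p = v q by
      exact fun p q => hreach p q (hG.preconnected p q)
    intro p q ⟨wk⟩
    induction wk with
    | nil => rfl
    | cons ha _ ih => exact (hadj _ _ ha).trans ih
  -- zero eigenvalue of wLap has multiplicity at most one
  set z : Fin n := ⟨0, by omega⟩ with hz
  have huniq : ∀ i j : Fin n, hH.eigenvalues i = 0 → hH.eigenvalues j = 0 → i = j := by
    intro i j hi hj
    by_contra hne
    have hvi : wLap G w *ᵥ evec hH i = 0 := by rw [evec_mulVec, hi, zero_smul]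
    have hvj : wLap G w *ᵥ evec hH j = 0 := by rw [evec_mulVec, hj, zero_smul]
    have hci := hker _ hvi
    have hcj := hker _ hvj
    have hdot := evec_dot hH i j
    rw [if_neg hne] at hdot
    have hdot' : evec hH i ⬝ᵥ evec hH j = (n : ℝ) * (evec hH i z * evec hH j z) := by
      rw [dotProduct, Finset.sum_congr rfl fun p _ => by rw [hci p z, hcj p z]]
      rw [Finset.sum_const, Finset.card_univ, Fintype.card_fin, nsmul_eq_mul]
    have hiz : evec hH i z ≠ 0 := by
      intro h0'
      exact evec_ne_zero hH i (funext fun p => by rw [hci p z, h0']; rfl)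
    have hjz : evec hH j z ≠ 0 := by
      intro h0'
      exact evec_ne_zero hH j (funext fun p => by rw [hcj p z, h0']; rfl)
    rw [hdot] at hdot'
    have hn0 : (n : ℝ) ≠ 0 := by positivity
    exact (mul_ne_zero hn0 (mul_ne_zero hiz hjz)) hdot'.symm
  -- the minimum sorted eigenvalue of L is 0
  have hLzero : ∃ m, hLher.eigenvalues m = 0 := by
    have hone' : (fun _ : Fin n => (1:ℝ)) ≠ 0 := by
      intro h
      have := congrFun h z
      simp at this
    have hdet : (G.lapMatrix ℝ).det = 0 := by
      rw [← Matrix.exists_mulVec_eq_zero_iff]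
      exact ⟨fun _ => 1, hone', G.lapMatrix_mulVec_const_eq_zero⟩
    have hprod := hLher.det_eq_prod_eigenvalues
    rw [hdet] at hprod
    obtain ⟨m, _, hm⟩ := Finset.prod_eq_zero_iff.mp hprod.symm
    exact ⟨m, by exact_mod_cast hm⟩
  have hzle : ∀ k : Fin n, z ≤ k := fun k => by simp [hz, Fin.le_def]
  have hLsorted0 : (hLher.eigenvalues ∘ Tuple.sort hLher.eigenvalues) z = 0 := by
    obtain ⟨m, hm⟩ := hLzero
    refine le_antisymm ?_ (hLnn _)
    calc (hLher.eigenvalues ∘ Tuple.sort hLher.eigenvalues) z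
        ≤ (hLher.eigenvalues ∘ Tuple.sort hLher.eigenvalues)
            ((Tuple.sort hLher.eigenvalues).symm m) :=
          Tuple.monotone_sort hLher.eigenvalues (hzle _)
      _ = hLher.eigenvalues m := by simp
      _ = 0 := hm
  -- termwise inverse inequality on sorted eigenvalues
  have hinv : ∀ k : Fin n, ((hLher.eigenvalues ∘ Tuple.sort hLher.eigenvalues) k)⁻¹
      ≤ ((hH.eigenvalues ∘ Tuple.sort hH.eigenvalues) k)⁻¹ := by
    intro k
    rcases eq_or_lt_of_le (hLnn (Tuple.sort hLher.eigenvalues k)) with h0 | hposL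
    · rw [Function.comp_apply, ← h0, _root_.inv_zero]
      exact inv_nonneg.mpr (hwnn _)
    · have hwpos : 0 < (hH.eigenvalues ∘ Tuple.sort hH.eigenvalues) k := by
        rcases eq_or_lt_of_le (hwnn (Tuple.sort hH.eigenvalues k)) with h0 | h
        · exfalso
          by_cases hk : k = z
          · subst hk
            rw [Function.comp_apply] at hLsorted0
            exact hposL.ne' hLsorted0
          · have hzk : z < k := lt_of_le_of_ne (hzle k) (Ne.symm hk)
            have h1 : (hH.eigenvalues ∘ Tuple.sort hH.eigenvalues) z
                ≤ (hH.eigenvalues ∘ Tuple.sort hH.eigenvalues) k :=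
              Tuple.monotone_sort hH.eigenvalues hzk.le
            have hz0 : hH.eigenvalues (Tuple.sort hH.eigenvalues z) = 0 :=
              le_antisymm (h1.trans h0.symm.le) (hwnn _)
            have heqidx := huniq _ _ hz0 h0.symm
            exact hk ((Tuple.sort hH.eigenvalues).injective heqidx).symm
        · exact h
      exact inv_anti₀ hwpos (hmono k)
  -- sum inequality
  have hsum2 : ∑ i, (lapEigs G i)⁻¹ ≤ ∑ i, (hH.eigenvalues i)⁻¹ := by
    have e1 : ∑ i, (lapEigs G i)⁻¹
        = ∑ k, ((hLher.eigenvalues ∘ Tuple.sort hLher.eigenvalues) k)⁻¹ := by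
      rw [hEigs]
      exact (Equiv.sum_comp (Tuple.sort hLher.eigenvalues)
        fun i => (hLher.eigenvalues i)⁻¹).symm
    have e2 : ∑ i, (hH.eigenvalues i)⁻¹
        = ∑ k, ((hH.eigenvalues ∘ Tuple.sort hH.eigenvalues) k)⁻¹ :=
      (Equiv.sum_comp (Tuple.sort hH.eigenvalues) fun i => (hH.eigenvalues i)⁻¹).symm
    rw [e1, e2]
    exact Finset.sum_le_sum fun k _ => hinv k
  refine ⟨hmono', hsum2, ?_⟩
  have h2n : (0:ℝ) ≤ 1 / (2 * n) := by positivity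
  calc Hstar G = (1 / (2 * (n:ℝ))) * ∑ i, (lapEigs G i)⁻¹ := rfl
    _ ≤ (1 / (2 * n)) * ∑ i, (hH.eigenvalues i)⁻¹ := mul_le_mul_of_nonneg_left hsum2 h2n
end

section
/- For the cycle graph Cₙ on n ≥ 3 vertices, ∑_{i=2}^n 1/λᵢ(L) = (n²-1)/12, i.e., H*(Cₙ) = (n²-1)/(24n). -/
open Finset Matrix Filter

/-! ### Auxiliary lemmas -/

section MyAux

open Polynomial

lemma my_charpoly_conj {m : Type*} [Fintype m] [DecidableEq m] {R : Type*} [CommRing R]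
    (P A Q : Matrix m m R) (h1 : P * Q = 1) :
    (P * A * Q).charpoly = A.charpoly := by
  have hPQ : (P.map C) * (Q.map C) = 1 := by
    rw [← Matrix.map_mul (f := (C : R →+* R[X])), h1, Matrix.map_one _ (map_zero _) (map_one _)]
  have key : charmatrix (P * A * Q) = (P.map C) * charmatrix A * (Q.map C) := by
    unfold charmatrix
    simp only [RingHom.mapMatrix_apply]
    rw [Matrix.mul_sub, Matrix.sub_mul]
    congr 1
    · rw [mul_assoc, (scalar_commute (X : R[X]) (fun r' => Commute.all _ _) (Q.map C)).eq,
        ← mul_assoc, hPQ, one_mul]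
    · rw [← Matrix.map_mul, ← Matrix.map_mul]
  have h2 : (Q.map C).det * (P.map C).det = 1 := by
    rw [mul_comm, ← det_mul, hPQ, det_one]
  rw [Matrix.charpoly, key, det_mul, det_mul, mul_comm, ← mul_assoc, h2, one_mul]
  rfl

lemma my_charpoly_diagonal {m : ℕ} {R : Type*} [CommRing R] (d : Fin m → R) :
    (diagonal d).charpoly = ∏ i, (X - C (d i)) := by
  rw [Matrix.charpoly_of_upperTriangular _ (Matrix.blockTriangular_diagonal d)]
  simp [diagonal_apply_eq]

lemma my_charpoly_hermitian {m : ℕ} {A : Matrix (Fin m) (Fin m) ℝ} (hA : A.IsHermitian) :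
    A.charpoly = ∏ i, (X - C (hA.eigenvalues i)) := by
  conv_lhs => rw [hA.spectral_theorem]
  rw [Unitary.conjStarAlgAut_apply]
  rw [my_charpoly_conj _ _ _ (Unitary.coe_mul_star_self _)]
  rw [show (RCLike.ofReal ∘ hA.eigenvalues) = hA.eigenvalues by
    simp [RCLike.ofReal_real_eq_id]]
  exact my_charpoly_diagonal _

/-- powers of a root of unity only depend on exponent mod n -/
lemma my_pow_mod {z : ℂ} {n : ℕ} (hz : z ^ n = 1) (a : ℕ) : z ^ (a % n) = z ^ a := by
  conv_rhs => rw [← Nat.mod_add_div a n]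
  rw [pow_add, pow_mul, hz, one_pow, mul_one]

lemma my_geom_zero {z : ℂ} {n : ℕ} (hz : z ^ n = 1) (h1 : z ≠ 1) :
    ∑ k ∈ range n, z ^ k = 0 := by
  rw [geom_sum_eq h1, hz, sub_self, zero_div]

lemma my_orth {n : ℕ} {ζ : ℂ} (hζ : IsPrimitiveRoot ζ n) (hn : 0 < n) {a b : ℕ}
    (ha : a < n) (hb : b < n) :
    ∑ k ∈ range n, (ζ ^ a * (ζ⁻¹) ^ b) ^ k = if a = b then (n : ℂ) else 0 := by
  have hζ0 : ζ ≠ 0 := hζ.ne_zero hn.ne'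
  have hzn : (ζ ^ a * (ζ⁻¹) ^ b) ^ n = 1 := by
    rw [mul_pow, ← pow_mul, ← pow_mul, mul_comm a n, mul_comm b n, pow_mul, pow_mul,
      hζ.pow_eq_one, inv_pow, hζ.pow_eq_one]
    simp
  by_cases h : a = b
  · subst h
    rw [inv_pow, mul_inv_cancel₀ (pow_ne_zero _ hζ0)]
    simp
  · rw [if_neg h, my_geom_zero hzn]
    intro hcon
    apply h
    apply hζ.pow_inj ha hb
    have : ζ ^ a * (ζ ^ b)⁻¹ = 1 := by rw [← inv_pow]; exact hcon
    field_simp at this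
    exact this

lemma my_weighted_geom (z : ℂ) (n : ℕ) :
    (1 - z) * ∑ j ∈ range n, (j : ℂ) * z ^ j
      = (∑ j ∈ range n, z ^ j) - 1 - ((n : ℂ) - 1) * z ^ n := by
  induction n with
  | zero => simp
  | succ n ih =>
    rw [Finset.sum_range_succ, Finset.sum_range_succ (f := fun j => z ^ j), mul_add, ih]
    push_cast
    ring

lemma my_inv_one_sub {z : ℂ} {n : ℕ} (hn : 0 < n) (hz : z ^ n = 1) (h1 : z ≠ 1) :
    (1 - z)⁻¹ = -(1 / n) * ∑ j ∈ range n, (j : ℂ) * z ^ j := by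
  have h := my_weighted_geom z n
  rw [my_geom_zero hz h1, hz, mul_one] at h
  have hne : (1 : ℂ) - z ≠ 0 := sub_ne_zero.mpr (Ne.symm h1)
  have hnn : (n : ℂ) ≠ 0 := Nat.cast_ne_zero.mpr hn.ne'
  field_simp
  linear_combination h

lemma my_sum_sq (n : ℕ) :
    ∑ j ∈ range n, (j : ℂ) ^ 2 = (n : ℂ) * (n - 1) * (2 * n - 1) / 6 := by
  induction n with
  | zero => simp
  | succ n ih =>
    rw [Finset.sum_range_succ, ih]
    push_cast
    ring

lemma my_sum_id (n : ℕ) :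
    ∑ j ∈ range n, (j : ℂ) = (n : ℂ) * (n - 1) / 2 := by
  induction n with
  | zero => simp
  | succ n ih =>
    rw [Finset.sum_range_succ, ih]
    push_cast
    ring

lemma my_cycle_sum {n : ℕ} (hn : 3 ≤ n) {ζ : ℂ} (hζ : IsPrimitiveRoot ζ n) :
    ∑ k ∈ range n, (2 - ζ ^ k - (ζ⁻¹) ^ k)⁻¹ = ((n : ℂ) ^ 2 - 1) / 12 := by
  have hn0 : 0 < n := by omega
  have hnn : (n : ℂ) ≠ 0 := Nat.cast_ne_zero.mpr hn0.ne'
  have hζ0 : ζ ≠ 0 := hζ.ne_zero hn0.ne'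
  set s : ℂ → ℂ := fun z => ∑ j ∈ range n, (j : ℂ) * z ^ j with hs
  set g : ℕ → ℂ := fun k => (1 / (n : ℂ) ^ 2) * (s (ζ ^ k) * s ((ζ⁻¹) ^ k)) with hg
  have hpt : ∀ k ∈ range n, k ≠ 0 → (2 - ζ ^ k - (ζ⁻¹) ^ k)⁻¹ = g k := by
    intro k hk hk0
    rw [mem_range] at hk
    have hzn : (ζ ^ k) ^ n = 1 := by
      rw [← pow_mul, mul_comm, pow_mul, hζ.pow_eq_one, one_pow]
    have hz1 : ζ ^ k ≠ 1 := hζ.pow_ne_one_of_pos_of_lt hk0 hk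
    have hz0 : ζ ^ k ≠ 0 := pow_ne_zero _ hζ0
    have hzinv : (ζ⁻¹) ^ k = (ζ ^ k)⁻¹ := by rw [inv_pow]
    have hz1' : (ζ ^ k)⁻¹ ≠ 1 := fun hcon => hz1 (inv_eq_one.mp hcon)
    have hzinvn : ((ζ ^ k)⁻¹) ^ n = 1 := by rw [inv_pow, hzn, inv_one]
    have hfac : 2 - ζ ^ k - (ζ ^ k)⁻¹ = (1 - ζ ^ k) * (1 - (ζ ^ k)⁻¹) := by
      field_simp
      ring
    rw [hzinv, hfac, mul_inv, my_inv_one_sub hn0 hzn hz1, my_inv_one_sub hn0 hzinvn hz1', hg]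
    simp only [hs]
    rw [hzinv]
    ring
  have hsum_g : ∑ k ∈ range n, s (ζ ^ k) * s ((ζ⁻¹) ^ k)
      = (n : ℂ) * ∑ j ∈ range n, (j : ℂ) ^ 2 := by
    have expand : ∀ k, s (ζ ^ k) * s ((ζ⁻¹) ^ k)
        = ∑ j ∈ range n, ∑ l ∈ range n, ((j : ℂ) * (l : ℂ)) * (ζ ^ j * (ζ⁻¹) ^ l) ^ k := by
      intro k
      rw [hs]
      simp only
      rw [Finset.sum_mul_sum]
      apply Finset.sum_congr rfl; intro j _
      apply Finset.sum_congr rfl; intro l _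
      simp only [mul_pow, ← pow_mul]
      rw [mul_comm k j, mul_comm k l]
      ring
    simp_rw [expand]
    calc ∑ k ∈ range n, ∑ j ∈ range n, ∑ l ∈ range n,
          ((j : ℂ) * (l : ℂ)) * (ζ ^ j * (ζ⁻¹) ^ l) ^ k
        = ∑ j ∈ range n, ∑ l ∈ range n,
            ((j : ℂ) * (l : ℂ)) * ∑ k ∈ range n, (ζ ^ j * (ζ⁻¹) ^ l) ^ k := by
          rw [Finset.sum_comm]
          apply Finset.sum_congr rfl; intro j _
          rw [Finset.sum_comm]
          apply Finset.sum_congr rfl; intro l _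
          rw [Finset.mul_sum]
      _ = ∑ j ∈ range n, ((j : ℂ) * (j : ℂ)) * (n : ℂ) := by
          apply Finset.sum_congr rfl; intro j hj
          rw [Finset.sum_eq_single j]
          · rw [my_orth hζ hn0 (mem_range.mp hj) (mem_range.mp hj), if_pos rfl]
          · intro l hl hlj
            rw [my_orth hζ hn0 (mem_range.mp hj) (mem_range.mp hl),
              if_neg (fun h => hlj h.symm), mul_zero]
          · intro h; exact absurd hj h
      _ = (n : ℂ) * ∑ j ∈ range n, (j : ℂ) ^ 2 := by
          rw [Finset.mul_sum]
          apply Finset.sum_congr rfl; intros; ring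
  have h0 : g 0 = (1 / (n : ℂ) ^ 2) * ((n : ℂ) * ((n : ℂ) - 1) / 2) ^ 2 := by
    have hs1 : s 1 = (n : ℂ) * ((n : ℂ) - 1) / 2 := by
      rw [hs]
      simp only [one_pow, mul_one]
      exact my_sum_id n
    rw [hg]
    simp only [pow_zero, inv_one, one_pow, hs1]
    ring
  have split : ∑ k ∈ range n, (2 - ζ ^ k - (ζ⁻¹) ^ k)⁻¹ = (∑ k ∈ range n, g k) - g 0 := by
    rw [range_eq_Ico, Finset.sum_eq_sum_Ico_succ_bot hn0,
      Finset.sum_eq_sum_Ico_succ_bot hn0 g]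
    have f0 : ((2 : ℂ) - ζ ^ 0 - (ζ⁻¹) ^ 0)⁻¹ = 0 := by norm_num
    rw [f0, zero_add]
    have heq : ∀ k ∈ Finset.Ico 1 n, (2 - ζ ^ k - (ζ⁻¹) ^ k)⁻¹ = g k := by
      intro k hk
      obtain ⟨h1, h2⟩ := Finset.mem_Ico.mp hk
      exact hpt k (mem_range.mpr h2) (by omega)
    rw [Finset.sum_congr rfl heq]
    ring
  have hgsum : ∑ k ∈ range n, g k
      = (1 / (n : ℂ) ^ 2) * ((n : ℂ) * ∑ j ∈ range n, (j : ℂ) ^ 2) := by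
    rw [hg, ← Finset.mul_sum, hsum_g]
  rw [split, hgsum, my_sum_sq, h0]
  field_simp
  ring

section MyFin
variable {n : ℕ} [NeZero n]

lemma my_cycle_degree' {m : ℕ} (hm : 3 ≤ m) (v : Fin m) :
    (SimpleGraph.cycleGraph m).degree v = 2 := by
  obtain ⟨l, rfl⟩ : ∃ l, m = l + 3 := ⟨m - 3, by omega⟩
  exact SimpleGraph.cycleGraph_degree_three_le

lemma my_one_val (hn : 3 ≤ n) : ((1 : Fin n) : ℕ) = 1 := by
  rw [Fin.val_one', Nat.mod_eq_of_lt (by omega)]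

lemma my_cycle_adj (hn : 3 ≤ n) (i j : Fin n) :
    (SimpleGraph.cycleGraph n).Adj i j ↔ j = i + 1 ∨ j = i - 1 := by
  rw [SimpleGraph.cycleGraph_adj']
  constructor
  · rintro (h | h)
    · right
      have h' : i - j = 1 := Fin.ext (by rw [my_one_val hn]; exact h)
      rw [← h', sub_sub_cancel]
    · left
      have h' : j - i = 1 := Fin.ext (by rw [my_one_val hn]; exact h)
      rw [← h']
      abel
  · rintro (h | h)
    · right; rw [h, add_sub_cancel_left, my_one_val hn]
    · left; rw [h, sub_sub_cancel, my_one_val hn]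

lemma my_add_one_ne (hn : 3 ≤ n) (i : Fin n) : i ≠ i + 1 := by
  intro h
  have h1 : (1 : Fin n) = 0 := by
    have := congrArg (fun x => x - i) h
    simpa [sub_self, add_sub_cancel_left] using this.symm
  have := congrArg Fin.val h1
  rw [my_one_val hn, Fin.val_zero] at this
  exact one_ne_zero this

lemma my_sub_one_ne (hn : 3 ≤ n) (i : Fin n) : i ≠ i - 1 := by
  intro h
  have h1 : (1 : Fin n) = 0 := by
    have := congrArg (fun x => i - x) h
    simpa [sub_self, sub_sub_cancel] using this
  have := congrArg Fin.val h1
  rw [my_one_val hn, Fin.val_zero] at this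
  exact one_ne_zero this

lemma my_pm_ne (hn : 3 ≤ n) (i : Fin n) : i + 1 ≠ i - 1 := by
  intro h
  have h2 : i + (1 + 1) = i + 0 := by
    rw [← add_assoc, h, sub_add_cancel, add_zero]
  have h3 := add_left_cancel h2
  have := congrArg Fin.val h3
  rw [Fin.val_add, my_one_val hn, Fin.val_zero] at this
  rw [Nat.mod_eq_of_lt (by omega)] at this
  omega

lemma my_lap_entry (hn : 3 ≤ n) (inst : DecidableRel (SimpleGraph.cycleGraph n).Adj)
    (i j : Fin n) :
    (@SimpleGraph.lapMatrix (Fin n) ℝ _ (SimpleGraph.cycleGraph n) inst _ _) i j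
      = (if i = j then 2 else 0) - (if j = i + 1 then 1 else 0)
        - (if j = i - 1 then 1 else 0) := by
  obtain rfl : inst = SimpleGraph.instDecidableRelFinAdjCycleGraph n :=
    Subsingleton.elim _ _
  rw [SimpleGraph.lapMatrix, Matrix.sub_apply, SimpleGraph.degMatrix,
    SimpleGraph.adjMatrix_apply]
  simp only [my_cycle_adj hn]
  by_cases h0 : i = j
  · subst h0
    rw [Matrix.diagonal_apply_eq, my_cycle_degree' hn,
      if_neg (show ¬(i = i + 1 ∨ i = i - 1) from
        fun h => h.elim (my_add_one_ne hn i) (my_sub_one_ne hn i)),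
      if_pos rfl, if_neg (my_add_one_ne hn i), if_neg (my_sub_one_ne hn i)]
    norm_num
  · rw [Matrix.diagonal_apply_ne _ h0, if_neg h0]
    by_cases h1 : j = i + 1
    · rw [if_pos h1, if_pos (Or.inl h1), if_neg (h1 ▸ my_pm_ne hn i)]
      norm_num
    · rw [if_neg h1]
      by_cases h2 : j = i - 1
      · rw [if_pos h2, if_pos (Or.inr h2)]
        norm_num
      · rw [if_neg h2, if_neg (fun h => h.elim h1 h2)]
        norm_num

lemma my_cycle_diag (hn : 3 ≤ n) {ζ : ℂ} (hζ : IsPrimitiveRoot ζ n)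
    (M : Matrix (Fin n) (Fin n) ℂ)
    (hMe : ∀ i j, M i j = (if i = j then 2 else 0) - (if j = i + 1 then 1 else 0)
      - (if j = i - 1 then 1 else 0)) :
    ∃ P Q : Matrix (Fin n) (Fin n) ℂ, P * Q = 1 ∧
      M = P * Matrix.diagonal (fun k : Fin n => 2 - ζ ^ (k : ℕ) - (ζ⁻¹) ^ (k : ℕ)) * Q := by
  have hn0 : 0 < n := by omega
  have hnn : (n : ℂ) ≠ 0 := Nat.cast_ne_zero.mpr hn0.ne'
  have hζ0 : ζ ≠ 0 := hζ.ne_zero hn0.ne'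
  set F : Matrix (Fin n) (Fin n) ℂ :=
    Matrix.of (fun i k : Fin n => ζ ^ ((i : ℕ) * (k : ℕ))) with hF
  set Fi : Matrix (Fin n) (Fin n) ℂ :=
    Matrix.of (fun j k : Fin n => (n : ℂ)⁻¹ * (ζ⁻¹) ^ ((j : ℕ) * (k : ℕ))) with hFi
  have hpowk : ∀ k : Fin n, (ζ ^ (k : ℕ)) ^ n = 1 := fun k => by
    rw [← pow_mul, mul_comm, pow_mul, hζ.pow_eq_one, one_pow]
  have key : ∀ (a : ℕ) (k : Fin n), ζ ^ ((a % n) * (k : ℕ)) = ζ ^ (a * (k : ℕ)) := by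
    intro a k
    rw [mul_comm, pow_mul, mul_comm a, pow_mul, my_pow_mod (hpowk k) a]
  have hstep : ∀ i k : Fin n, F (i + 1) k = F i k * ζ ^ (k : ℕ) := by
    intro i k
    show ζ ^ (((i + 1 : Fin n) : ℕ) * (k : ℕ)) = ζ ^ ((i : ℕ) * (k : ℕ)) * ζ ^ (k : ℕ)
    rw [Fin.val_add, my_one_val hn, key, add_mul, one_mul, pow_add]
  have hstep2 : ∀ i k : Fin n, F (i - 1) k = F i k * (ζ⁻¹) ^ (k : ℕ) := by
    intro i k
    have h := hstep (i - 1) k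
    rw [sub_add_cancel] at h
    rw [h, inv_pow, mul_assoc, mul_inv_cancel₀ (pow_ne_zero _ hζ0), mul_one]
  have hMF : M * F
      = F * Matrix.diagonal (fun k : Fin n => 2 - ζ ^ (k : ℕ) - (ζ⁻¹) ^ (k : ℕ)) := by
    ext i k
    rw [Matrix.mul_apply, Matrix.mul_diagonal]
    simp_rw [hMe, sub_mul, Finset.sum_sub_distrib]
    rw [show ∑ j : Fin n, (if i = j then (2:ℂ) else 0) * F j k = 2 * F i k by
        simp [ite_mul, Finset.sum_ite_eq],
      show ∑ j : Fin n, (if j = i + 1 then (1:ℂ) else 0) * F j k = F (i + 1) k by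
        simp [ite_mul, Finset.sum_ite_eq'],
      show ∑ j : Fin n, (if j = i - 1 then (1:ℂ) else 0) * F j k = F (i - 1) k by
        simp [ite_mul, Finset.sum_ite_eq'],
      hstep, hstep2]
    ring
  have hFFi : F * Fi = 1 := by
    ext i j
    rw [Matrix.mul_apply, Matrix.one_apply]
    have : ∀ k : Fin n, F i k * Fi k j
        = (n : ℂ)⁻¹ * ((ζ ^ (i : ℕ) * (ζ⁻¹) ^ (j : ℕ)) ^ (k : ℕ)) := by
      intro k
      show ζ ^ ((i : ℕ) * (k : ℕ)) * ((n : ℂ)⁻¹ * (ζ⁻¹) ^ ((k : ℕ) * (j : ℕ)))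
        = (n : ℂ)⁻¹ * ((ζ ^ (i : ℕ) * (ζ⁻¹) ^ (j : ℕ)) ^ (k : ℕ))
      rw [mul_pow, pow_mul, mul_comm ((k : ℕ)) ((j : ℕ)), pow_mul, ← pow_mul,
        mul_comm ((i : ℕ)) ((k : ℕ)), pow_mul]
      ring
    simp_rw [this, ← Finset.mul_sum]
    rw [Fin.sum_univ_eq_sum_range (fun m => (ζ ^ (i : ℕ) * (ζ⁻¹) ^ (j : ℕ)) ^ m) n,
      my_orth hζ hn0 i.isLt j.isLt]
    by_cases h : i = j
    · rw [if_pos h, if_pos (by rw [h]), inv_mul_cancel₀ hnn]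
    · rw [if_neg (fun hc => h (Fin.ext hc)), if_neg h, mul_zero]
  refine ⟨F, Fi, hFFi, ?_⟩
  calc M = M * (F * Fi) := by rw [hFFi, mul_one]
    _ = (M * F) * Fi := by rw [mul_assoc]
    _ = F * Matrix.diagonal (fun k : Fin n => 2 - ζ ^ (k : ℕ) - (ζ⁻¹) ^ (k : ℕ)) * Fi := by
        rw [hMF]

/-- The key spectral computation: any real symmetric matrix with the entries of the
cycle Laplacian has `∑ λᵢ⁻¹ = (n²-1)/12`. -/
lemma my_key (hn : 3 ≤ n) {L : Matrix (Fin n) (Fin n) ℝ} (hA : L.IsHermitian)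
    (hent : ∀ i j, L i j = (if i = j then 2 else 0) - (if j = i + 1 then 1 else 0)
      - (if j = i - 1 then 1 else 0)) :
    ∑ i, (hA.eigenvalues i)⁻¹ = ((n : ℝ) ^ 2 - 1) / 12 := by
  have hn0 : 0 < n := by omega
  set ζ : ℂ := Complex.exp (2 * Real.pi * Complex.I / n) with hζdef
  have hζ : IsPrimitiveRoot ζ n := Complex.isPrimitiveRoot_exp n hn0.ne'
  set d : Fin n → ℂ := fun k => 2 - ζ ^ (k : ℕ) - (ζ⁻¹) ^ (k : ℕ) with hd
  -- complexified matrix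
  set M : Matrix (Fin n) (Fin n) ℂ := L.map Complex.ofReal with hM
  have hMe : ∀ i j, M i j = (if i = j then 2 else 0) - (if j = i + 1 then 1 else 0)
      - (if j = i - 1 then 1 else 0) := by
    intro i j
    rw [hM, Matrix.map_apply, hent i j]
    push_cast [apply_ite Complex.ofReal]
    norm_num
  obtain ⟨P, Q, hPQ, hdecomp⟩ := my_cycle_diag hn hζ M hMe
  -- two computations of the charpoly of M
  have hcp1 : M.charpoly = ∏ i, (X - C ((hA.eigenvalues i : ℂ))) := by
    have : M = L.map Complex.ofRealHom := rfl
    rw [this, Matrix.charpoly_map, my_charpoly_hermitian hA, Polynomial.map_prod]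
    apply Finset.prod_congr rfl
    intro i _
    rw [Polynomial.map_sub, Polynomial.map_X, Polynomial.map_C]
    rfl
  have hcp2 : M.charpoly = ∏ k, (X - C (d k)) := by
    rw [hdecomp, my_charpoly_conj _ _ _ hPQ, my_charpoly_diagonal]
  -- multiset of roots
  have hroots : Finset.univ.val.map (fun i => (hA.eigenvalues i : ℂ))
      = Finset.univ.val.map d := by
    have h := congrArg Polynomial.roots (hcp1.symm.trans hcp2)
    have e1 : ∀ f : Fin n → ℂ, (∏ i, (X - C (f i))).roots = Finset.univ.val.map f := by
      intro f
      rw [show (∏ i, (X - C (f i)))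
          = (Multiset.map (fun a => X - C a) (Finset.univ.val.map f)).prod by
        rw [Multiset.map_map]; rfl]
      exact Polynomial.roots_multiset_prod_X_sub_C _
    rwa [e1, e1] at h
  -- sum of inverses
  have hsum : ∑ i, ((hA.eigenvalues i : ℂ))⁻¹ = ∑ k, (d k)⁻¹ := by
    have h1 : ∑ i, ((hA.eigenvalues i : ℂ))⁻¹
        = (Multiset.map (fun z : ℂ => z⁻¹)
            (Finset.univ.val.map (fun i => (hA.eigenvalues i : ℂ)))).sum := by
      rw [Multiset.map_map]; rfl
    have h2 : ∑ k, (d k)⁻¹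
        = (Multiset.map (fun z : ℂ => z⁻¹) (Finset.univ.val.map d)).sum := by
      rw [Multiset.map_map]; rfl
    rw [h1, h2, hroots]
  have hval : ∑ k : Fin n, (d k)⁻¹ = ((n : ℂ) ^ 2 - 1) / 12 := by
    rw [show ∑ k : Fin n, (d k)⁻¹
        = ∑ k ∈ range n, (2 - ζ ^ k - (ζ⁻¹) ^ k)⁻¹ from
      Fin.sum_univ_eq_sum_range (fun m => (2 - ζ ^ m - (ζ⁻¹) ^ m)⁻¹) n]
    exact my_cycle_sum hn hζ
  apply Complex.ofReal_injective
  push_cast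
  rw [hsum, hval]

end MyFin

end MyAux

/-- for the cycle graph `Cₙ`, `∑_{i=2}^n 1/λᵢ = (n²-1)/12`,
i.e. `H*(Cₙ) = (n²-1)/(24n)`. -/
theorem stmt_8 (n : ℕ) (hn : 3 ≤ n) :
    (∑ i, (lapEigs (SimpleGraph.cycleGraph n) i)⁻¹ = ((n : ℝ)^2 - 1) / 12) ∧
    Hstar (SimpleGraph.cycleGraph n) = ((n : ℝ)^2 - 1) / (24 * (n : ℝ)) := by
  haveI : NeZero n := ⟨by omega⟩
  have main : ∑ i, (lapEigs (SimpleGraph.cycleGraph n) i)⁻¹ = ((n : ℝ)^2 - 1) / 12 := by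
    simp only [lapEigs]
    exact my_key hn _ (my_lap_entry hn _)
  refine ⟨main, ?_⟩
  rw [Hstar, main]
  rw [div_mul_div_comm, one_mul]
  congr 1
  ring
end

section
/- For any connected undirected graph G on n ≥ 2 vertices, H*(G) ≤ δ̃(G)·(n-1)/(4n), where δ̃(G) = (2/(n²-n))·∑_{i<j} δ_{ij} is the average distance between vertices; equality holds if and only if G is a tree. -/
open Finset Matrix Filter

namespace StmtAux

variable {n : ℕ} (G : SimpleGraph (Fin n))

/-- The Laplacian matrix with a fixed decidability instance. -/
noncomputable def L : Matrix (Fin n) (Fin n) ℝ :=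
  letI := Classical.decRel G.Adj
  G.lapMatrix ℝ

lemma hL : (L G).PosSemidef :=
  letI := Classical.decRel G.Adj
  SimpleGraph.posSemidef_lapMatrix ℝ G

/-- The eigenvector unitary as a plain matrix. -/
noncomputable def U : Matrix (Fin n) (Fin n) ℝ :=
  ((hL G).isHermitian.eigenvectorUnitary : Matrix (Fin n) (Fin n) ℝ)

lemma lapEigs_eq : lapEigs G = (hL G).isHermitian.eigenvalues := rfl

lemma star_U_mul_U : star (U G) * U G = 1 := Unitary.coe_star_mul_self _

lemma U_mul_star_U : U G * star (U G) = 1 := Unitary.coe_mul_star_self _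

lemma spectral : L G = U G * diagonal (lapEigs G) * star (U G) := by
  have := (hL G).isHermitian.spectral_theorem
  simpa [U, lapEigs_eq] using this

/-- `conj f := U * diagonal f * star U`. -/
noncomputable def conj (f : Fin n → ℝ) : Matrix (Fin n) (Fin n) ℝ :=
  U G * diagonal f * star (U G)

lemma conj_mul (f g : Fin n → ℝ) : conj G f * conj G g = conj G (f * g) := by
  unfold conj
  have key : star (U G) * (U G * (diagonal g * star (U G))) = diagonal g * star (U G) := by
    rw [← Matrix.mul_assoc, star_U_mul_U, Matrix.one_mul]
  rw [Matrix.mul_assoc (U G) (diagonal f) (star (U G)), Matrix.mul_assoc (U G) (diagonal g),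
    Matrix.mul_assoc, Matrix.mul_assoc (diagonal f), key, ← Matrix.mul_assoc (diagonal f),
    diagonal_mul_diagonal, ← Matrix.mul_assoc]
  rfl

lemma conj_one : conj G 1 = 1 := by
  unfold conj
  rw [show (diagonal (1 : Fin n → ℝ)) = (1 : Matrix (Fin n) (Fin n) ℝ) from diagonal_one,
    Matrix.mul_one, U_mul_star_U]

lemma conj_zero : conj G 0 = 0 := by
  unfold conj
  rw [show (diagonal (0 : Fin n → ℝ)) = (0 : Matrix (Fin n) (Fin n) ℝ) from diagonal_zero,
    Matrix.mul_zero, Matrix.zero_mul]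

lemma conj_transpose (f : Fin n → ℝ) : (conj G f)ᵀ = conj G f := by
  have h : star (conj G f) = conj G f := by
    unfold conj
    simp only [StarMul.star_mul, star_star]
    rw [show star (diagonal f) = diagonal f by
      rw [star_eq_conjTranspose, diagonal_conjTranspose]; simp [Pi.star_def]]
    rw [Matrix.mul_assoc]
  have := h
  rw [star_eq_conjTranspose, conjTranspose_eq_transpose_of_trivial] at this
  exact this

lemma trace_conj (f : Fin n → ℝ) : (conj G f).trace = ∑ i, f i := by
  unfold conj
  rw [Matrix.trace_mul_cycle, star_U_mul_U, Matrix.one_mul, trace_diagonal]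

lemma spectral' : L G = conj G (lapEigs G) := spectral G

/-- The pseudoinverse `Γ` of the Laplacian. -/
noncomputable def Gm : Matrix (Fin n) (Fin n) ℝ := conj G (fun i => (lapEigs G i)⁻¹)

/-- The spectral projection onto the kernel. -/
noncomputable def K : Matrix (Fin n) (Fin n) ℝ :=
  conj G (fun i => if lapEigs G i = 0 then 1 else 0)

lemma L_mul_Gm : L G * Gm G = 1 - K G := by
  rw [spectral', Gm, conj_mul]
  have : (lapEigs G * fun i => (lapEigs G i)⁻¹) =
      (fun i => (1 : ℝ)) - (fun i => if lapEigs G i = 0 then 1 else 0) := by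
    funext i
    by_cases h : lapEigs G i = 0 <;> simp [h, mul_inv_cancel₀]
  rw [this]
  unfold conj
  rw [show (diagonal ((fun _ => (1:ℝ)) - fun i => if lapEigs G i = 0 then 1 else 0)) =
      1 - diagonal (fun i => if lapEigs G i = 0 then 1 else 0) by
    ext i j
    by_cases h : i = j <;> simp [h, diagonal_apply, Matrix.one_apply, Matrix.sub_apply]]
  rw [Matrix.mul_sub, Matrix.sub_mul, Matrix.mul_one, U_mul_star_U]
  rfl

lemma Gm_mul_L : Gm G * L G = 1 - K G := by
  rw [spectral', Gm, conj_mul]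
  have : ((fun i => (lapEigs G i)⁻¹) * lapEigs G) =
      (fun i => (1 : ℝ)) - (fun i => if lapEigs G i = 0 then 1 else 0) := by
    funext i
    by_cases h : lapEigs G i = 0 <;> simp [h, inv_mul_cancel₀]
  rw [this]
  unfold conj
  rw [show (diagonal ((fun _ => (1:ℝ)) - fun i => if lapEigs G i = 0 then 1 else 0)) =
      1 - diagonal (fun i => if lapEigs G i = 0 then 1 else 0) by
    ext i j
    by_cases h : i = j <;> simp [h, diagonal_apply, Matrix.one_apply, Matrix.sub_apply]]
  rw [Matrix.mul_sub, Matrix.sub_mul, Matrix.mul_one, U_mul_star_U]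
  rfl

lemma Gm_mul_K : Gm G * K G = 0 := by
  rw [Gm, K, conj_mul]
  have : ((fun i => (lapEigs G i)⁻¹) * fun i => if lapEigs G i = 0 then 1 else 0) = 0 := by
    funext i
    by_cases h : lapEigs G i = 0 <;> simp [h]
  rw [this, conj_zero]

lemma L_mul_K : L G * K G = 0 := by
  rw [spectral', K, conj_mul]
  have : (lapEigs G * fun i => if lapEigs G i = 0 then 1 else 0) = 0 := by
    funext i
    by_cases h : lapEigs G i = 0 <;> simp [h]
  rw [this, conj_zero]

lemma trace_Gm : (Gm G).trace = ∑ i, (lapEigs G i)⁻¹ := trace_conj ..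


lemma Gm_transpose : (Gm G)ᵀ = Gm G := by
  rw [Gm]; exact conj_transpose G _

lemma K_transpose : (K G)ᵀ = K G := by
  rw [K]; exact conj_transpose G _

lemma K_fix (v : Fin n → ℝ) (hv : L G *ᵥ v = 0) : K G *ᵥ v = v := by
  have hUv : ∀ (x : Fin n → ℝ), U G *ᵥ (star (U G) *ᵥ x) = x := fun x => by
    rw [Matrix.mulVec_mulVec, U_mul_star_U, Matrix.one_mulVec]
  have hm : star (U G) * L G = diagonal (lapEigs G) * star (U G) := by
    rw [spectral, ← Matrix.mul_assoc, ← Matrix.mul_assoc, star_U_mul_U, Matrix.one_mul]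
  have hdiag : diagonal (lapEigs G) *ᵥ (star (U G) *ᵥ v) = 0 := by
    rw [Matrix.mulVec_mulVec, ← hm, ← Matrix.mulVec_mulVec, hv, Matrix.mulVec_zero]
  have hchi : diagonal (fun i => if lapEigs G i = 0 then (1:ℝ) else 0) *ᵥ (star (U G) *ᵥ v)
      = star (U G) *ᵥ v := by
    funext i
    rw [Matrix.mulVec_diagonal]
    by_cases h : lapEigs G i = 0
    · simp [h]
    · have h2 := congrFun hdiag i
      rw [Matrix.mulVec_diagonal] at h2
      have : (star (U G) *ᵥ v) i = 0 := by
        rcases mul_eq_zero.mp h2 with h3 | h3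
        · exact absurd h3 h
        · exact h3
      simp [h, this]
  have : K G *ᵥ v = U G *ᵥ (diagonal (fun i => if lapEigs G i = 0 then (1:ℝ) else 0)
      *ᵥ (star (U G) *ᵥ v)) := by
    rw [Matrix.mulVec_mulVec, Matrix.mulVec_mulVec, K, conj]
  rw [this, hchi, hUv]

/-- The all-`1/n` matrix. -/
noncomputable def Jn (n : ℕ) : Matrix (Fin n) (Fin n) ℝ := Matrix.of (fun _ _ => (n : ℝ)⁻¹)

lemma ker_L (hG : G.Connected) (v : Fin n → ℝ) (hv : L G *ᵥ v = 0) (i j : Fin n) : v i = v j := by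
  letI := Classical.decRel G.Adj
  have h : Matrix.toLin' (G.lapMatrix ℝ) v = 0 := by
    rw [Matrix.toLin'_apply]; exact hv
  rw [Matrix.toLin'_apply, SimpleGraph.lapMatrix_mulVec_eq_zero_iff_forall_reachable] at h
  exact h i j (hG.preconnected i j)

lemma L_mulVec_const (c : ℝ) : L G *ᵥ (fun _ => c) = 0 := by
  letI := Classical.decRel G.Adj
  have h1 : L G *ᵥ (fun _ => (1:ℝ)) = 0 := SimpleGraph.lapMatrix_mulVec_const_eq_zero G
  have h2 : (fun (_ : Fin n) => c) = c • (fun _ => (1:ℝ)) := by funext i; simp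
  rw [h2, Matrix.mulVec_smul, h1, smul_zero]

lemma Jn_mulVec (v : Fin n → ℝ) : Jn n *ᵥ v = fun _ => (∑ k, v k) / n := by
  funext i
  simp [Jn, Matrix.mulVec, dotProduct, div_eq_mul_inv, Finset.sum_mul, mul_comm]

lemma Jn_fix (hG : G.Connected) (hn : 0 < n) (v : Fin n → ℝ) (hv : L G *ᵥ v = 0) :
    Jn n *ᵥ v = v := by
  obtain ⟨i⟩ : Nonempty (Fin n) := ⟨⟨0, hn⟩⟩
  have hconst : ∀ j, v j = v i := fun j => ker_L G hG v hv j i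
  have hsum : ∑ k, v k = n * v i := by
    rw [Finset.sum_congr rfl fun k _ => hconst k]
    simp [Finset.card_univ]
  rw [Jn_mulVec]
  funext j
  rw [hconst j, hsum]
  have : (n : ℝ) ≠ 0 := by positivity
  field_simp

lemma mulVec_ext {A B : Matrix (Fin n) (Fin n) ℝ} (h : ∀ v, A *ᵥ v = B *ᵥ v) : A = B := by
  ext i j
  have := congrFun (h (Pi.single j 1)) i
  simpa [Matrix.mulVec_single] using this

lemma K_eq_Jn (hG : G.Connected) (hn : 0 < n) : K G = Jn n := by
  have hJK : Jn n * K G = K G := by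
    apply mulVec_ext
    intro v
    rw [← Matrix.mulVec_mulVec]
    exact Jn_fix G hG hn _ (by rw [Matrix.mulVec_mulVec, L_mul_K, Matrix.zero_mulVec])
  have hKJ : K G * Jn n = Jn n := by
    apply mulVec_ext
    intro v
    rw [← Matrix.mulVec_mulVec]
    apply K_fix
    rw [Jn_mulVec]
    exact L_mulVec_const G _
  have hJt : (Jn n)ᵀ = Jn n := by ext i j; rfl
  calc K G = (K G)ᵀ := (K_transpose G).symm
    _ = (Jn n * K G)ᵀ := by rw [hJK]
    _ = (K G)ᵀ * (Jn n)ᵀ := Matrix.transpose_mul _ _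
    _ = K G * Jn n := by rw [K_transpose, hJt]
    _ = Jn n := hKJ

lemma Gm_symm_entries (i j : Fin n) : Gm G i j = Gm G j i := by
  have := congrFun (congrFun (Gm_transpose G) i) j
  simpa [Matrix.transpose_apply] using this.symm

lemma Gm_rowsum (hG : G.Connected) (hn : 0 < n) (i : Fin n) : ∑ k, Gm G i k = 0 := by
  have h := Gm_mul_K G
  rw [K_eq_Jn G hG hn] at h
  have h2 := congrFun (congrFun h i) i
  simp only [Matrix.mul_apply, Matrix.zero_apply, Jn, Matrix.of_apply] at h2
  have hn' : (n : ℝ)⁻¹ ≠ 0 := by positivity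
  have h3 : (∑ k, Gm G i k) * (n:ℝ)⁻¹ = 0 := by rw [Finset.sum_mul]; exact h2
  exact (mul_eq_zero.mp h3).resolve_right hn'

/-- `w i j` is the signed indicator vector of the pair `(i,j)`. -/
noncomputable def w (i j : Fin n) : Fin n → ℝ := Pi.single i 1 - Pi.single j 1

lemma K_mulVec_w (hG : G.Connected) (hn : 0 < n) (i j : Fin n) : K G *ᵥ w i j = 0 := by
  rw [K_eq_Jn G hG hn, Jn_mulVec]
  funext a
  simp [w]

/-- Effective resistance. -/
noncomputable def r (i j : Fin n) : ℝ := w i j ⬝ᵥ (Gm G *ᵥ w i j)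

lemma Gm_mulVec_w (i j a : Fin n) : (Gm G *ᵥ w i j) a = Gm G a i - Gm G a j := by
  simp [w, Matrix.mulVec_sub, Matrix.mulVec_single]

lemma w_dot (i j : Fin n) (v : Fin n → ℝ) : w i j ⬝ᵥ v = v i - v j := by
  simp [w, sub_dotProduct, Pi.single_apply]

lemma r_eq (i j : Fin n) : r G i j = Gm G i i + Gm G j j - Gm G i j - Gm G j i := by
  rw [r, w_dot, Gm_mulVec_w, Gm_mulVec_w]; ring

lemma r_self (i : Fin n) : r G i i = 0 := by rw [r_eq]; ring

lemma r_symm (i j : Fin n) : r G i j = r G j i := by rw [r_eq, r_eq]; ring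

lemma L_mulVec_y (hG : G.Connected) (hn : 0 < n) (i j : Fin n) :
    L G *ᵥ (Gm G *ᵥ w i j) = w i j := by
  rw [Matrix.mulVec_mulVec, L_mul_Gm, Matrix.sub_mulVec, Matrix.one_mulVec,
    K_mulVec_w G hG hn, sub_zero]

lemma y_diff (i j : Fin n) :
    (Gm G *ᵥ w i j) i - (Gm G *ᵥ w i j) j = r G i j := by
  rw [Gm_mulVec_w, Gm_mulVec_w, r_eq]; ring

lemma r_energy (hG : G.Connected) (hn : 0 < n) (i j : Fin n) :
    (Gm G *ᵥ w i j) ⬝ᵥ (L G *ᵥ (Gm G *ᵥ w i j)) = r G i j := by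
  rw [L_mulVec_y G hG hn, dotProduct_comm, r]

lemma r_nonneg (hG : G.Connected) (hn : 0 < n) (i j : Fin n) : 0 ≤ r G i j := by
  rw [← r_energy G hG hn]
  have := (hL G).dotProduct_mulVec_nonneg (Gm G *ᵥ w i j)
  simpa using this

lemma pair_sum_r (hG : G.Connected) (hn : 0 < n) :
    ∑ p ∈ Finset.univ.filter (fun p : Fin n × Fin n => p.1 < p.2), r G p.1 p.2
      = n * (Gm G).trace := by
  classical
  set f : Fin n × Fin n → ℝ := fun p => r G p.1 p.2 with hf
  have hrow : ∀ i, ∑ j, Gm G i j = 0 := Gm_rowsum G hG hn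
  have hcol : ∀ i, ∑ j, Gm G j i = 0 := by
    intro i
    rw [Finset.sum_congr rfl fun j _ => Gm_symm_entries G j i]
    exact hrow i
  have hfull : ∑ p : Fin n × Fin n, f p = 2 * (n * (Gm G).trace) := by
    rw [Fintype.sum_prod_type]
    simp only [hf, r_eq]
    have hinner : ∀ i, ∑ j, (Gm G i i + Gm G j j - Gm G i j - Gm G j i)
        = n * Gm G i i + (Gm G).trace := by
      intro i
      rw [Finset.sum_sub_distrib, Finset.sum_sub_distrib, Finset.sum_add_distrib, hrow i, hcol i,
        Finset.sum_const, Finset.card_univ]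
      simp [Matrix.trace, Matrix.diag, nsmul_eq_mul]
    rw [Finset.sum_congr rfl fun i _ => hinner i, Finset.sum_add_distrib, Finset.sum_const,
      Finset.card_univ, ← Finset.mul_sum]
    simp only [Fintype.card_fin, nsmul_eq_mul]
    have htr : ∑ i, Gm G i i = (Gm G).trace := rfl
    rw [htr]
    ring
  have hswap : ∑ p ∈ Finset.univ.filter (fun p : Fin n × Fin n => p.2 < p.1), f p
      = ∑ p ∈ Finset.univ.filter (fun p : Fin n × Fin n => p.1 < p.2), f p := by
    apply Finset.sum_nbij' (fun p => Prod.swap p) (fun p => Prod.swap p) <;>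
      simp [hf] <;> intros <;> simp [r_symm]
  have hsplit1 := Finset.sum_filter_add_sum_filter_not Finset.univ
      (fun p : Fin n × Fin n => p.1 < p.2) f
  have hsplit2 := Finset.sum_filter_add_sum_filter_not
      (Finset.univ.filter (fun p : Fin n × Fin n => ¬ p.1 < p.2))
      (fun p : Fin n × Fin n => p.2 < p.1) f
  simp only [Finset.filter_filter] at hsplit2
  have hEq : Finset.univ.filter (fun a : Fin n × Fin n => ¬ a.1 < a.2 ∧ a.2 < a.1)
      = Finset.univ.filter (fun p : Fin n × Fin n => p.2 < p.1) := by
    apply Finset.filter_congr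
    intro p _
    constructor
    · rintro ⟨_, h2⟩; exact h2
    · intro h2; exact ⟨asymm h2, h2⟩
  have hdiag : ∑ p ∈ Finset.univ.filter
      (fun a : Fin n × Fin n => ¬ a.1 < a.2 ∧ ¬ a.2 < a.1), f p = 0 := by
    apply Finset.sum_eq_zero
    intro p hp
    simp only [Finset.mem_filter] at hp
    have : p.1 = p.2 := le_antisymm (not_lt.mp hp.2.2) (not_lt.mp hp.2.1)
    simp [hf, ← this, r_self]
  rw [hEq, hswap, hdiag, add_zero] at hsplit2
  linarith [hsplit1, hsplit2, hfull]
lemma listCS (l : List ℝ) : l.sum^2 ≤ l.length * (l.map (·^2)).sum := by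
  induction l with
  | nil => simp
  | cons a l ih =>
    have hq : 0 ≤ (l.map (·^2)).sum := by
      apply List.sum_nonneg
      intro y hy
      obtain ⟨z, _, rfl⟩ := List.mem_map.mp hy
      positivity
    rcases Nat.eq_zero_or_pos l.length with h0 | hpos
    · obtain rfl : l = [] := List.length_eq_zero_iff.mp h0
      simp
    · have hk : (1:ℝ) ≤ l.length := by exact_mod_cast hpos
      simp only [List.sum_cons, List.map_cons, List.length_cons]
      push_cast
      nlinarith [ih, hq, sq_nonneg ((l.length : ℝ) * a - l.sum), hk]

lemma telescope (x : Fin n → ℝ) {i j : Fin n} (p : G.Walk i j) :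
    (p.darts.map (fun d => x d.fst - x d.snd)).sum = x i - x j := by
  induction p with
  | nil => simp
  | cons h q ih =>
    simp [SimpleGraph.Walk.darts_cons, ih]
    try ring

/-- The quadratic form as an explicit double sum. -/
noncomputable def qsum (x : Fin n → ℝ) : ℝ :=
  letI := Classical.decRel G.Adj
  ∑ i, ∑ j, if G.Adj i j then (x i - x j)^2 else 0

lemma quad_eq (x : Fin n → ℝ) : x ⬝ᵥ (L G *ᵥ x) = qsum G x / 2 := by
  letI := Classical.decRel G.Adj
  have h := SimpleGraph.lapMatrix_toLinearMap₂' (R := ℝ) G x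
  rw [Matrix.toLinearMap₂'_apply'] at h
  exact h

lemma quad_nonneg (x : Fin n → ℝ) : 0 ≤ x ⬝ᵥ (L G *ᵥ x) := by
  have := (hL G).dotProduct_mulVec_nonneg x
  simpa using this

lemma darts_energy (x : Fin n → ℝ) {i j : Fin n} (p : G.Walk i j) (hp : p.IsPath) :
    (p.darts.map (fun d => (x d.fst - x d.snd)^2)).sum ≤ x ⬝ᵥ (L G *ᵥ x) := by
  letI := Classical.decRel G.Adj
  set g : Fin n × Fin n → ℝ :=
    fun q => if G.Adj q.1 q.2 then (x q.1 - x q.2)^2 else 0 with hg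
  set l : List (Fin n × Fin n) :=
    p.darts.map (fun d => d.toProd) ++ p.darts.map (fun d => d.toProd.swap) with hl
  have hdartsnd : p.darts.Nodup := by
    have := hp.isTrail.edges_nodup
    unfold SimpleGraph.Walk.edges at this
    exact this.of_map _
  have hnd : l.Nodup := by
    rw [hl, List.nodup_append]
    refine ⟨?_, ?_, ?_⟩
    · exact hdartsnd.map (fun a b hab => SimpleGraph.Dart.ext _ _ hab)
    · refine hdartsnd.map (fun a b hab => SimpleGraph.Dart.ext _ _ ?_)
      exact Prod.swap_injective hab
    · intro q hq1 q' hq2 hqq'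
      subst hqq'
      obtain ⟨d1, hd1, rfl⟩ := List.mem_map.mp hq1
      obtain ⟨d2, hd2, h12⟩ := List.mem_map.mp hq2
      have hedge : d1.edge = d2.edge := by
        rw [SimpleGraph.dart_edge_eq_iff]
        right
        apply SimpleGraph.Dart.ext
        simpa [SimpleGraph.Dart.symm] using h12.symm
      have : d1 = d2 := by
        have hinj := List.inj_on_of_nodup_map (f := SimpleGraph.Dart.edge) (l := p.darts)
          hp.isTrail.edges_nodup
        exact hinj hd1 hd2 hedge
      subst this
      have : d1.toProd = d1.toProd.swap := by
        have := h12.symm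
        exact this
      have hne : d1.toProd.1 ≠ d1.toProd.2 := d1.adj.ne
      apply hne
      rw [Prod.ext_iff] at this
      exact this.1
  have hmem : ∀ q ∈ l, g q = (x q.1 - x q.2)^2 := by
    intro q hq
    rw [hl, List.mem_append] at hq
    rcases hq with hq | hq
    · obtain ⟨d, _, rfl⟩ := List.mem_map.mp hq
      simp [hg, d.adj]
    · obtain ⟨d, _, rfl⟩ := List.mem_map.mp hq
      simp [hg, d.adj.symm]
  have hsum_l : (l.map g).sum = 2 * (p.darts.map (fun d => (x d.fst - x d.snd)^2)).sum := by
    rw [hl, List.map_append, List.sum_append, List.map_map, List.map_map]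
    have e1 : (p.darts.map (g ∘ fun d => d.toProd)).sum
        = (p.darts.map (fun d => (x d.fst - x d.snd)^2)).sum := by
      congr 1
      apply List.map_congr_left
      intro d _
      simp [hg, d.adj]
    have e2 : (p.darts.map (g ∘ fun d => d.toProd.swap)).sum
        = (p.darts.map (fun d => (x d.fst - x d.snd)^2)).sum := by
      congr 1
      apply List.map_congr_left
      intro d _
      have : (x d.snd - x d.fst)^2 = (x d.fst - x d.snd)^2 := by ring
      simp [hg, d.adj.symm, this]
    rw [e1, e2]
    ring
  have hfin : (l.map g).sum = l.toFinset.sum g := (List.sum_toFinset g hnd).symm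
  have hle : l.toFinset.sum g ≤ ∑ q : Fin n × Fin n, g q := by
    apply Finset.sum_le_sum_of_subset_of_nonneg (Finset.subset_univ _)
    intro q _ _
    split_ifs
    · positivity
    · exact le_rfl
  have htot : ∑ q : Fin n × Fin n, g q = qsum G x := by
    rw [Fintype.sum_prod_type]
    rfl
  have hq := quad_eq G x
  rw [hfin] at hsum_l
  linarith [hle, hsum_l, htot, hq]

lemma walk_energy (x : Fin n → ℝ) {i j : Fin n} (p : G.Walk i j) (hp : p.IsPath) :
    (x i - x j)^2 ≤ p.length * (x ⬝ᵥ (L G *ᵥ x)) := by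
  have h1 := listCS (p.darts.map (fun d => x d.fst - x d.snd))
  rw [telescope G x p] at h1
  rw [List.map_map, List.length_map, SimpleGraph.Walk.length_darts] at h1
  have h2 := darts_energy G x p hp
  have h2' : (p.darts.map ((fun y : ℝ => y^2) ∘ fun d => x d.fst - x d.snd)).sum
      ≤ x ⬝ᵥ (L G *ᵥ x) := h2
  have hlen : (0:ℝ) ≤ p.length := by positivity
  calc (x i - x j)^2
      ≤ p.length * (p.darts.map ((fun y : ℝ => y^2) ∘ fun d => x d.fst - x d.snd)).sum := h1
    _ ≤ p.length * (x ⬝ᵥ (L G *ᵥ x)) := mul_le_mul_of_nonneg_left h2' hlen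



lemma r_le_dist (hG : G.Connected) (hn : 0 < n) (i j : Fin n) :
    r G i j ≤ G.dist i j := by
  by_cases hij : i = j
  · subst hij
    rw [r_self]
    positivity
  · obtain ⟨p, hp, hlen⟩ := hG.exists_path_of_dist i j
    set y := Gm G *ᵥ w i j with hy
    have h1 := walk_energy G y p hp
    rw [y_diff G i j, r_energy G hG hn i j, hlen] at h1
    have h0 := r_nonneg G hG hn i j
    rcases eq_or_lt_of_le h0 with h | h
    · rw [← h]; positivity
    · nlinarith [h1, h]

lemma walk_const (y : Fin n → ℝ) (e₀ : Sym2 (Fin n))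
    (h : ∀ u v : Fin n, G.Adj u v → s(u,v) ≠ e₀ → y u = y v)
    {a b : Fin n} (p : G.Walk a b) (hp : e₀ ∉ p.edges) : y a = y b := by
  induction p with
  | nil => rfl
  | @cons a c b hadj q ih =>
    rw [SimpleGraph.Walk.edges_cons, List.mem_cons] at hp
    push_neg at hp
    have h1 : y a = y c := h a c hadj (fun hc => hp.1 hc.symm)
    rw [h1]
    exact ih hp.2

lemma r_lt_one_of_not_bridge (hG : G.Connected) (hn : 0 < n) {a b : Fin n}
    (hadj : G.Adj a b) (hnb : ¬ G.IsBridge s(a,b)) : r G a b < 1 := by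
  letI := Classical.decRel G.Adj
  have hne : a ≠ b := hadj.ne
  set y := Gm G *ᵥ w a b with hy
  set R := r G a b with hR
  have hdiff : y a - y b = R := y_diff G a b
  have henergy : y ⬝ᵥ (L G *ᵥ y) = R := r_energy G hG hn a b
  have hquad : y ⬝ᵥ (L G *ᵥ y) = qsum G y / 2 := quad_eq G y
  -- decompose qsum
  set g : Fin n × Fin n → ℝ :=
    fun q => if G.Adj q.1 q.2 then (y q.1 - y q.2)^2 else 0 with hg
  have hqsum : qsum G y = ∑ q : Fin n × Fin n, g q := by
    rw [Fintype.sum_prod_type]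
    rfl
  have hab_mem : (a, b) ∈ (Finset.univ : Finset (Fin n × Fin n)) := Finset.mem_univ _
  have hba_mem : (b, a) ∈ (Finset.univ.erase (a, b)) := by
    rw [Finset.mem_erase]
    exact ⟨by simp [Prod.ext_iff]; intro h; exact absurd h hne.symm, Finset.mem_univ _⟩
  have hsplit1 := Finset.add_sum_erase _ g hab_mem
  have hsplit2 := Finset.add_sum_erase _ g hba_mem
  have hgab : g (a, b) = R^2 := by
    simp only [hg, hadj, if_true]
    rw [hdiff]
  have hgba : g (b, a) = R^2 := by
    simp only [hg, hadj.symm, if_true]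
    have : y b - y a = -R := by rw [← hdiff]; ring
    rw [this]
    ring
  have hrest_nonneg : ∀ q ∈ (Finset.univ.erase (a,b)).erase (b,a), 0 ≤ g q := by
    intro q _
    by_cases hq : G.Adj q.1 q.2
    · simp only [hg, hq, if_true]
      positivity
    · simp [hg, hq]
  -- 2R = 2R² + rest
  have hkey : 2 * R = 2 * R^2 + ∑ q ∈ (Finset.univ.erase (a,b)).erase (b,a), g q := by
    have : ∑ q : Fin n × Fin n, g q = 2 * R := by
      rw [← hqsum]
      have := hquad.symm.trans henergy
      linarith [this]
    rw [← hsplit1, ← hsplit2, hgab, hgba] at this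
    linarith [this]
  -- now suppose R = 1
  have hRne : R ≠ 1 := by
    intro hR1
    have hrest0 : ∑ q ∈ (Finset.univ.erase (a,b)).erase (b,a), g q = 0 := by
      rw [hR1] at hkey
      linarith [hkey]
    have hallzero := (Finset.sum_eq_zero_iff_of_nonneg hrest_nonneg).mp hrest0
    have hconst : ∀ u v : Fin n, G.Adj u v → s(u,v) ≠ s(a,b) → y u = y v := by
      intro u v huv hs
      have hmem : (u, v) ∈ (Finset.univ.erase (a,b)).erase (b,a) := by
        rw [Finset.mem_erase, Finset.mem_erase]
        refine ⟨?_, ?_, Finset.mem_univ _⟩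
        · intro h
          obtain ⟨h1, h2⟩ := Prod.mk.inj h
          subst h1; subst h2
          exact hs Sym2.eq_swap
        · intro h
          obtain ⟨h1, h2⟩ := Prod.mk.inj h
          subst h1; subst h2
          exact hs rfl
      have := hallzero _ hmem
      simp only [hg, huv, if_true] at this
      have h2 : y u - y v = 0 := by
        have := sq_eq_zero_iff.mp this
        exact this
      linarith [h2]
    have hreach : ∃ p : G.Walk a b, s(a,b) ∉ p.edges := by
      rw [SimpleGraph.isBridge_iff_adj_and_forall_walk_mem_edges] at hnb
      push_neg at hnb
      exact hnb
    obtain ⟨p, hp⟩ := hreach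
    have : y a = y b := walk_const G y s(a,b) hconst p hp
    rw [← hdiff, this] at hR1
    simp at hR1
  have hRle : R ≤ 1 := by
    have h1 := r_le_dist G hG hn a b
    rw [SimpleGraph.dist_eq_one_iff_adj.mpr hadj] at h1
    rw [hR]
    exact_mod_cast h1
  exact lt_of_le_of_ne hRle hRne


lemma tree_path_length (hT : G.IsTree) {u v : Fin n} (p : G.Walk u v) (hp : p.IsPath) :
    p.length = G.dist u v := by
  obtain ⟨q, hq, hlen⟩ := hT.isConnected.exists_path_of_dist u v
  have hpq : (⟨p, hp⟩ : G.Path u v) = ⟨q, hq⟩ := hT.IsAcyclic.path_unique _ _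
  rw [← hlen]
  exact congrArg SimpleGraph.Walk.length (congrArg Subtype.val hpq)

lemma tree_neighbor (hT : G.IsTree) {v t : Fin n} (hvt : v ≠ t) :
    ∃ u₀, G.Adj v u₀ ∧ G.dist u₀ t + 1 = G.dist v t ∧
      ∀ u, G.Adj v u → u ≠ u₀ → G.dist u t = G.dist v t + 1 := by
  classical
  have hconn := hT.isConnected
  obtain ⟨p, hp, hlen⟩ := hconn.exists_path_of_dist v t
  cases p with
  | nil => exact absurd rfl hvt
  | @cons _ u₀ _ h q =>
    refine ⟨u₀, h, ?_, ?_⟩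
    · have hq : q.IsPath := hp.of_cons
      have hql : q.length = G.dist u₀ t := tree_path_length G hT q hq
      rw [SimpleGraph.Walk.length_cons] at hlen
      omega
    · intro u hu hne
      obtain ⟨s, hs, hslen⟩ := hconn.exists_path_of_dist u t
      by_cases hvs : v ∈ s.support
      · have hsplit : (s.takeUntil v hvs).length + (s.dropUntil v hvs).length = s.length := by
          rw [← SimpleGraph.Walk.length_append, SimpleGraph.Walk.take_spec]
        have h1 : 1 ≤ (s.takeUntil v hvs).length := by
          by_contra h0
          push_neg at h0
          have h00 := SimpleGraph.Walk.eq_of_length_eq_zero (Nat.lt_one_iff.mp h0)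
          exact hu.ne' h00
        have h2 : G.dist v t ≤ (s.dropUntil v hvs).length := SimpleGraph.dist_le _
        have h3 : G.dist u t ≤ G.dist u v + G.dist v t := hconn.dist_triangle
        have h4 : G.dist u v = 1 := SimpleGraph.dist_eq_one_iff_adj.mpr hu.symm
        omega
      · have hc : (SimpleGraph.Walk.cons hu s).IsPath := by
          rw [SimpleGraph.Walk.cons_isPath_iff]
          exact ⟨hs, hvs⟩
        have hpaths : (⟨SimpleGraph.Walk.cons hu s, hc⟩ : G.Path v t)
            = ⟨SimpleGraph.Walk.cons h q, hp⟩ := hT.IsAcyclic.path_unique _ _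
        have hwalk : (SimpleGraph.Walk.cons hu s) = SimpleGraph.Walk.cons h q :=
          congrArg Subtype.val hpaths
        have huu : u = u₀ := by
          have h1 := congrArg (fun (z : G.Walk v t) => z.getVert 1) hwalk
          simpa [SimpleGraph.Walk.getVert_cons_succ, SimpleGraph.Walk.getVert_zero] using h1
        exact absurd huu hne

lemma tree_sum_dist (hT : G.IsTree) (t v : Fin n) :
    letI := Classical.decRel G.Adj
    ∑ u ∈ G.neighborFinset v, ((G.dist v t : ℝ) - G.dist u t)
      = if v = t then -(G.degree v : ℝ) else 2 - G.degree v := by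
  letI := Classical.decRel G.Adj
  by_cases hvt : v = t
  · subst hvt
    rw [if_pos rfl]
    have hterm : ∀ u ∈ G.neighborFinset v, ((G.dist v v : ℝ) - G.dist u v) = -1 := by
      intro u hu
      rw [SimpleGraph.mem_neighborFinset] at hu
      rw [SimpleGraph.dist_self, SimpleGraph.dist_eq_one_iff_adj.mpr hu.symm]
      norm_num
    rw [Finset.sum_congr rfl hterm, Finset.sum_const]
    have hcast : (G.degree v : ℝ) = ((G.neighborFinset v).card : ℝ) := rfl
    rw [hcast, nsmul_eq_mul]
    ring
  · rw [if_neg hvt]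
    obtain ⟨u₀, hu₀adj, hu₀d, hother⟩ := tree_neighbor G hT hvt
    have hu₀mem : u₀ ∈ G.neighborFinset v := (SimpleGraph.mem_neighborFinset _ _ _).mpr hu₀adj
    rw [← Finset.add_sum_erase _ _ hu₀mem]
    have hterm0 : (G.dist v t : ℝ) - G.dist u₀ t = 1 := by
      rw [← hu₀d]
      push_cast
      ring
    have hterms : ∀ u ∈ (G.neighborFinset v).erase u₀,
        ((G.dist v t : ℝ) - G.dist u t) = -1 := by
      intro u hu
      rw [Finset.mem_erase, SimpleGraph.mem_neighborFinset] at hu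
      rw [hother u hu.2 hu.1]
      push_cast
      ring
    rw [Finset.sum_congr rfl hterms, Finset.sum_const, Finset.card_erase_of_mem hu₀mem, hterm0]
    have hdeg1 : 1 ≤ (G.neighborFinset v).card := Finset.card_pos.mpr ⟨u₀, hu₀mem⟩
    simp only [nsmul_eq_mul, mul_neg, mul_one]
    rw [Nat.cast_sub hdeg1]
    have hcast : (G.degree v : ℝ) = ((G.neighborFinset v).card : ℝ) := rfl
    rw [hcast]
    push_cast
    ring

lemma tree_L_mulVec (hT : G.IsTree) {i j : Fin n} (hij : i ≠ j) :
    L G *ᵥ (fun v => ((G.dist v j : ℝ) - G.dist v i)/2) = w i j := by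
  letI := Classical.decRel G.Adj
  funext v
  set x : Fin n → ℝ := fun v => ((G.dist v j : ℝ) - G.dist v i)/2 with hx
  have hlap : (L G *ᵥ x) v
      = (G.degree v : ℝ) * x v - ∑ u ∈ G.neighborFinset v, x u :=
    SimpleGraph.lapMatrix_mulVec_apply G v x
  rw [hlap]
  have hsum : (G.degree v : ℝ) * x v - ∑ u ∈ G.neighborFinset v, x u
      = ∑ u ∈ G.neighborFinset v, (x v - x u) := by
    rw [Finset.sum_sub_distrib, Finset.sum_const]
    have hdeg : G.degree v = (G.neighborFinset v).card := rfl
    rw [hdeg]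
    simp [nsmul_eq_mul]
  rw [hsum]
  have hexp : ∀ u ∈ G.neighborFinset v, x v - x u
      = (((G.dist v j : ℝ) - G.dist u j) - ((G.dist v i : ℝ) - G.dist u i))/2 := by
    intro u _
    rw [hx]
    ring
  rw [Finset.sum_congr rfl hexp]
  have hsplit : ∑ u ∈ G.neighborFinset v,
      ((((G.dist v j : ℝ) - G.dist u j) - ((G.dist v i : ℝ) - G.dist u i))/2)
      = ((∑ u ∈ G.neighborFinset v, ((G.dist v j : ℝ) - G.dist u j))
        - (∑ u ∈ G.neighborFinset v, ((G.dist v i : ℝ) - G.dist u i)))/2 := by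
    rw [← Finset.sum_div, Finset.sum_sub_distrib]
  rw [hsplit, tree_sum_dist G hT j v, tree_sum_dist G hT i v]
  have hwv : w i j v = (if v = i then (1:ℝ) else 0) - (if v = j then (1:ℝ) else 0) := by
    simp [w, Pi.single_apply]
  rw [hwv]
  by_cases hvi : v = i
  · subst hvi
    rw [if_neg hij, if_pos rfl, if_pos rfl, if_neg (Ne.symm (by exact fun hh => hij hh.symm))]
    ring
  · by_cases hvj : v = j
    · subst hvj
      rw [if_pos rfl, if_neg (fun hh => hij hh.symm), if_neg hvi, if_pos rfl]
      ring
    · rw [if_neg hvj, if_neg hvi, if_neg hvi, if_neg hvj]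
      ring

lemma tree_r_eq_dist (hG : G.Connected) (hn : 0 < n) (hT : G.IsTree) (i j : Fin n) :
    r G i j = (G.dist i j : ℝ) := by
  by_cases hij : i = j
  · subst hij
    rw [r_self, SimpleGraph.dist_self]
    norm_num
  · set x : Fin n → ℝ := fun v => ((G.dist v j : ℝ) - G.dist v i)/2 with hx
    have hLx : L G *ᵥ x = w i j := tree_L_mulVec G hT hij
    have hGmw : Gm G *ᵥ w i j = x - K G *ᵥ x := by
      rw [← hLx, Matrix.mulVec_mulVec, Gm_mul_L, Matrix.sub_mulVec, Matrix.one_mulVec]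
    have hKconst : (K G *ᵥ x) i = (K G *ᵥ x) j := by
      rw [K_eq_Jn G hG hn, Jn_mulVec]
    have hr : r G i j = x i - x j := by
      rw [r, w_dot, hGmw]
      simp only [Pi.sub_apply]
      rw [hKconst]
      ring
    rw [hr, hx]
    simp only []
    rw [show G.dist i i = 0 from SimpleGraph.dist_self,
      show G.dist j j = 0 from SimpleGraph.dist_self,
      show G.dist j i = G.dist i j from SimpleGraph.dist_comm]
    push_cast
    ring

end StmtAux

/-- `H*(G) ≤ δ̃(G)(n-1)/(4n)`, with equality iff `G` is a tree. -/
theorem stmt_10 {n : ℕ} (hn : 2 ≤ n) (G : SimpleGraph (Fin n)) (hG : G.Connected) :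
    Hstar G ≤ avgDist G * ((n : ℝ) - 1) / (4 * (n : ℝ)) ∧
    (Hstar G = avgDist G * ((n : ℝ) - 1) / (4 * (n : ℝ)) ↔ G.IsTree) := by
  have hn0 : 0 < n := by omega
  have hnR : (0:ℝ) < n := by exact_mod_cast hn0
  have hn2 : (2:ℝ) ≤ n := by exact_mod_cast hn
  have hKfP : (n:ℝ) * ∑ i, (lapEigs G i)⁻¹
      = ∑ p ∈ Finset.univ.filter (fun p : Fin n × Fin n => p.1 < p.2), StmtAux.r G p.1 p.2 := by
    rw [StmtAux.pair_sum_r G hG hn0, StmtAux.trace_Gm G]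
  have hle_pair : ∀ p ∈ Finset.univ.filter (fun p : Fin n × Fin n => p.1 < p.2),
      StmtAux.r G p.1 p.2 ≤ (G.dist p.1 p.2 : ℝ) :=
    fun p _ => StmtAux.r_le_dist G hG hn0 p.1 p.2
  have hsum_le : ∑ p ∈ Finset.univ.filter (fun p : Fin n × Fin n => p.1 < p.2),
      StmtAux.r G p.1 p.2 ≤ distSum G := Finset.sum_le_sum hle_pair
  have hden : ((n:ℝ)^2 - n) ≠ 0 := by nlinarith
  have hRHS : avgDist G * ((n : ℝ) - 1) / (4 * n) = distSum G / (2 * n^2) := by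
    rw [avgDist]
    rw [show ((n:ℝ)^2 - n) = n * (n - 1) by ring]
    have hn1 : (n:ℝ) - 1 ≠ 0 := by linarith
    field_simp
    ring
  have hH : Hstar G = ((n:ℝ) * ∑ i, (lapEigs G i)⁻¹) / (2 * n^2) := by
    rw [Hstar]
    field_simp
  constructor
  · rw [hH, hRHS, hKfP]
    gcongr
  · constructor
    · intro heq
      rw [hH, hRHS, hKfP] at heq
      have hPD : ∑ p ∈ Finset.univ.filter (fun p : Fin n × Fin n => p.1 < p.2),
          StmtAux.r G p.1 p.2 = distSum G := by
        have h2 : (2*(n:ℝ)^2) ≠ 0 := by positivity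
        field_simp [h2] at heq
        exact heq
      by_contra hnT
      have hnA : ¬ G.IsAcyclic := fun hA => hnT ⟨hG, hA⟩
      rw [SimpleGraph.isAcyclic_iff_forall_adj_isBridge] at hnA
      push_neg at hnA
      obtain ⟨a, b, hadj, hnb⟩ := hnA
      have hrab : StmtAux.r G a b < 1 := StmtAux.r_lt_one_of_not_bridge G hG hn0 hadj hnb
      have hne : a ≠ b := hadj.ne
      obtain ⟨q, hqmem, hqlt⟩ : ∃ q ∈ Finset.univ.filter (fun p : Fin n × Fin n => p.1 < p.2),
          StmtAux.r G q.1 q.2 < (G.dist q.1 q.2 : ℝ) := by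
        rcases lt_or_gt_of_ne hne with h | h
        · refine ⟨(a, b), by simp [h], ?_⟩
          have : G.dist a b = 1 := SimpleGraph.dist_eq_one_iff_adj.mpr hadj
          rw [this]
          simpa using hrab
        · refine ⟨(b, a), by simp [h], ?_⟩
          have : G.dist b a = 1 := SimpleGraph.dist_eq_one_iff_adj.mpr hadj.symm
          rw [this]
          simp only [Nat.cast_one]
          rw [StmtAux.r_symm]
          exact hrab
      have hstrict := Finset.sum_lt_sum hle_pair ⟨q, hqmem, hqlt⟩
      rw [hPD] at hstrict
      exact absurd rfl (ne_of_lt hstrict)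
    · intro hT
      have hall : ∀ p ∈ Finset.univ.filter (fun p : Fin n × Fin n => p.1 < p.2),
          StmtAux.r G p.1 p.2 = (G.dist p.1 p.2 : ℝ) :=
        fun p _ => StmtAux.tree_r_eq_dist G hG hn0 hT p.1 p.2
      have hPD : ∑ p ∈ Finset.univ.filter (fun p : Fin n × Fin n => p.1 < p.2),
          StmtAux.r G p.1 p.2 = distSum G := Finset.sum_congr rfl hall
      rw [hH, hRHS, hKfP, hPD]
end

section
/- For any connected undirected graph G on n ≥ 2 vertices: (n-1)²/(2d̃(G)n²) ≤ H*(G) ≤ δ̃(G)(n-1)/(4n), where d̃(G) is the average degree and δ̃(G) is the average pairwise distance. -/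
open Finset Matrix Filter

namespace Stmt11Aux
variable {n : ℕ}
noncomputable def LM (G : SimpleGraph (Fin n)) : Matrix (Fin n) (Fin n) ℝ :=
  letI := Classical.decRel G.Adj
  G.lapMatrix ℝ
lemma LM_psd (G : SimpleGraph (Fin n)) : (LM G).PosSemidef := by
  letI := Classical.decRel G.Adj
  exact SimpleGraph.posSemidef_lapMatrix ℝ G
lemma LM_herm (G : SimpleGraph (Fin n)) : (LM G).IsHermitian := (LM_psd G).isHermitian
lemma lapEigs_eq (G : SimpleGraph (Fin n)) : lapEigs G = (LM_herm G).eigenvalues := rfl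
lemma lapEigs_nonneg (G : SimpleGraph (Fin n)) (i : Fin n) : 0 ≤ lapEigs G i :=
  (LM_psd G).eigenvalues_nonneg i
noncomputable def Uu (G : SimpleGraph (Fin n)) : Matrix (Fin n) (Fin n) ℝ :=
  ((LM_herm G).eigenvectorUnitary : Matrix (Fin n) (Fin n) ℝ)
lemma star_mul_Uu (G : SimpleGraph (Fin n)) : star (Uu G) * Uu G = 1 :=
  Matrix.mem_unitaryGroup_iff'.mp ((LM_herm G).eigenvectorUnitary).2
lemma Uu_mul_star (G : SimpleGraph (Fin n)) : Uu G * star (Uu G) = 1 :=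
  Matrix.mem_unitaryGroup_iff.mp ((LM_herm G).eigenvectorUnitary).2
lemma spec (G : SimpleGraph (Fin n)) :
    LM G = Uu G * diagonal (lapEigs G) * star (Uu G) := by
  have h := (LM_herm G).spectral_theorem
  simpa [Uu, lapEigs_eq] using h

noncomputable def Minv (G : SimpleGraph (Fin n)) : Matrix (Fin n) (Fin n) ℝ :=
  Uu G * diagonal (fun i => (lapEigs G i)⁻¹) * star (Uu G)

lemma Minv_herm (G : SimpleGraph (Fin n)) : (Minv G).IsHermitian := by
  have : (Minv G)ᴴ = Minv G := by
    simp [Minv, conjTranspose_mul, diagonal_conjTranspose, Matrix.mul_assoc,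
      Matrix.star_eq_conjTranspose]
  exact this

lemma Minv_symm (G : SimpleGraph (Fin n)) (i j : Fin n) : Minv G i j = Minv G j i := by
  have h := congrFun (congrFun (Minv_herm G) j) i
  simpa [Matrix.conjTranspose_apply] using h

lemma Minv_transpose (G : SimpleGraph (Fin n)) : (Minv G)ᵀ = Minv G := by
  ext i j; rw [transpose_apply]; exact Minv_symm G j i

lemma Minv_psd (G : SimpleGraph (Fin n)) : (Minv G).PosSemidef := by
  have hd : (diagonal fun i => (lapEigs G i)⁻¹).PosSemidef :=
    Matrix.posSemidef_diagonal_iff.mpr fun i => inv_nonneg.mpr (lapEigs_nonneg G i)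
  have := hd.mul_mul_conjTranspose_same (Uu G)
  exact this

lemma diag_inv_mul (G : SimpleGraph (Fin n)) :
    (diagonal fun i => (lapEigs G i)⁻¹) * diagonal (lapEigs G) *
      (diagonal fun i => (lapEigs G i)⁻¹) = diagonal fun i => (lapEigs G i)⁻¹ := by
  rw [diagonal_mul_diagonal, diagonal_mul_diagonal]
  refine congrArg Matrix.diagonal (funext fun i => ?_)
  rcases eq_or_ne (lapEigs G i) 0 with h | h
  · rw [h]; simp
  · field_simp

lemma MLM (G : SimpleGraph (Fin n)) : Minv G * LM G * Minv G = Minv G := by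
  rw [spec, Minv]
  calc (Uu G * diagonal (fun i => (lapEigs G i)⁻¹) * star (Uu G)) *
        (Uu G * diagonal (lapEigs G) * star (Uu G)) *
        (Uu G * diagonal (fun i => (lapEigs G i)⁻¹) * star (Uu G))
      = Uu G * ((diagonal (fun i => (lapEigs G i)⁻¹) * ((star (Uu G) * Uu G) *
          (diagonal (lapEigs G) * ((star (Uu G) * Uu G) *
          (diagonal (fun i => (lapEigs G i)⁻¹) * star (Uu G))))))) := by
        simp only [Matrix.mul_assoc]
    _ = Uu G * diagonal (fun i => (lapEigs G i)⁻¹) * star (Uu G) := by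
        have hmid : (diagonal fun i => (lapEigs G i)⁻¹) * (diagonal (lapEigs G) *
            ((diagonal fun i => (lapEigs G i)⁻¹) * star (Uu G)))
            = (diagonal fun i => (lapEigs G i)⁻¹) * star (Uu G) := by
          rw [← Matrix.mul_assoc, ← Matrix.mul_assoc, diag_inv_mul]
        rw [star_mul_Uu, Matrix.one_mul, Matrix.one_mul, hmid, ← Matrix.mul_assoc]

lemma trace_Minv (G : SimpleGraph (Fin n)) :
    (Minv G).trace = ∑ i, (lapEigs G i)⁻¹ := by
  rw [Minv, Matrix.trace_mul_cycle, star_mul_Uu, Matrix.one_mul, trace_diagonal]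

lemma trace_LM (G : SimpleGraph (Fin n)) : (LM G).trace = ∑ i, lapEigs G i := by
  rw [spec, Matrix.trace_mul_cycle, star_mul_Uu, Matrix.one_mul, trace_diagonal]

lemma sum_Minv (G : SimpleGraph (Fin n)) : ∑ i, ∑ j, Minv G i j = 0 := by
  letI := Classical.decRel G.Adj
  have hLone : LM G *ᵥ (fun _ => (1:ℝ)) = 0 := G.lapMatrix_mulVec_const_eq_zero
  have hDc : ∀ k, lapEigs G k * (∑ j, Uu G j k) = 0 := by
    intro k
    have h2 : star (Uu G) *ᵥ (LM G *ᵥ (fun _ => (1:ℝ))) = 0 := by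
      rw [hLone, mulVec_zero]
    rw [spec, mulVec_mulVec, show star (Uu G) * (Uu G * diagonal (lapEigs G) * star (Uu G))
        = diagonal (lapEigs G) * star (Uu G) from by
      rw [← Matrix.mul_assoc, ← Matrix.mul_assoc, star_mul_Uu, Matrix.one_mul]] at h2
    have h3 := congrFun h2 k
    simpa [mulVec, dotProduct, Matrix.diagonal_mul, Matrix.star_apply, ← Finset.mul_sum]
      using h3
  have hentry : ∀ i j, Minv G i j = ∑ k, (lapEigs G k)⁻¹ * (Uu G i k * Uu G j k) := by
    intro i j
    rw [Minv, Matrix.mul_apply]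
    refine Finset.sum_congr rfl fun k _ => ?_
    rw [Matrix.mul_diagonal, Matrix.star_apply, star_trivial]
    ring
  calc ∑ i, ∑ j, Minv G i j
      = ∑ i, ∑ k, (lapEigs G k)⁻¹ * (Uu G i k * ∑ j, Uu G j k) := by
        refine Finset.sum_congr rfl fun i _ => ?_
        simp_rw [hentry]
        rw [Finset.sum_comm]
        refine Finset.sum_congr rfl fun k _ => ?_
        rw [Finset.mul_sum, Finset.mul_sum]
    _ = ∑ k, (lapEigs G k)⁻¹ * ((∑ i, Uu G i k) * (∑ j, Uu G j k)) := by
        rw [Finset.sum_comm]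
        refine Finset.sum_congr rfl fun k _ => ?_
        rw [Finset.sum_mul, Finset.mul_sum]
    _ = 0 := by
        refine Finset.sum_eq_zero fun k _ => ?_
        rcases eq_or_ne (lapEigs G k) 0 with h | h
        · simp [h]
        · have := hDc k
          have hc : (∑ j, Uu G j k) = 0 := by
            rcases mul_eq_zero.mp this with h' | h'
            · exact absurd h' h
            · exact h'
          simp [hc]

def bvec (i j : Fin n) : Fin n → ℝ :=
  fun k => (if k = i then 1 else 0) - (if k = j then 1 else 0)

lemma dot_bvec (i j : Fin n) (y : Fin n → ℝ) : bvec i j ⬝ᵥ y = y i - y j := by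
  simp [bvec, dotProduct, sub_mul, Finset.sum_sub_distrib, ite_mul]

noncomputable def Rq (G : SimpleGraph (Fin n)) (i j : Fin n) : ℝ :=
  Minv G i i + Minv G j j - 2 * Minv G i j

lemma Rq_eq_dot (G : SimpleGraph (Fin n)) (i j : Fin n) :
    bvec i j ⬝ᵥ (Minv G *ᵥ bvec i j) = Rq G i j := by
  have hmv : Minv G *ᵥ bvec i j = fun k => Minv G k i - Minv G k j := by
    funext k
    simp [mulVec, dotProduct, bvec, mul_sub, Finset.sum_sub_distrib, mul_ite]
  rw [hmv, dot_bvec]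
  show _ = Minv G i i + Minv G j j - 2 * Minv G i j
  rw [Minv_symm G j i]
  ring

lemma Rq_nonneg (G : SimpleGraph (Fin n)) (i j : Fin n) : 0 ≤ Rq G i j := by
  have h := (Minv_psd G).dotProduct_mulVec_nonneg (bvec i j)
  rw [← Rq_eq_dot]
  simpa using h

lemma walk_telescope {V : Type*} {G : SimpleGraph V} (x : V → ℝ) {u v : V}
    (p : G.Walk u v) :
    (p.darts.map (fun d => x d.fst - x d.snd)).sum = x u - x v := by
  induction p with
  | nil => simp
  | @cons a b c h q ih =>
      rw [SimpleGraph.Walk.darts_cons, List.map_cons, List.sum_cons, ih]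
      ring

lemma dot_trip (A B : Matrix (Fin n) (Fin n) ℝ) (hA : Aᵀ = A) (b : Fin n → ℝ) :
    (A *ᵥ b) ⬝ᵥ (B *ᵥ (A *ᵥ b)) = b ⬝ᵥ ((A * B * A) *ᵥ b) := by
  have h1 : A *ᵥ b = b ᵥ* A := by rw [← Matrix.mulVec_transpose, hA]
  rw [mulVec_mulVec, Matrix.dotProduct_mulVec, h1, Matrix.vecMul_vecMul,
    Matrix.dotProduct_mulVec, Matrix.mul_assoc]

def dartEquiv (G : SimpleGraph (Fin n)) : G.Dart ≃ {p : Fin n × Fin n // G.Adj p.1 p.2} :=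
  ⟨fun d => ⟨d.toProd, d.adj⟩, fun q => ⟨q.1, q.2⟩, fun _ => rfl, fun _ => rfl⟩

lemma dart_sum_eq (G : SimpleGraph (Fin n)) [Fintype G.Dart] [DecidableRel G.Adj]
    (f : Fin n → Fin n → ℝ) :
    ∑ d : G.Dart, f d.fst d.snd = ∑ i, ∑ j, if G.Adj i j then f i j else 0 := by
  calc ∑ d : G.Dart, f d.fst d.snd
      = ∑ p ∈ Finset.univ.filter (fun p : Fin n × Fin n => G.Adj p.1 p.2), f p.1 p.2 := by
        refine Finset.sum_bij' (fun (d : G.Dart) (_ : d ∈ Finset.univ) => d.toProd)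
          (fun p hp => (⟨p, (Finset.mem_filter.mp hp).2⟩ : G.Dart)) ?_ ?_ ?_ ?_ ?_
        · intro d _
          simp [d.adj]
        · intro p hp
          exact Finset.mem_univ _
        · intro d _
          rfl
        · intro p hp
          rfl
        · intro d _
          rfl
    _ = ∑ p : Fin n × Fin n, if G.Adj p.1 p.2 then f p.1 p.2 else 0 :=
        Finset.sum_filter _ _
    _ = ∑ i, ∑ j, if G.Adj i j then f i j else 0 := Fintype.sum_prod_type _

lemma quad_eq (G : SimpleGraph (Fin n)) [Fintype G.Dart] (x : Fin n → ℝ) :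
    x ⬝ᵥ (LM G *ᵥ x) = (∑ d : G.Dart, (x d.fst - x d.snd)^2) / 2 := by
  letI := Classical.decRel G.Adj
  have h0 := G.lapMatrix_toLinearMap₂' (R := ℝ) x
  rw [Matrix.toLinearMap₂'_apply'] at h0
  rw [show LM G = G.lapMatrix ℝ from rfl, h0, dart_sum_eq G (fun a b => (x a - x b)^2)]

lemma Rq_le_dist (G : SimpleGraph (Fin n)) (hG : G.Connected) (i j : Fin n) :
    Rq G i j ≤ (G.dist i j : ℝ) := by
  letI := Classical.decRel G.Adj
  obtain ⟨p0, hp0⟩ := hG.exists_walk_length_eq_dist i j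
  set p := p0.bypass with hpdef
  have hpath : p.IsPath := p0.bypass_isPath
  have hlen : p.length = G.dist i j :=
    le_antisymm (hp0 ▸ p0.length_bypass_le) (SimpleGraph.dist_le p)
  set x := Minv G *ᵥ bvec i j with hx
  have hQ : x ⬝ᵥ (LM G *ᵥ x) = Rq G i j := by
    rw [hx, dot_trip (Minv G) (LM G) (Minv_transpose G), MLM, Rq_eq_dot]
  have hRtel : x i - x j = Rq G i j := by
    rw [← dot_bvec i j x, hx, Rq_eq_dot]
  have hnodupE : p.edges.Nodup := hpath.edges_nodup
  have hnodupD : p.darts.Nodup := List.Nodup.of_map _ hnodupE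
  set S : Finset G.Dart := p.darts.toFinset with hS
  have hcard : (S.card : ℝ) = (G.dist i j : ℝ) := by
    rw [hS, List.toFinset_card_of_nodup hnodupD, SimpleGraph.Walk.length_darts, hlen]
  have htel : x i - x j = ∑ d ∈ S, (x d.fst - x d.snd) := by
    rw [← walk_telescope x p, hS, List.sum_toFinset _ hnodupD]
  have hCS : (x i - x j)^2 ≤ (S.card : ℝ) * ∑ d ∈ S, (x d.fst - x d.snd)^2 := by
    rw [htel]
    exact sq_sum_le_card_mul_sum_sq
  have hinj : ∀ d ∈ p.darts, ∀ e ∈ p.darts, d.edge = e.edge → d = e :=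
    List.inj_on_of_nodup_map hnodupE
  set S' : Finset G.Dart := S.image SimpleGraph.Dart.symm with hS'
  have hdisj : Disjoint S S' := by
    rw [Finset.disjoint_left]
    intro d hd hd'
    obtain ⟨e, he, hed⟩ := Finset.mem_image.mp hd'
    have hde : d = e := by
      refine hinj d (List.mem_toFinset.mp hd) e (List.mem_toFinset.mp he) ?_
      rw [← hed, SimpleGraph.Dart.edge_symm]
    rw [hde] at hed
    exact SimpleGraph.Dart.symm_ne e hed
  have hsum' : ∑ d ∈ S', (x d.fst - x d.snd)^2 = ∑ d ∈ S, (x d.fst - x d.snd)^2 := by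
    have hful : ∀ a ∈ S, ∀ b ∈ S, SimpleGraph.Dart.symm a = SimpleGraph.Dart.symm b → a = b :=
      fun a _ b _ h => SimpleGraph.Dart.symm_involutive.injective h
    rw [hS', Finset.sum_image hful]
    refine Finset.sum_congr rfl fun d _ => ?_
    simp only [SimpleGraph.Dart.symm_toProd, Prod.fst_swap, Prod.snd_swap]
    ring
  have hdouble : 2 * ∑ d ∈ S, (x d.fst - x d.snd)^2 ≤ ∑ d : G.Dart, (x d.fst - x d.snd)^2 := by
    have hle := Finset.sum_le_sum_of_subset_of_nonneg (Finset.subset_univ (S ∪ S'))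
      (fun d _ _ => sq_nonneg (x d.fst - x d.snd))
    rw [Finset.sum_union hdisj, hsum'] at hle
    linarith
  have hkey : (Rq G i j)^2 ≤ (G.dist i j : ℝ) * Rq G i j := by
    have h1 : (Rq G i j)^2 ≤ (G.dist i j : ℝ) * ∑ d ∈ S, (x d.fst - x d.snd)^2 := by
      rw [← hRtel, ← hcard]; exact hCS
    have h2 : (G.dist i j : ℝ) * ∑ d ∈ S, (x d.fst - x d.snd)^2
        ≤ (G.dist i j : ℝ) * ((∑ d : G.Dart, (x d.fst - x d.snd)^2) / 2) := by
      have : (0:ℝ) ≤ (G.dist i j : ℝ) := Nat.cast_nonneg _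
      nlinarith [hdouble]
    rw [← quad_eq G x, hQ] at h2
    linarith
  rcases (Rq_nonneg G i j).eq_or_lt with h0 | hpos
  · rw [← h0]; exact Nat.cast_nonneg _
  · nlinarith [hkey]

lemma pair_sum_Rq (G : SimpleGraph (Fin n)) :
    ∑ p ∈ Finset.univ.filter (fun p : Fin n × Fin n => p.1 < p.2), Rq G p.1 p.2
      = (n : ℝ) * ∑ i, (lapEigs G i)⁻¹ := by
  have htr : ∑ i, Minv G i i = ∑ i, (lapEigs G i)⁻¹ := by
    have h := trace_Minv G
    rwa [Matrix.trace] at h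
  have hM0 := sum_Minv G
  have htot : ∑ p : Fin n × Fin n, Rq G p.1 p.2
      = 2 * ((n:ℝ) * ∑ i, (lapEigs G i)⁻¹) := by
    rw [Fintype.sum_prod_type]
    have hrow : ∀ i, ∑ j, Rq G i j
        = (n:ℝ) * Minv G i i + (∑ j, Minv G j j) - 2 * ∑ j, Minv G i j := by
      intro i
      simp only [Rq]
      rw [Finset.sum_sub_distrib, Finset.sum_add_distrib, Finset.sum_const, Finset.card_univ,
        Fintype.card_fin, nsmul_eq_mul, ← Finset.mul_sum]
    rw [Finset.sum_congr rfl (fun i _ => hrow i), Finset.sum_sub_distrib,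
      Finset.sum_add_distrib, ← Finset.mul_sum, Finset.sum_const, Finset.card_univ,
      Fintype.card_fin, nsmul_eq_mul, ← Finset.mul_sum, hM0, htr]
    ring
  have hsymmF : ∀ p : Fin n × Fin n, Rq G p.2 p.1 = Rq G p.1 p.2 := by
    intro p
    simp only [Rq]
    rw [Minv_symm G p.2 p.1]
    ring
  have hswap : ∑ p ∈ Finset.univ.filter (fun p : Fin n × Fin n => p.2 < p.1), Rq G p.1 p.2
      = ∑ p ∈ Finset.univ.filter (fun p : Fin n × Fin n => p.1 < p.2), Rq G p.1 p.2 := by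
    refine Finset.sum_bij' (fun (p : Fin n × Fin n) (_ : p ∈ _) => Prod.swap p)
      (fun (p : Fin n × Fin n) (_ : p ∈ _) => Prod.swap p) ?_ ?_ ?_ ?_ ?_
    · intro p hp; simp only [Finset.mem_filter, Finset.mem_univ, true_and] at hp ⊢
      simpa using hp
    · intro p hp; simp only [Finset.mem_filter, Finset.mem_univ, true_and] at hp ⊢
      simpa using hp
    · intro p _; simp
    · intro p _; simp
    · intro p _; exact (hsymmF p).symm
  have hdiagzero : ∑ p ∈ Finset.univ.filter
      (fun p : Fin n × Fin n => ¬ p.1 < p.2 ∧ ¬ p.2 < p.1), Rq G p.1 p.2 = 0 := by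
    refine Finset.sum_eq_zero fun p hp => ?_
    have h2 := (Finset.mem_filter.mp hp).2
    have heq : p.1 = p.2 := le_antisymm (not_lt.mp h2.2) (not_lt.mp h2.1)
    simp only [Rq, heq]
    ring
  have hpart : ∑ p : Fin n × Fin n, Rq G p.1 p.2
      = ∑ p ∈ Finset.univ.filter (fun p : Fin n × Fin n => p.1 < p.2), Rq G p.1 p.2
      + (∑ p ∈ Finset.univ.filter (fun p : Fin n × Fin n => p.2 < p.1), Rq G p.1 p.2
      + ∑ p ∈ Finset.univ.filter
          (fun p : Fin n × Fin n => ¬ p.1 < p.2 ∧ ¬ p.2 < p.1), Rq G p.1 p.2) := by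
    rw [← Finset.sum_filter_add_sum_filter_not Finset.univ
      (fun p : Fin n × Fin n => p.1 < p.2) (fun p => Rq G p.1 p.2)]
    congr 1
    rw [← Finset.sum_filter_add_sum_filter_not
      (Finset.univ.filter (fun p : Fin n × Fin n => ¬ p.1 < p.2))
      (fun p => p.2 < p.1) (fun p => Rq G p.1 p.2)]
    congr 1
    · apply Finset.sum_congr _ (fun _ _ => rfl)
      rw [Finset.filter_filter]
      apply Finset.filter_congr
      intro p _
      constructor
      · exact fun h => h.2
      · exact fun h => ⟨lt_asymm h, h⟩
    · apply Finset.sum_congr _ (fun _ _ => rfl)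
      rw [Finset.filter_filter]
  rw [hpart, hswap, hdiagzero] at htot
  linarith

lemma card_nonzero (G : SimpleGraph (Fin n)) (hG : G.Connected) :
    Fintype.card {i // lapEigs G i ≠ 0} = n - 1 := by
  letI := Classical.decRel G.Adj
  have hrank := (LM_herm G).rank_eq_card_non_zero_eigs
  have hker := G.card_connectedComponent_eq_finrank_ker_toLin'_lapMatrix
  have hc1 : Fintype.card G.ConnectedComponent = 1 := by
    haveI := hG.preconnected.subsingleton_connectedComponent
    obtain ⟨v⟩ := hG.nonempty
    exact Fintype.card_eq_one_iff.mpr ⟨G.connectedComponentMk v, fun y => Subsingleton.elim _ _⟩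
  have hrn := LinearMap.finrank_range_add_finrank_ker (Matrix.mulVecLin (LM G))
  rw [Module.finrank_fintype_fun_eq_card, Fintype.card_fin] at hrn
  have hrdef : (LM G).rank = Module.finrank ℝ (LinearMap.range (Matrix.mulVecLin (LM G))) := rfl
  rw [Matrix.toLin'_apply'] at hker
  rw [hc1] at hker
  have hker' : Module.finrank ℝ (LinearMap.ker (Matrix.mulVecLin (LM G))) = 1 := hker.symm
  have hfin : (LM G).rank = n - 1 := by omega
  have hcardeq : Fintype.card {i // lapEigs G i ≠ 0}
      = Fintype.card {i // (LM_herm G).eigenvalues i ≠ 0} := rfl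
  rw [hcardeq, ← hrank, hfin]

lemma sum_eigs_eq (hn : 0 < n) (G : SimpleGraph (Fin n)) :
    ∑ i, lapEigs G i = (n : ℝ) * avgDeg G := by
  letI := Classical.decRel G.Adj
  have h1 := trace_LM G
  have h2 : (LM G).trace = ∑ v, (G.degree v : ℝ) := by
    rw [show LM G = G.lapMatrix ℝ from rfl, SimpleGraph.lapMatrix, Matrix.trace_sub,
      SimpleGraph.trace_adjMatrix, sub_zero, SimpleGraph.degMatrix, Matrix.trace_diagonal]
  rw [← h1, h2]
  simp only [avgDeg, Fintype.card_fin]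
  have hn' : (n : ℝ) ≠ 0 := by exact_mod_cast hn.ne'
  field_simp

lemma avgDeg_pos (hn : 2 ≤ n) (G : SimpleGraph (Fin n)) (hG : G.Connected) :
    0 < avgDeg G := by
  letI := Classical.decRel G.Adj
  have h2 : (⟨0, by omega⟩ : Fin n) ≠ (⟨1, by omega⟩ : Fin n) := by simp [Fin.ext_iff]
  obtain ⟨p⟩ := hG.preconnected ⟨0, by omega⟩ ⟨1, by omega⟩
  have hdeg : 0 < G.degree (⟨0, by omega⟩ : Fin n) := by
    cases p with
    | @cons _ b _ h q =>
        exact Finset.card_pos.mpr ⟨b, by simpa [SimpleGraph.mem_neighborFinset] using h⟩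
  have hsum : (0:ℝ) < ∑ v, (G.degree v : ℝ) := by
    have h0 : (0:ℝ) < (G.degree (⟨0, by omega⟩ : Fin n) : ℝ) := by exact_mod_cast hdeg
    refine lt_of_lt_of_le h0 (Finset.single_le_sum (f := fun v => (G.degree v : ℝ))
      (fun v _ => by positivity) (Finset.mem_univ (⟨0, by omega⟩ : Fin n)))
  simp only [avgDeg, Fintype.card_fin]
  have hn' : (0:ℝ) < n := by exact_mod_cast (by omega : 0 < n)
  positivity

lemma lowerCS (hn : 2 ≤ n) (G : SimpleGraph (Fin n)) (hG : G.Connected) :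
    ((n:ℝ)-1)^2 ≤ (∑ i, lapEigs G i) * ∑ i, (lapEigs G i)⁻¹ := by
  classical
  have hr := Finset.sum_sq_le_sum_mul_sum_of_sq_eq_mul Finset.univ
    (r := fun i => if lapEigs G i = 0 then (0:ℝ) else 1) (f := lapEigs G)
    (g := fun i => (lapEigs G i)⁻¹)
    (fun i _ => lapEigs_nonneg G i)
    (fun i _ => inv_nonneg.mpr (lapEigs_nonneg G i))
    (fun i _ => by
      rcases eq_or_ne (lapEigs G i) 0 with h | h
      · simp [h]
      · simp [h])
  have hswap : ∀ i, (if lapEigs G i = 0 then (0:ℝ) else 1)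
      = if lapEigs G i ≠ 0 then (1:ℝ) else 0 := by
    intro i
    by_cases h : lapEigs G i = 0 <;> simp [h]
  have hcnt : ∑ i, (if lapEigs G i = 0 then (0:ℝ) else 1) = (n:ℝ) - 1 := by
    simp_rw [hswap]
    rw [Finset.sum_boole, ← Fintype.card_subtype, card_nonzero G hG]
    have : (1:ℝ) ≤ n := by exact_mod_cast (by omega : 1 ≤ n)
    rw [Nat.cast_sub (by omega)]
    norm_num
  calc ((n:ℝ)-1)^2 = (∑ i, if lapEigs G i = 0 then (0:ℝ) else 1)^2 := by rw [hcnt]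
    _ ≤ _ := hr

end Stmt11Aux

/-- `(n-1)²/(2 d̃(G) n²) ≤ H*(G) ≤ δ̃(G)(n-1)/(4n)`. -/
theorem stmt_11 {n : ℕ} (hn : 2 ≤ n) (G : SimpleGraph (Fin n)) (hG : G.Connected) :
    ((n : ℝ) - 1)^2 / (2 * avgDeg G * (n : ℝ)^2) ≤ Hstar G ∧
    Hstar G ≤ avgDist G * ((n : ℝ) - 1) / (4 * (n : ℝ)) := by
  have hn0 : (0:ℝ) < n := by exact_mod_cast (by omega : 0 < n)
  have hn2 : (2:ℝ) ≤ n := by exact_mod_cast hn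
  constructor
  · have hCS := Stmt11Aux.lowerCS hn G hG
    have hSig := Stmt11Aux.sum_eigs_eq (by omega) G
    have hpos := Stmt11Aux.avgDeg_pos hn G hG
    rw [Hstar, div_le_iff₀ (by positivity)]
    have hform : (1:ℝ)/(2*(n:ℝ)) * (∑ i, (lapEigs G i)⁻¹) * (2 * avgDeg G * (n:ℝ)^2)
        = ((n:ℝ) * avgDeg G) * ∑ i, (lapEigs G i)⁻¹ := by
      field_simp
    rw [hform, ← hSig]
    calc ((n:ℝ)-1)^2 ≤ (∑ i, lapEigs G i) * ∑ i, (lapEigs G i)⁻¹ := hCS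
      _ = _ := by ring
  · have hpair := Stmt11Aux.pair_sum_Rq G
    have hle : (n:ℝ) * ∑ i, (lapEigs G i)⁻¹ ≤ distSum G := by
      rw [← hpair, distSum]
      exact Finset.sum_le_sum fun p _ => Stmt11Aux.Rq_le_dist G hG p.1 p.2
    have hnn : (n:ℝ)^2 - n = n * ((n:ℝ) - 1) := by ring
    have hne1 : (0:ℝ) < (n:ℝ) - 1 := by linarith
    have hform : avgDist G * ((n:ℝ)-1) / (4*(n:ℝ)) = distSum G / (2*(n:ℝ)^2) := by
      rw [avgDist, hnn]
      field_simp
      ring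
    have hform2 : Hstar G = ((n:ℝ) * ∑ i, (lapEigs G i)⁻¹) / (2*(n:ℝ)^2) := by
      rw [Hstar]
      field_simp
    rw [hform, hform2]
    gcongr
end

section
/- Let G be a connected k-regular graph on n vertices whose algebraic connectivity satisfies λ₂(L) ≥ k - 2√(k-1) - ε for some ε ∈ (0, k - 2√(k-1)). Then H*(G) / min{H*(G') : G' connected on n vertices with average degree k} ≤ (k·n)/((n-1)(k - 2√(k-1) - ε)). -/
open Finset Matrix Filter

lemma trace_eq_sum_eigs {m : Type*} [Fintype m] [DecidableEq m] {A : Matrix m m ℝ}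
    (hA : A.IsHermitian) : ∑ i, hA.eigenvalues i = A.trace := by
  rw [hA.trace_eq_sum_eigenvalues]
  simp

lemma sum_lapEigs {n : ℕ} (G : SimpleGraph (Fin n)) :
    ∑ i, lapEigs G i = ∑ v, (letI := Classical.decRel G.Adj; G.degree v : ℝ) := by
  letI := Classical.decRel G.Adj
  rw [show ∑ i, lapEigs G i =
    (SimpleGraph.lapMatrix ℝ G).trace from trace_eq_sum_eigs _]
  simp [SimpleGraph.lapMatrix, SimpleGraph.degMatrix, Matrix.trace_diagonal]

lemma lapEigs_nonneg {n : ℕ} (G : SimpleGraph (Fin n)) (i : Fin n) : 0 ≤ lapEigs G i := by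
  letI := Classical.decRel G.Adj
  exact (SimpleGraph.posSemidef_lapMatrix ℝ G).eigenvalues_nonneg i

lemma card_nonzero_lapEigs {n : ℕ} (G : SimpleGraph (Fin n)) (hG : G.Connected) :
    Fintype.card {i // lapEigs G i ≠ 0} + 1 = n := by
  letI := Classical.decRel G.Adj
  have hker : Fintype.card G.ConnectedComponent =
      Module.finrank ℝ (LinearMap.ker (Matrix.toLin' (G.lapMatrix ℝ))) :=
    SimpleGraph.card_connectedComponent_eq_finrank_ker_toLin'_lapMatrix G
  have hcc : Fintype.card G.ConnectedComponent = 1 := by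
    have hs : Subsingleton G.ConnectedComponent :=
      hG.preconnected.subsingleton_connectedComponent
    have hne : Nonempty G.ConnectedComponent := ⟨G.connectedComponentMk ⟨0, by
      have := hG.nonempty
      rcases this with ⟨v⟩
      exact v.pos⟩⟩
    exact Fintype.card_eq_one_iff.mpr ⟨hne.some, fun y => Subsingleton.elim y _⟩
  have hrank : (G.lapMatrix ℝ).rank = Fintype.card {i // lapEigs G i ≠ 0} :=
    (SimpleGraph.posSemidef_lapMatrix ℝ G).isHermitian.rank_eq_card_non_zero_eigs
  have hrn : (G.lapMatrix ℝ).rank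
      + Module.finrank ℝ (LinearMap.ker (Matrix.toLin' (G.lapMatrix ℝ))) = n := by
    have := LinearMap.finrank_range_add_finrank_ker (Matrix.toLin' (G.lapMatrix ℝ))
    rw [Matrix.rank, Matrix.toLin'_apply'] at *
    simpa using this
  omega

lemma sum_inv_lapEigs_lb {n : ℕ} (hn : 2 ≤ n) (G : SimpleGraph (Fin n)) (hG : G.Connected)
    {S : ℝ} (hS : ∑ i, lapEigs G i = S) (hSpos : 0 < S) :
    ((n : ℝ) - 1) ^ 2 / S ≤ ∑ i, (lapEigs G i)⁻¹ := by
  classical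
  set s : Finset (Fin n) := Finset.univ.filter (fun i => lapEigs G i ≠ 0) with hs
  have hcard : (s.card : ℝ) = (n : ℝ) - 1 := by
    have h1 : Fintype.card {i // lapEigs G i ≠ 0} + 1 = n := card_nonzero_lapEigs G hG
    have h2 : Fintype.card {i // lapEigs G i ≠ 0} = s.card := Fintype.card_subtype _
    have : s.card + 1 = n := by omega
    push_cast [← this]
    ring
  have hcs : ((s.card : ℝ)) ^ 2 ≤ (∑ i ∈ s, lapEigs G i) * ∑ i ∈ s, (lapEigs G i)⁻¹ := by
    have := Finset.sum_sq_le_sum_mul_sum_of_sq_eq_mul s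
      (r := fun _ => (1 : ℝ)) (f := fun i => lapEigs G i) (g := fun i => (lapEigs G i)⁻¹)
      (fun i _ => lapEigs_nonneg G i) (fun i hi => inv_nonneg.mpr (lapEigs_nonneg G i))
      (fun i hi => by
        have : lapEigs G i ≠ 0 := (Finset.mem_filter.mp hi).2
        field_simp)
    simpa using this
  have hsum_le : ∑ i ∈ s, lapEigs G i ≤ S := by
    rw [← hS]
    exact Finset.sum_le_sum_of_subset_of_nonneg (Finset.subset_univ s)
      (fun i _ _ => lapEigs_nonneg G i)
  have hinv_eq : ∑ i ∈ s, (lapEigs G i)⁻¹ = ∑ i, (lapEigs G i)⁻¹ := by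
    refine Finset.sum_subset (Finset.subset_univ s) (fun i _ hi => ?_)
    have : lapEigs G i = 0 := by
      by_contra h
      exact hi (Finset.mem_filter.mpr ⟨Finset.mem_univ i, h⟩)
    simp [this]
  have hinv_nonneg : 0 ≤ ∑ i ∈ s, (lapEigs G i)⁻¹ :=
    Finset.sum_nonneg fun i _ => inv_nonneg.mpr (lapEigs_nonneg G i)
  rw [div_le_iff₀ hSpos, ← hcard]
  calc (s.card : ℝ) ^ 2 ≤ (∑ i ∈ s, lapEigs G i) * ∑ i ∈ s, (lapEigs G i)⁻¹ := hcs
    _ ≤ S * ∑ i ∈ s, (lapEigs G i)⁻¹ := by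
        apply mul_le_mul_of_nonneg_right hsum_le hinv_nonneg
    _ = (∑ i, (lapEigs G i)⁻¹) * S := by rw [hinv_eq]; ring

lemma sum_lapEigs_of_avg {n k : ℕ} (hn : 2 ≤ n) (G : SimpleGraph (Fin n))
    (havg : avgDeg G = k) : ∑ i, lapEigs G i = (k : ℝ) * n := by
  letI := Classical.decRel G.Adj
  have hnpos : (0 : ℝ) < n := by positivity
  have h := sum_lapEigs G
  rw [h]
  have : (∑ v, ((G.degree v : ℝ))) / (n : ℝ) = k := by
    have := havg
    unfold avgDeg at this
    simpa [Fintype.card_fin] using this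
  field_simp at this
  rw [this, mul_comm]

lemma sortedLapEigs_zero {n : ℕ} (hn0 : 0 < n) (G : SimpleGraph (Fin n)) (hG : G.Connected) :
    sortedLapEigs G ⟨0, hn0⟩ = 0 := by
  classical
  have hcard : Fintype.card {i // lapEigs G i ≠ 0} + 1 = n := card_nonzero_lapEigs G hG
  have hz : ∃ j, lapEigs G j = 0 := by
    by_contra h
    push_neg at h
    have : Fintype.card {i // lapEigs G i ≠ 0} = n := by
      rw [Fintype.card_subtype]
      rw [show Finset.univ.filter (fun i => lapEigs G i ≠ 0) = Finset.univ by
        ext i; simp [h i]]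
      simp
    omega
  obtain ⟨j, hj⟩ := hz
  have hmono := Tuple.monotone_sort (lapEigs G)
  set σ := Tuple.sort (lapEigs G)
  have h1 : sortedLapEigs G ⟨0, hn0⟩ ≤ sortedLapEigs G (σ.symm j) := by
    exact hmono (by simp [Fin.le_def])
  have h2 : sortedLapEigs G (σ.symm j) = 0 := by
    unfold sortedLapEigs
    simp [σ, hj]
  have h3 : 0 ≤ sortedLapEigs G ⟨0, hn0⟩ := lapEigs_nonneg G _
  linarith [h1.trans_eq h2]

lemma sum_inv_lapEigs_ub {n : ℕ} (hn : 2 ≤ n) (G : SimpleGraph (Fin n)) (hG : G.Connected)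
    {β : ℝ} (hβ : 0 < β) (hβle : β ≤ sortedLapEigs G ⟨1, by omega⟩) :
    ∑ i, (lapEigs G i)⁻¹ ≤ ((n : ℝ) - 1) * β⁻¹ := by
  classical
  have hn0 : 0 < n := by omega
  set σ := Tuple.sort (lapEigs G)
  have hperm : ∑ i, (lapEigs G i)⁻¹ = ∑ i, (sortedLapEigs G i)⁻¹ := by
    unfold sortedLapEigs
    exact (Equiv.sum_comp σ fun i => (lapEigs G i)⁻¹).symm
  have hmono := Tuple.monotone_sort (lapEigs G)
  rw [hperm]
  have hzero : sortedLapEigs G ⟨0, hn0⟩ = 0 := sortedLapEigs_zero hn0 G hG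
  rw [← Finset.add_sum_erase _ _ (Finset.mem_univ (⟨0, hn0⟩ : Fin n)), hzero]
  simp only [_root_.inv_zero, zero_add]
  have hbound : ∀ i ∈ Finset.univ.erase (⟨0, hn0⟩ : Fin n),
      (sortedLapEigs G i)⁻¹ ≤ β⁻¹ := by
    intro i hi
    have hne : i ≠ ⟨0, hn0⟩ := (Finset.mem_erase.mp hi).1
    have h1i : (⟨1, by omega⟩ : Fin n) ≤ i := by
      rw [Fin.le_def]
      simp only []
      have : i.val ≠ 0 := fun h => hne (Fin.ext h)
      omega
    have : β ≤ sortedLapEigs G i := hβle.trans (hmono h1i)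
    exact inv_anti₀ hβ this
  calc ∑ i ∈ Finset.univ.erase (⟨0, hn0⟩ : Fin n), (sortedLapEigs G i)⁻¹
      ≤ ∑ _i ∈ Finset.univ.erase (⟨0, hn0⟩ : Fin n), β⁻¹ := Finset.sum_le_sum hbound
    _ = ((n : ℝ) - 1) * β⁻¹ := by
        rw [Finset.sum_const, Finset.card_erase_of_mem (Finset.mem_univ _), Finset.card_univ, Fintype.card_fin,
          nsmul_eq_mul, Nat.cast_sub (by omega)]
        norm_num


/-- for a connected `k`-regular graph with
`λ₂ ≥ k - 2√(k-1) - ε`, the ratio of `H*(G)` to the minimum of `H*` over connected graphs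
on `n` vertices with average degree `k` is at most `kn/((n-1)(k - 2√(k-1) - ε))`. -/
theorem stmt_17 {n k : ℕ} (hn : 2 ≤ n) (hk : 3 ≤ k) (G : SimpleGraph (Fin n))
    (hG : G.Connected) (hreg : letI := Classical.decRel G.Adj; G.IsRegularOfDegree k) (ε : ℝ)
    (hε : ε ∈ Set.Ioo 0 ((k : ℝ) - 2 * Real.sqrt ((k : ℝ) - 1)))
    (hlam : (k : ℝ) - 2 * Real.sqrt ((k : ℝ) - 1) - ε ≤ sortedLapEigs G ⟨1, by omega⟩) :
    Hstar G /
      sInf {x : ℝ | ∃ G' : SimpleGraph (Fin n), G'.Connected ∧ avgDeg G' = k ∧ Hstar G' = x}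
      ≤ ((k : ℝ) * n) / (((n : ℝ) - 1) * ((k : ℝ) - 2 * Real.sqrt ((k : ℝ) - 1) - ε)) := by
  classical
  obtain ⟨hε0, hεlt⟩ := hε
  set β : ℝ := (k : ℝ) - 2 * Real.sqrt ((k : ℝ) - 1) - ε with hβdef
  have hβpos : 0 < β := by rw [hβdef]; linarith
  have hn0 : (0 : ℝ) < n := by positivity
  have hn1 : (0 : ℝ) < (n : ℝ) - 1 := by
    have : (2 : ℝ) ≤ n := by exact_mod_cast hn
    linarith
  have hk0 : (0 : ℝ) < k := by positivity
  have havgG : avgDeg G = k := by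
    letI := Classical.decRel G.Adj
    unfold avgDeg
    rw [show (∑ v, ((G.degree v : ℝ))) = (n : ℝ) * k by
      rw [Finset.sum_congr rfl (fun v _ => by rw [hreg v])]
      simp [Fintype.card_fin, mul_comm]]
    rw [Fintype.card_fin]
    field_simp
  set Sset : Set ℝ :=
    {x : ℝ | ∃ G' : SimpleGraph (Fin n), G'.Connected ∧ avgDeg G' = k ∧ Hstar G' = x} with hSset
  set c : ℝ := ((n : ℝ) - 1) ^ 2 / (2 * k * n ^ 2) with hc
  have hcpos : 0 < c := by rw [hc]; positivity
  have hmem : Hstar G ∈ Sset := ⟨G, hG, havgG, rfl⟩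
  have hlb : ∀ x ∈ Sset, c ≤ x := by
    rintro x ⟨G', hG', havg', rfl⟩
    have hsum : ∑ i, lapEigs G' i = (k : ℝ) * n := sum_lapEigs_of_avg hn G' havg'
    have hkey := sum_inv_lapEigs_lb hn G' hG' hsum (by positivity)
    unfold Hstar
    calc c = (1 / (2 * (n : ℝ))) * (((n : ℝ) - 1) ^ 2 / ((k : ℝ) * n)) := by
          rw [hc]; field_simp
      _ ≤ (1 / (2 * (n : ℝ))) * ∑ i, (lapEigs G' i)⁻¹ := by
          apply mul_le_mul_of_nonneg_left hkey (by positivity)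
  have hsinf : c ≤ sInf Sset := le_csInf ⟨_, hmem⟩ hlb
  have hHnn : 0 ≤ Hstar G :=
    mul_nonneg (by positivity) (Finset.sum_nonneg fun i _ => inv_nonneg.mpr (lapEigs_nonneg G i))
  have hub : Hstar G ≤ (1 / (2 * (n : ℝ))) * (((n : ℝ) - 1) * β⁻¹) := by
    unfold Hstar
    apply mul_le_mul_of_nonneg_left _ (by positivity)
    exact sum_inv_lapEigs_ub hn G hG hβpos hlam
  have h1 : Hstar G / sInf Sset ≤ Hstar G / c := by
    gcongr
  have h2 : Hstar G / c ≤ ((1 / (2 * (n : ℝ))) * (((n : ℝ) - 1) * β⁻¹)) / c := by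
    gcongr
  have h3 : ((1 / (2 * (n : ℝ))) * (((n : ℝ) - 1) * β⁻¹)) / c
      = ((k : ℝ) * n) / (((n : ℝ) - 1) * β) := by
    rw [hc]
    field_simp
  calc Hstar G / sInf Sset ≤ Hstar G / c := h1
    _ ≤ ((1 / (2 * (n : ℝ))) * (((n : ℝ) - 1) * β⁻¹)) / c := h2
    _ = ((k : ℝ) * n) / (((n : ℝ) - 1) * β) := h3
end

section
/- For every constant α > 1 there exists a sequence {Gₙ} of connected undirected graphs on n vertices such that liminf d̃(Gₙ)/(n-1) ≥ 1/α while H*(Gₙ) → ∞ as n → ∞. In particular, the lollipop graph (complete graph on ⌈n/β⌉ vertices with a path on the remaining vertices attached by one edge, β = α^{1/3}) has this property. -/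
open Finset Matrix Filter

/-- Lollipop-ish graph: clique on the first `m` vertices plus the full path `i — i+1`. -/
def lolli (m : ℕ) {n : ℕ} : SimpleGraph (Fin n) where
  Adj i j := (i.val + 1 = j.val ∨ j.val + 1 = i.val) ∨ (i ≠ j ∧ i.val < m ∧ j.val < m)
  symm := by
    constructor
    rintro i j (h | h) 
    · tauto
    · exact Or.inr ⟨h.1.symm, h.2.2, h.2.1⟩
  loopless := by
    constructor
    rintro i (h | h)
    · omega
    · exact h.1 rfl

lemma lolli_connected (m : ℕ) {n : ℕ} (hn : 1 ≤ n) : (lolli m : SimpleGraph (Fin n)).Connected := by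
  rw [SimpleGraph.connected_iff]
  constructor
  · have key : ∀ k : ℕ, ∀ v : Fin n, v.val = k → (lolli m).Reachable v ⟨0, hn⟩ := by
      intro k
      induction k with
      | zero => intro v hv; rw [show v = ⟨0, hn⟩ from Fin.ext hv]
      | succ k ih =>
        intro v hv
        have hk : k < n := by omega
        have hadj : (lolli m).Adj v ⟨k, hk⟩ := by
          left; right; simp [hv]
        exact (hadj.reachable).trans (ih ⟨k, hk⟩ rfl)
    intro u v
    exact (key u.val u rfl).trans (key v.val v rfl).symm
  · exact ⟨⟨0, hn⟩⟩

lemma lolli_degree {m n : ℕ} (hm : m ≤ n) (v : Fin n) (hv : v.val < m) :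
    letI := Classical.decRel (lolli m : SimpleGraph (Fin n)).Adj
    m - 1 ≤ (lolli m : SimpleGraph (Fin n)).degree v := by
  letI := Classical.decRel (lolli m : SimpleGraph (Fin n)).Adj
  classical
  have hsub : (Finset.univ.filter (fun u : Fin n => u.val < m)).erase v ⊆
      (lolli m : SimpleGraph (Fin n)).neighborFinset v := by
    intro u hu
    rw [Finset.mem_erase, Finset.mem_filter] at hu
    rw [SimpleGraph.mem_neighborFinset]
    exact ((lolli m).adj_symm (Or.inr ⟨hu.1, hu.2.2, hv⟩))
  have hcard : ((Finset.univ.filter (fun u : Fin n => u.val < m)).erase v).card = m - 1 := by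
    rw [Finset.card_erase_of_mem (by simp [hv])]
    congr 1
    have : (Finset.univ.filter (fun u : Fin n => u.val < m)) =
        (Finset.univ.map (Fin.castLEEmb hm)) := by
      ext u
      simp only [Finset.mem_filter, Finset.mem_univ, true_and, Finset.mem_map]
      constructor
      · intro h; exact ⟨⟨u.val, h⟩, Fin.ext rfl⟩
      · rintro ⟨w, rfl⟩; exact w.isLt
    rw [this, Finset.card_map, Finset.card_univ, Fintype.card_fin]
  rw [SimpleGraph.degree, ← hcard]
  exact Finset.card_le_card hsub

lemma filter_val_lt_card {n k : ℕ} (hk : k ≤ n) :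
    (Finset.univ.filter fun v : Fin n => v.val < k).card = k := by
  have : (Finset.univ.filter (fun u : Fin n => u.val < k)) =
      (Finset.univ.map (Fin.castLEEmb hk)) := by
    ext u
    simp only [Finset.mem_filter, Finset.mem_univ, true_and, Finset.mem_map]
    constructor
    · intro h; exact ⟨⟨u.val, h⟩, Fin.ext rfl⟩
    · rintro ⟨w, rfl⟩; exact w.isLt
  rw [this, Finset.card_map, Finset.card_univ, Fintype.card_fin]

lemma filter_le_val_card {n k : ℕ} (hk : k ≤ n) :
    (Finset.univ.filter fun v : Fin n => k ≤ v.val).card = n - k := by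
  have h1 : (Finset.univ.filter fun v : Fin n => k ≤ v.val)
      = Finset.univ \ (Finset.univ.filter fun v : Fin n => v.val < k) := by
    ext v; simp [not_lt]
  rw [h1, Finset.card_sdiff_of_subset (Finset.filter_subset _ _), filter_val_lt_card hk,
    Finset.card_univ, Fintype.card_fin]

lemma variance_bound {n ℓ : ℕ} (hl : 4 ≤ ℓ) (hn : 2 * ℓ ≤ n) (t : ℝ) :
    (ℓ : ℝ) ^ 3 / 256 ≤ ∑ v : Fin n, (max (v.val : ℝ) ((n - ℓ : ℕ) : ℝ) - t) ^ 2 := by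
  set m : ℕ := n - ℓ with hm
  have hl0 : (0:ℝ) < ℓ := by positivity
  by_cases ht : t ≤ (m : ℝ) + (ℓ:ℝ) / 4
  · -- use the top of the path
    set B := Finset.univ.filter (fun v : Fin n => m + ℓ / 2 ≤ v.val) with hB
    have hBcard : B.card = n - (m + ℓ / 2) := filter_le_val_card (by omega)
    have hBcard' : (ℓ : ℝ) / 2 ≤ (B.card : ℝ) := by
      have h2 : ℓ ≤ 2 * B.card := by rw [hBcard]; omega
      have := (Nat.cast_le (α := ℝ)).2 h2
      push_cast at this
      linarith
    have hterm : ∀ v ∈ B, ((ℓ:ℝ)/8) ^ 2 ≤ (max (v.val : ℝ) (m : ℝ) - t) ^ 2 := by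
      intro v hv
      rw [hB, Finset.mem_filter] at hv
      have hv' : m + ℓ / 2 ≤ v.val := hv.2
      have hvm : (m : ℝ) ≤ (v.val : ℝ) := by
        have : m ≤ v.val := by omega
        exact_mod_cast this
      rw [max_eq_left hvm]
      have hstep : 3 * ℓ ≤ 8 * (ℓ / 2) := by omega
      have hcast : ((m + ℓ / 2 : ℕ) : ℝ) ≤ (v.val : ℝ) := by exact_mod_cast hv'
      have hcast2 : (3:ℝ) * ℓ ≤ 8 * ((ℓ/2 : ℕ) : ℝ) := by exact_mod_cast hstep
      have hge : (ℓ:ℝ)/8 ≤ (v.val : ℝ) - t := by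
        push_cast at hcast
        linarith
      exact pow_le_pow_left₀ (by positivity) hge 2
    calc (ℓ : ℝ) ^ 3 / 256 = ((ℓ:ℝ)/2) * ((ℓ:ℝ)/8)^2 / 2 := by ring
      _ ≤ ((ℓ:ℝ)/2) * ((ℓ:ℝ)/8)^2 := by
          have : (0:ℝ) ≤ ((ℓ:ℝ)/2) * ((ℓ:ℝ)/8)^2 := by positivity
          linarith
      _ ≤ (B.card : ℝ) * ((ℓ:ℝ)/8)^2 := by
          apply mul_le_mul_of_nonneg_right hBcard' (by positivity)
      _ ≤ ∑ v ∈ B, (max (v.val : ℝ) (m : ℝ) - t) ^ 2 := by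
          have := Finset.card_nsmul_le_sum B _ (((ℓ:ℝ)/8)^2) hterm
          simpa [nsmul_eq_mul] using this
      _ ≤ ∑ v : Fin n, (max (v.val : ℝ) (m : ℝ) - t) ^ 2 := by
          apply Finset.sum_le_sum_of_subset_of_nonneg (Finset.subset_univ B)
          intro v _ _
          positivity
  · -- use the clique
    push_neg at ht
    set A := Finset.univ.filter (fun v : Fin n => v.val < m) with hA
    have hAcard : A.card = m := filter_val_lt_card (by omega)
    have hterm : ∀ v ∈ A, ((ℓ:ℝ)/4) ^ 2 ≤ (max (v.val : ℝ) (m : ℝ) - t) ^ 2 := by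
      intro v hv
      rw [hA, Finset.mem_filter] at hv
      have hvm : (v.val : ℝ) ≤ (m : ℝ) := by
        have : v.val ≤ m := le_of_lt hv.2
        exact_mod_cast this
      rw [max_eq_right hvm]
      have hge : (ℓ:ℝ)/4 ≤ t - (m:ℝ) := by linarith
      have : ((ℓ:ℝ)/4) ^ 2 ≤ (t - (m:ℝ)) ^ 2 := pow_le_pow_left₀ (by positivity) hge 2
      calc ((ℓ:ℝ)/4) ^ 2 ≤ (t - (m:ℝ)) ^ 2 := this
        _ = ((m:ℝ) - t) ^ 2 := by ring
    have hcard' : (ℓ : ℝ) ≤ (A.card : ℝ) := by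
      rw [hAcard]
      exact_mod_cast (by omega : ℓ ≤ m)
    calc (ℓ : ℝ) ^ 3 / 256 ≤ (ℓ:ℝ) * ((ℓ:ℝ)/4)^2 := by
          nlinarith [hl0]
      _ ≤ (A.card : ℝ) * ((ℓ:ℝ)/4)^2 := by
          apply mul_le_mul_of_nonneg_right hcard' (by positivity)
      _ ≤ ∑ v ∈ A, (max (v.val : ℝ) (m : ℝ) - t) ^ 2 := by
          have := Finset.card_nsmul_le_sum A _ (((ℓ:ℝ)/4)^2) hterm
          simpa [nsmul_eq_mul] using this
      _ ≤ ∑ v : Fin n, (max (v.val : ℝ) (m : ℝ) - t) ^ 2 := by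
          apply Finset.sum_le_sum_of_subset_of_nonneg (Finset.subset_univ A)
          intro v _ _
          positivity

lemma card_val_eq_le_one {n k : ℕ} :
    (Finset.univ.filter (fun j : Fin n => j.val = k)).card ≤ 1 := by
  apply Finset.card_le_one.2
  intro a ha b hb
  rw [Finset.mem_filter] at ha hb
  exact Fin.ext (ha.2.trans hb.2.symm)

lemma qform_bound {m n : ℕ} (x : Fin n → ℝ)
    (hx : ∀ i j : Fin n, (lolli m : SimpleGraph (Fin n)).Adj i j → (x i - x j) ^ 2 ≤
      (if j.val = i.val + 1 then (1:ℝ) else 0) + (if i.val = j.val + 1 then (1:ℝ) else 0)) :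
    letI := Classical.decRel (lolli m : SimpleGraph (Fin n)).Adj
    (∑ i : Fin n, ∑ j : Fin n, if (lolli m : SimpleGraph (Fin n)).Adj i j
      then (x i - x j) ^ 2 else 0) / 2 ≤ (n : ℝ) := by
  letI := Classical.decRel (lolli m : SimpleGraph (Fin n)).Adj
  classical
  have hinner : ∀ i : Fin n, (∑ j : Fin n, if (lolli m : SimpleGraph (Fin n)).Adj i j
      then (x i - x j) ^ 2 else 0) ≤ 2 := by
    intro i
    calc (∑ j : Fin n, if (lolli m : SimpleGraph (Fin n)).Adj i j then (x i - x j) ^ 2 else 0)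
        ≤ ∑ j : Fin n, ((if j.val = i.val + 1 then (1:ℝ) else 0)
            + (if i.val = j.val + 1 then (1:ℝ) else 0)) := by
          apply Finset.sum_le_sum
          intro j _
          by_cases hadj : (lolli m : SimpleGraph (Fin n)).Adj i j
          · rw [if_pos hadj]; exact hx i j hadj
          · rw [if_neg hadj]; positivity
      _ = (∑ j : Fin n, if j.val = i.val + 1 then (1:ℝ) else 0)
            + (∑ j : Fin n, if i.val = j.val + 1 then (1:ℝ) else 0) := Finset.sum_add_distrib
      _ ≤ 1 + 1 := by
          gcongr
          · have : (∑ j : Fin n, if j.val = i.val + 1 then (1:ℝ) else 0)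
                = ((Finset.univ.filter (fun j : Fin n => j.val = i.val + 1)).card : ℝ) := by
              rw [Finset.sum_boole]
            rw [this]
            exact_mod_cast card_val_eq_le_one
          · have : (∑ j : Fin n, if i.val = j.val + 1 then (1:ℝ) else 0)
                = ((Finset.univ.filter (fun j : Fin n => i.val = j.val + 1)).card : ℝ) := by
              rw [Finset.sum_boole]
            rw [this]
            have h2 : (Finset.univ.filter (fun j : Fin n => i.val = j.val + 1)).card ≤ 1 := by
              apply Finset.card_le_one.2
              intro a ha b hb
              rw [Finset.mem_filter] at ha hb
              exact Fin.ext (by omega)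
            exact_mod_cast h2
      _ = 2 := by norm_num
  have := Finset.sum_le_sum (fun i (_ : i ∈ Finset.univ) => hinner i)
  rw [Finset.sum_const, Finset.card_univ, Fintype.card_fin, nsmul_eq_mul] at this
  linarith

lemma lolli_edge_diff {m n ℓ : ℕ} (hm : m = n - ℓ) (t : ℝ) (i j : Fin n)
    (hadj : (lolli m : SimpleGraph (Fin n)).Adj i j) :
    ((max (i.val : ℝ) (m:ℝ) - t) - (max (j.val : ℝ) (m:ℝ) - t)) ^ 2 ≤
      (if j.val = i.val + 1 then (1:ℝ) else 0) + (if i.val = j.val + 1 then (1:ℝ) else 0) := by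
  have hlip : |max (i.val : ℝ) (m:ℝ) - max (j.val : ℝ) (m:ℝ)| ≤ |(i.val : ℝ) - (j.val : ℝ)| :=
    abs_max_sub_max_le_abs _ _ _
  rcases hadj with hcons | hcl
  · -- consecutive
    have h1 : |(i.val : ℝ) - (j.val : ℝ)| = 1 := by
      rcases hcons with h | h
      · rw [abs_sub_comm]
        rw [abs_of_nonneg] <;> [skip; skip] <;>
          · have : (j.val : ℝ) = (i.val : ℝ) + 1 := by exact_mod_cast h.symm
            linarith
      · rw [abs_of_nonneg] <;>
          · have : (i.val : ℝ) = (j.val : ℝ) + 1 := by exact_mod_cast h.symm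
            linarith
    have hsq : ((max (i.val : ℝ) (m:ℝ) - t) - (max (j.val : ℝ) (m:ℝ) - t)) ^ 2 ≤ 1 := by
      have h2 : |max (i.val : ℝ) (m:ℝ) - max (j.val : ℝ) (m:ℝ)| ≤ 1 := by rw [h1] at hlip; exact hlip
      calc ((max (i.val : ℝ) (m:ℝ) - t) - (max (j.val : ℝ) (m:ℝ) - t)) ^ 2
          = |max (i.val : ℝ) (m:ℝ) - max (j.val : ℝ) (m:ℝ)| ^ 2 := by
            rw [← sq_abs]; ring_nf
        _ ≤ 1 ^ 2 := by exact pow_le_pow_left₀ (abs_nonneg _) h2 2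
        _ = 1 := one_pow 2
    rcases hcons with h | h
    · rw [if_pos h.symm]
      have : (0:ℝ) ≤ if i.val = j.val + 1 then (1:ℝ) else 0 := by positivity
      linarith
    · rw [if_pos h.symm]
      have : (0:ℝ) ≤ if j.val = i.val + 1 then (1:ℝ) else 0 := by positivity
      linarith
  · -- clique pair
    have hi : (i.val : ℝ) ≤ (m : ℝ) := by exact_mod_cast le_of_lt hcl.2.1
    have hj : (j.val : ℝ) ≤ (m : ℝ) := by exact_mod_cast le_of_lt hcl.2.2
    rw [max_eq_right hi, max_eq_right hj]
    have : (0:ℝ) ≤ (if j.val = i.val + 1 then (1:ℝ) else 0) + (if i.val = j.val + 1 then (1:ℝ) else 0) := by positivity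
    calc ((m:ℝ) - t - ((m:ℝ) - t)) ^ 2 = 0 := by ring
      _ ≤ _ := this

/-- `n^{1/4}` as a natural number. -/
def s4 (n : ℕ) : ℕ := Nat.sqrt (Nat.sqrt n)

/-- Length of the path part, `≈ n^{3/4}`. -/
def pl (n : ℕ) : ℕ := n / (s4 n + 1)

lemma pl_le_half {n : ℕ} (hn : 1 ≤ n) : 2 * pl n ≤ n := by
  have hs : 1 ≤ s4 n := by
    have h1 : 1 ≤ Nat.sqrt n := Nat.sqrt_pos.2 hn
    exact Nat.sqrt_pos.2 h1
  have : pl n ≤ n / 2 := Nat.div_le_div_left (by omega) (by omega)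
  have := Nat.div_mul_le_self n 2
  omega

lemma nat_sqrt_le_real (k : ℕ) : (Nat.sqrt k : ℝ) ≤ Real.sqrt k := by
  rw [show (Nat.sqrt k : ℝ) = Real.sqrt ((Nat.sqrt k : ℝ)^2) by
    rw [Real.sqrt_sq (by positivity)]]
  apply Real.sqrt_le_sqrt
  exact_mod_cast Nat.sqrt_le' k

lemma s4_le_q {n : ℕ} : (s4 n : ℝ) ≤ Real.sqrt (Real.sqrt n) := by
  calc (s4 n : ℝ) ≤ Real.sqrt (Nat.sqrt n) := nat_sqrt_le_real _
    _ ≤ Real.sqrt (Real.sqrt n) := Real.sqrt_le_sqrt (nat_sqrt_le_real n)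

lemma q_lt_s4_succ {n : ℕ} : Real.sqrt (Real.sqrt n) ≤ (s4 n : ℝ) + 1 := by
  have h1 : Nat.sqrt n < (s4 n + 1)^2 := by
    have := Nat.lt_succ_sqrt (Nat.sqrt n)
    simpa [s4, pow_two, Nat.succ_eq_add_one] using this
  have h2 : n < (s4 n + 1)^4 := by
    have h3 := Nat.lt_succ_sqrt n
    have h4 : Nat.sqrt n + 1 ≤ (s4 n + 1)^2 := h1
    calc n < (Nat.sqrt n + 1)^2 := by simpa [pow_two, Nat.succ_eq_add_one] using h3
      _ ≤ ((s4 n + 1)^2)^2 := Nat.pow_le_pow_left h4 2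
      _ = (s4 n + 1)^4 := by ring
  by_contra hcon
  push_neg at hcon
  have hq4 : (n:ℝ) = (Real.sqrt (Real.sqrt n))^4 := by
    rw [show ((Real.sqrt (Real.sqrt n)))^4 = ((Real.sqrt (Real.sqrt n))^2)^2 by ring,
      Real.sq_sqrt (Real.sqrt_nonneg _), Real.sq_sqrt (by positivity)]
  have : ((s4 n + 1 : ℕ) : ℝ)^4 < (Real.sqrt (Real.sqrt n))^4 := by
    apply pow_lt_pow_left₀ _ (by positivity)
    · norm_num
    · push_cast; linarith
  rw [← hq4] at this
  have h2' : ((n:ℕ):ℝ) < ((s4 n + 1:ℕ):ℝ)^4 := by exact_mod_cast h2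
  linarith

lemma pl_lower {n : ℕ} (hn : 1 ≤ n) :
    Real.sqrt (Real.sqrt n) ^ 3 / 2 - 1 ≤ (pl n : ℝ) := by
  set q := Real.sqrt (Real.sqrt n) with hq
  have hq1 : 1 ≤ q := by
    rw [hq]
    rw [show (1:ℝ) = Real.sqrt (Real.sqrt 1) by simp]
    apply Real.sqrt_le_sqrt
    apply Real.sqrt_le_sqrt
    exact_mod_cast hn
  have hq4 : (n:ℝ) = q^4 := by
    rw [hq, show ((Real.sqrt (Real.sqrt n)))^4 = ((Real.sqrt (Real.sqrt n))^2)^2 by ring,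
      Real.sq_sqrt (Real.sqrt_nonneg _), Real.sq_sqrt (by positivity)]
  -- n < (s4 n + 1) * (pl n + 1)
  have hdiv : n < (s4 n + 1) * (pl n + 1) := by
    have h1 := Nat.div_add_mod n (s4 n + 1)
    have h2 : n % (s4 n + 1) < s4 n + 1 := Nat.mod_lt _ (by omega)
    unfold pl
    nlinarith [h1, h2]
  have hs4 : (s4 n : ℝ) ≤ q := s4_le_q
  have hdiv' : (n : ℝ) < ((s4 n : ℝ) + 1) * ((pl n : ℝ) + 1) := by exact_mod_cast hdiv
  have h2q : (s4 n : ℝ) + 1 ≤ 2 * q := by linarith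
  have hq0 : 0 < q := by linarith
  -- q^4 < 2q (pl + 1)
  have : q^4 < 2 * q * ((pl n : ℝ) + 1) := by
    calc q^4 = (n:ℝ) := hq4.symm
      _ < ((s4 n : ℝ) + 1) * ((pl n : ℝ) + 1) := hdiv'
      _ ≤ 2 * q * ((pl n : ℝ) + 1) := by
          apply mul_le_mul_of_nonneg_right h2q (by positivity)
  have h3 : q^3 < 2 * ((pl n : ℝ) + 1) := by
    have := mul_lt_mul_of_pos_left this (by positivity : (0:ℝ) < 1/q)
    calc q^3 = (1/q) * q^4 := by field_simp
      _ < (1/q) * (2 * q * ((pl n : ℝ) + 1)) := this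
      _ = 2 * ((pl n : ℝ) + 1) := by field_simp
  linarith

lemma pl_upper {n : ℕ} (hn : 1 ≤ n) :
    (pl n : ℝ) ≤ (n : ℝ) / Real.sqrt (Real.sqrt n) := by
  set q := Real.sqrt (Real.sqrt n) with hq
  have hq1 : 1 ≤ q := by
    rw [hq, show (1:ℝ) = Real.sqrt (Real.sqrt 1) by simp]
    apply Real.sqrt_le_sqrt; apply Real.sqrt_le_sqrt; exact_mod_cast hn
  have h1 : (pl n : ℝ) ≤ (n : ℝ) / ((s4 n : ℝ) + 1) := by
    have := Nat.cast_div_le (α := ℝ) (m := n) (n := s4 n + 1)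
    simpa [pl] using this
  calc (pl n : ℝ) ≤ (n : ℝ) / ((s4 n : ℝ) + 1) := h1
    _ ≤ (n : ℝ) / q := by
        apply div_le_div_of_nonneg_left (by positivity) (by linarith) q_lt_s4_succ


open RealInnerProductSpace in
lemma key {n : ℕ} {G : SimpleGraph (Fin n)} (hG : G.Connected) (x : Fin n → ℝ)
    (hsum : ∑ v, x v = 0) {s c : ℝ} (hs : 0 < s) (hc : 0 < c)
    (hxs : s ≤ ∑ v, x v ^ 2)
    (hq : (letI := Classical.decRel G.Adj
        (∑ i, ∑ j, if G.Adj i j then (x i - x j) ^ 2 else 0)) / 2 ≤ c) :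
    s / c ≤ ∑ i, (lapEigs G i)⁻¹ := by
  letI := Classical.decRel G.Adj
  have hpsd := SimpleGraph.posSemidef_lapMatrix ℝ G
  set A := G.lapMatrix ℝ with hAdef
  have hA := hpsd.isHermitian
  set b := hA.eigenvectorBasis with hbdef
  set μ := hA.eigenvalues with hμdef
  have hle : lapEigs G = μ := rfl
  set X : EuclideanSpace ℝ (Fin n) := WithLp.toLp 2 x with hXdef
  set co : Fin n → ℝ := fun i => ⟪(b i : EuclideanSpace ℝ (Fin n)), X⟫ with hco
  -- inner products are dot products
  have hinner : ∀ (u w : EuclideanSpace ℝ (Fin n)), ⟪u, w⟫ = ∑ v, u v * w v := by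
    intro u w
    simp [PiLp.inner_apply, RCLike.inner_apply, mul_comm]
  -- Parseval
  have parseval : ∑ i, (co i) ^ 2 = ∑ v, x v ^ 2 := by
    have h := b.sum_inner_mul_inner X X
    have h2 : ∀ i, ⟪X, (b i : EuclideanSpace ℝ (Fin n))⟫ = co i := fun i => real_inner_comm _ _
    calc ∑ i, (co i) ^ 2 = ∑ i, ⟪X, (b i : EuclideanSpace ℝ (Fin n))⟫ * co i := by
          simp_rw [h2, pow_two]
      _ = ⟪X, X⟫ := h
      _ = ∑ v, x v ^ 2 := by rw [hinner]; simp_rw [← pow_two]; rfl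
  -- eigenvector equation
  have hAb : ∀ i, A *ᵥ (b i : EuclideanSpace ℝ (Fin n)) = μ i • ((b i : EuclideanSpace ℝ (Fin n)) : Fin n → ℝ) :=
    fun i => hA.mulVec_eigenvectorBasis i
  -- quadratic form expansion
  set z : EuclideanSpace ℝ (Fin n) := WithLp.toLp 2 (A *ᵥ x) with hz
  have hbz : ∀ i, ⟪(b i : EuclideanSpace ℝ (Fin n)), z⟫ = μ i * co i := by
    intro i
    rw [hinner]
    have : ∑ v, (b i : EuclideanSpace ℝ (Fin n)) v * z v
        = ((b i : EuclideanSpace ℝ (Fin n)) : Fin n → ℝ) ⬝ᵥ (A *ᵥ x) := rfl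
    rw [this, Matrix.dotProduct_mulVec, ← Matrix.mulVec_transpose]
    have hsymm : Aᵀ = A := G.isSymm_lapMatrix (R := ℝ)
    rw [hsymm, hAb i]
    show μ i • (b i : EuclideanSpace ℝ (Fin n)) ⬝ᵥ x = μ i * co i
    rw [WithLp.ofLp_smul, smul_dotProduct, smul_eq_mul, hco]
    simp only [hinner]
    rfl
  have hqf : ∑ i, μ i * (co i) ^ 2 = (∑ i, ∑ j, if G.Adj i j then (x i - x j) ^ 2 else 0) / 2 := by
    have h := b.sum_inner_mul_inner X z
    have h2 : ∀ i, ⟪X, (b i : EuclideanSpace ℝ (Fin n))⟫ = co i := fun i => real_inner_comm _ _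
    have hXz : ⟪X, z⟫ = x ⬝ᵥ (A *ᵥ x) := by rw [hinner]; rfl
    have lhs : ∑ i, μ i * (co i) ^ 2 = ⟪X, z⟫ := by
      rw [← h]
      apply Finset.sum_congr rfl
      intro i _
      rw [h2 i, hbz i]
      ring
    rw [lhs, hXz, ← Matrix.toLinearMap₂'_apply' A x x, SimpleGraph.lapMatrix_toLinearMap₂']
  -- kernel coefficients vanish
  have hker : ∀ i, μ i = 0 → co i = 0 := by
    intro i hi
    have hzero : A *ᵥ (b i : EuclideanSpace ℝ (Fin n)) = 0 := by
      rw [hAb i, hi, zero_smul]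
    have hconst : ∀ v w : Fin n, (b i : EuclideanSpace ℝ (Fin n)) v
        = (b i : EuclideanSpace ℝ (Fin n)) w := by
      intro v w
      have hq0 : Matrix.toLinearMap₂' ℝ A ((b i : EuclideanSpace ℝ (Fin n)) : Fin n → ℝ)
          ((b i : EuclideanSpace ℝ (Fin n)) : Fin n → ℝ) = 0 := by
        rw [Matrix.toLinearMap₂'_apply' A, hzero]
        simp
      exact (SimpleGraph.lapMatrix_toLinearMap₂'_apply'_eq_zero_iff_forall_reachable G
        _).mp hq0 v w (hG.preconnected v w)
    obtain ⟨v₀⟩ := hG.nonempty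
    have : co i = (b i : EuclideanSpace ℝ (Fin n)) v₀ * ∑ v, x v := by
      rw [hco]
      simp only [hinner]
      rw [Finset.mul_sum]
      exact Finset.sum_congr rfl fun v _ => by rw [hconst v v₀]
    rw [this, hsum, mul_zero]
  -- eigenvalues nonneg
  have hnn : ∀ i, 0 ≤ μ i := fun i => hpsd.eigenvalues_nonneg i
  set T : ℝ := ∑ i, μ i * (co i) ^ 2 with hT
  set s' : ℝ := ∑ i, (co i) ^ 2 with hs'
  have hs'x : s' = ∑ v, x v ^ 2 := parseval
  have hs'pos : 0 < s' := lt_of_lt_of_le hs (hs'x ▸ hxs)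
  have hTc : T ≤ c := le_trans (le_of_eq hqf) hq
  -- some positive eigenvalue with nonzero coefficient
  obtain ⟨j0, hj0pos, hj0ne⟩ : ∃ j, 0 < μ j ∧ co j ≠ 0 := by
    by_contra h
    push_neg at h
    have : ∀ i, co i = 0 := by
      intro i
      rcases eq_or_lt_of_le (hnn i) with h0 | hpos
      · exact hker i h0.symm
      · exact h i hpos
    have : s' = 0 := by rw [hs']; exact Finset.sum_eq_zero fun i _ => by rw [this i]; ring
    exact absurd (this ▸ hs'pos) (lt_irrefl 0)
  have hTpos : 0 < T := by
    have h1 : ∀ i ∈ Finset.univ, 0 ≤ μ i * (co i) ^ 2 :=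
      fun i _ => mul_nonneg (hnn i) (sq_nonneg _)
    have h2 : 0 < μ j0 * (co j0) ^ 2 :=
      mul_pos hj0pos (by positivity)
    exact Finset.sum_pos' h1 ⟨j0, Finset.mem_univ j0, h2⟩
  -- small positive eigenvalue
  obtain ⟨j, hjpos, hjle⟩ : ∃ j, 0 < μ j ∧ μ j ≤ T / s' := by
    by_contra h
    push_neg at h
    have hterm : ∀ i ∈ Finset.univ, (T / s') * (co i) ^ 2 ≤ μ i * (co i) ^ 2 := by
      intro i _
      rcases eq_or_lt_of_le (hnn i) with h0 | hpos
      · rw [hker i h0.symm]; ring_nf; exact le_refl _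
      · exact mul_le_mul_of_nonneg_right (le_of_lt (h i hpos)) (sq_nonneg _)
    have hstrict : (T / s') * (co j0) ^ 2 < μ j0 * (co j0) ^ 2 :=
      mul_lt_mul_of_pos_right (h j0 hj0pos) (by positivity)
    have : ∑ i, (T / s') * (co i) ^ 2 < T :=
      Finset.sum_lt_sum hterm ⟨j0, Finset.mem_univ j0, hstrict⟩
    rw [← Finset.mul_sum, ← hs', div_mul_cancel₀ T (ne_of_gt hs'pos)] at this
    exact absurd this (lt_irrefl T)
  -- conclude
  have hineq : μ j ≤ c / s := by
    calc μ j ≤ T / s' := hjle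
      _ ≤ c / s := by
        apply div_le_div₀ hc.le hTc hs
        exact hs'x ▸ hxs
  have h1 : s / c ≤ (μ j)⁻¹ := by
    rw [show s / c = (c / s)⁻¹ by rw [inv_div]]
    exact inv_anti₀ hjpos hineq
  refine le_trans h1 ?_
  rw [hle]
  exact Finset.single_le_sum (fun i _ => inv_nonneg.mpr (hnn i)) (Finset.mem_univ j)


/-- The lollipop-ish graph sequence. -/
def GG (n : ℕ) : SimpleGraph (Fin n) := lolli (n - pl n)

lemma hstar_bound {n : ℕ} (hn : 256 ≤ n) :
    Real.sqrt (Real.sqrt n) / 32768 ≤ Hstar (GG n) := by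
  set q := Real.sqrt (Real.sqrt n) with hqdef
  have hn1 : 1 ≤ n := by omega
  have hq4n : (n : ℝ) = q ^ 4 := by
    rw [hqdef, show ((Real.sqrt (Real.sqrt n)))^4 = ((Real.sqrt (Real.sqrt n))^2)^2 by ring,
      Real.sq_sqrt (Real.sqrt_nonneg _), Real.sq_sqrt (by positivity)]
  have hq4 : (4:ℝ) ≤ q := by
    rw [hqdef]
    have h16 : (16:ℝ) ≤ Real.sqrt n := by
      rw [show (16:ℝ) = Real.sqrt 256 by
        rw [show (256:ℝ) = 16^2 by norm_num, Real.sqrt_sq (by norm_num)]]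
      exact Real.sqrt_le_sqrt (by exact_mod_cast hn)
    rw [show (4:ℝ) = Real.sqrt 16 by
      rw [show (16:ℝ) = 4^2 by norm_num, Real.sqrt_sq (by norm_num)]]
    exact Real.sqrt_le_sqrt h16
  have hpll : q ^ 3 / 2 - 1 ≤ (pl n : ℝ) := pl_lower hn1
  have hl4 : 4 ≤ pl n := by
    have h64 : (64:ℝ) ≤ q^3 := by nlinarith [sq_nonneg q]
    have : (4:ℝ) ≤ (pl n : ℝ) := by linarith
    exact_mod_cast this
  have h2l : 2 * pl n ≤ n := pl_le_half hn1
  set ℓ := pl n with hldef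
  set m := n - ℓ with hmdef
  have hG : (GG n).Connected := lolli_connected _ hn1
  -- the test vector
  set t : ℝ := (∑ v : Fin n, max (v.val : ℝ) ((m : ℕ) : ℝ)) / n with htdef
  set x : Fin n → ℝ := fun v => max (v.val : ℝ) ((m : ℕ) : ℝ) - t with hxdef
  have hsum : ∑ v, x v = 0 := by
    rw [hxdef]
    rw [Finset.sum_sub_distrib, Finset.sum_const, Finset.card_univ, Fintype.card_fin,
      nsmul_eq_mul, htdef]
    field_simp
    ring
  have hvar : (ℓ : ℝ) ^ 3 / 256 ≤ ∑ v, x v ^ 2 := variance_bound hl4 h2l t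
  have hqf : (letI := Classical.decRel (GG n).Adj
      (∑ i, ∑ j, if (GG n).Adj i j then (x i - x j) ^ 2 else 0)) / 2 ≤ (n : ℝ) :=
    qform_bound x (fun i j hadj => lolli_edge_diff hmdef t i j hadj)
  have hkey := key hG x hsum (by positivity) (by positivity : (0:ℝ) < n) hvar hqf
  -- conclude
  have hl0 : (0:ℝ) < ℓ := by positivity
  have hn0 : (0:ℝ) < n := by positivity
  have hHstar : ((ℓ:ℝ)^3/256) / n * (1 / (2 * n)) ≤ Hstar (GG n) := by
    unfold Hstar
    rw [mul_comm (1 / (2 * (n:ℝ)))]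
    apply mul_le_mul_of_nonneg_right hkey (by positivity)
  refine le_trans ?_ hHstar
  have hq0 : (0:ℝ) < q := by linarith
  have h64 : (64:ℝ) ≤ q^3 := by nlinarith [sq_nonneg q]
  have hlq : q^3/4 ≤ (ℓ:ℝ) := by linarith
  have hl3 : q^9/64 ≤ (ℓ:ℝ)^3 := by
    calc q^9/64 = (q^3/4)^3 := by ring
      _ ≤ (ℓ:ℝ)^3 := pow_le_pow_left₀ (by positivity) hlq 3
  calc q / 32768 = ((q^9/64)/256) / (q^4) * (1 / (2 * q^4)) := by field_simp; ring
    _ ≤ ((ℓ:ℝ)^3/256) / (q^4) * (1 / (2 * q^4)) := by gcongr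
    _ = ((ℓ:ℝ)^3/256) / n * (1 / (2 * n)) := by rw [hq4n]


lemma sum_deg_lower {n : ℕ} (hn : 2 ≤ n) :
    letI := Classical.decRel (GG n).Adj
    ((n - pl n : ℕ) : ℝ) * (((n - pl n : ℕ) : ℝ) - 1) ≤ ∑ v : Fin n, ((GG n).degree v : ℝ) := by
  letI := Classical.decRel (GG n).Adj
  set m := n - pl n with hmdef
  have h2l : 2 * pl n ≤ n := pl_le_half (by omega)
  have hm1 : 1 ≤ m := by omega
  have hmn : m ≤ n := by omega
  set A := Finset.univ.filter (fun v : Fin n => v.val < m) with hA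
  have hAcard : A.card = m := filter_val_lt_card hmn
  have h1 : ∀ v ∈ A, ((m - 1 : ℕ) : ℝ) ≤ ((GG n).degree v : ℝ) := by
    intro v hv
    rw [hA, Finset.mem_filter] at hv
    exact_mod_cast lolli_degree hmn v hv.2
  calc (m : ℝ) * ((m : ℝ) - 1) = A.card * ((m - 1 : ℕ) : ℝ) := by
        rw [hAcard]
        have : ((m - 1 : ℕ) : ℝ) = (m : ℝ) - 1 := by
          have : (1:ℕ) ≤ m := hm1
          push_cast [Nat.cast_sub this]
          ring
        rw [this]
    _ ≤ ∑ v ∈ A, ((GG n).degree v : ℝ) := by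
        have := Finset.card_nsmul_le_sum A _ _ h1
        simpa [nsmul_eq_mul] using this
    _ ≤ ∑ v : Fin n, ((GG n).degree v : ℝ) := by
        apply Finset.sum_le_sum_of_subset_of_nonneg (Finset.subset_univ A)
        intro v _ _
        positivity

lemma avg_bound {n : ℕ} (hn : 2 ≤ n) :
    1 - 2 * ((pl n : ℝ) + 1) / n ≤ avgDeg (GG n) / ((n:ℝ) - 1) := by
  letI := Classical.decRel (GG n).Adj
  set m := n - pl n with hmdef
  have h2l : 2 * pl n ≤ n := pl_le_half (by omega)
  have hln : pl n ≤ n := by omega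
  have hn1 : (1:ℝ) < n := by exact_mod_cast hn
  have hn0 : (0:ℝ) < n := by linarith
  have hnn1 : (0:ℝ) < (n:ℝ) - 1 := by linarith
  have havg : avgDeg (GG n) = (∑ v : Fin n, ((GG n).degree v : ℝ)) / n := by
    unfold avgDeg
    rw [Fintype.card_fin]
  have hS := sum_deg_lower hn
  have hmr : ((m:ℕ) : ℝ) = (n:ℝ) - (pl n : ℝ) := by
    rw [hmdef]
    push_cast [Nat.cast_sub hln]
    ring
  have hf : avgDeg (GG n) / ((n:ℝ) - 1)
      = (∑ v : Fin n, ((GG n).degree v : ℝ)) / ((n:ℝ) * ((n:ℝ) - 1)) := by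
    rw [havg, div_div]
  rw [hf]
  have h3 : 1 - 2 * ((pl n : ℝ) + 1) / n ≤ ((m:ℕ):ℝ) * (((m:ℕ):ℝ) - 1) / ((n:ℝ) * ((n:ℝ) - 1)) := by
    rw [le_div_iff₀ (by positivity)]
    have hone : ((1:ℝ) - 2*((pl n:ℝ)+1)/n) * ((n:ℝ)*((n:ℝ)-1))
        = ((n:ℝ)*((n:ℝ)-1)) - 2*((pl n:ℝ)+1)*((n:ℝ)-1) := by
      field_simp
    rw [hone, hmr]
    have hl0 : (0:ℝ) ≤ (pl n : ℝ) := by positivity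
    have hn2 : (2:ℝ) ≤ n := by exact_mod_cast hn
    nlinarith [sq_nonneg ((pl n : ℝ) - 1/2)]
  refine le_trans h3 ?_
  gcongr


lemma avg_upper {n : ℕ} (hn : 2 ≤ n) : avgDeg (GG n) / ((n:ℝ) - 1) ≤ 1 := by
  letI := Classical.decRel (GG n).Adj
  have hn1 : (1:ℝ) < n := by exact_mod_cast hn
  have hnn1 : (0:ℝ) < (n:ℝ) - 1 := by linarith
  have havg : avgDeg (GG n) = (∑ v : Fin n, ((GG n).degree v : ℝ)) / n := by
    unfold avgDeg
    rw [Fintype.card_fin]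
  have hdeg : ∀ v : Fin n, ((GG n).degree v : ℝ) ≤ (n:ℝ) - 1 := by
    intro v
    have h := SimpleGraph.degree_lt_card_verts (G := GG n) v
    rw [Fintype.card_fin] at h
    have : (GG n).degree v + 1 ≤ n := h
    have := (Nat.cast_le (α := ℝ)).2 this
    push_cast at this
    linarith
  have hS : (∑ v : Fin n, ((GG n).degree v : ℝ)) ≤ (n:ℝ) * ((n:ℝ) - 1) := by
    calc (∑ v : Fin n, ((GG n).degree v : ℝ)) ≤ ∑ _v : Fin n, ((n:ℝ) - 1) :=
          Finset.sum_le_sum (fun v _ => hdeg v)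
      _ = (n:ℝ) * ((n:ℝ) - 1) := by
          rw [Finset.sum_const, Finset.card_univ, Fintype.card_fin, nsmul_eq_mul]
  rw [havg, div_div, div_le_one (by positivity)]
  linarith

lemma tendsto_sqrt_atTop : Filter.Tendsto Real.sqrt Filter.atTop Filter.atTop := by
  apply Filter.tendsto_atTop_atTop.2
  intro b
  refine ⟨(max b 0) ^ 2, fun x hx => ?_⟩
  calc b ≤ max b 0 := le_max_left _ _
    _ = Real.sqrt ((max b 0) ^ 2) := (Real.sqrt_sq (le_max_right _ _)).symm
    _ ≤ Real.sqrt x := Real.sqrt_le_sqrt hx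

/-- for every `α > 1` there is a sequence of connected graphs `Gₙ` on `n`
vertices whose normalized average degree satisfies `liminf d̃(Gₙ)/(n-1) ≥ 1/α` while
`H*(Gₙ) → ∞`. -/
theorem stmt_19 (α : ℝ) (hα : 1 < α) :
    ∃ G : ∀ n : ℕ, SimpleGraph (Fin n),
      (∀ n, 1 ≤ n → (G n).Connected) ∧
      1 / α ≤ liminf (fun n : ℕ => avgDeg (G n) / ((n : ℝ) - 1)) atTop ∧
      Tendsto (fun n => Hstar (G n)) atTop atTop := by
  refine ⟨GG, fun n hn => lolli_connected _ hn, ?_, ?_⟩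
  · -- liminf of normalized average degree
    set f : ℕ → ℝ := fun n => avgDeg (GG n) / ((n : ℝ) - 1) with hf
    have hub : ∀ᶠ n in atTop, f n ≤ 1 :=
      eventually_atTop.2 ⟨2, fun n hn => avg_upper hn⟩
    have hcb : IsCoboundedUnder (· ≥ ·) atTop f :=
      isCoboundedUnder_ge_of_eventually_le atTop hub
    -- (pl n + 1)/n → 0
    have hq : Tendsto (fun n : ℕ => Real.sqrt (Real.sqrt n)) atTop atTop :=
      tendsto_sqrt_atTop.comp (tendsto_sqrt_atTop.comp tendsto_natCast_atTop_atTop)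
    have hb1 : Tendsto (fun n : ℕ => 2 / Real.sqrt (Real.sqrt n)) atTop (nhds 0) := by
      simpa [div_eq_mul_inv] using hq.inv_tendsto_atTop.const_mul (2:ℝ)
    have hb2 : Tendsto (fun n : ℕ => 2 / (n:ℝ)) atTop (nhds 0) := by
      simpa [div_eq_mul_inv] using (tendsto_natCast_atTop_atTop (R := ℝ)).inv_tendsto_atTop.const_mul (2:ℝ)
    have hbnd : Tendsto (fun n : ℕ => 2 / Real.sqrt (Real.sqrt n) + 2 / (n:ℝ)) atTop (nhds 0) := by
      simpa using hb1.add hb2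
    have hsq : Tendsto (fun n : ℕ => 2 * ((pl n : ℝ) + 1) / n) atTop (nhds 0) := by
      apply tendsto_of_tendsto_of_tendsto_of_le_of_le' tendsto_const_nhds hbnd
      · filter_upwards [eventually_ge_atTop 1] with n hn
        positivity
      · filter_upwards [eventually_ge_atTop 1] with n hn
        have hn0 : (0:ℝ) < n := by positivity
        have hq1 : (1:ℝ) ≤ Real.sqrt (Real.sqrt n) := by
          rw [show (1:ℝ) = Real.sqrt (Real.sqrt 1) by simp]
          apply Real.sqrt_le_sqrt; apply Real.sqrt_le_sqrt; exact_mod_cast hn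
        have hpu := pl_upper hn
        have hq0 : (0:ℝ) < Real.sqrt (Real.sqrt n) := by linarith
        have hplq : (pl n : ℝ) * Real.sqrt (Real.sqrt n) ≤ n := by
          have := mul_le_mul_of_nonneg_right hpu hq0.le
          rwa [div_mul_cancel₀ _ (ne_of_gt hq0)] at this
        rw [div_add_div _ _ (by positivity) (by positivity), div_le_div_iff₀ hn0 (by positivity)]
        ring_nf
        nlinarith [mul_le_mul_of_nonneg_right hplq hn0.le]
    have hg : Tendsto (fun n : ℕ => 1 - 2 * ((pl n : ℝ) + 1) / n) atTop (nhds 1) := by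
      simpa using (tendsto_const_nhds (x := (1:ℝ)) (f := atTop)).sub hsq
    have hlt : 1 / α < 1 := by
      rw [div_lt_one (by linarith)]
      exact hα
    have hev : ∀ᶠ n in atTop, 1 / α ≤ f n := by
      filter_upwards [hg.eventually (eventually_ge_nhds hlt), eventually_ge_atTop 2] with n h1 h2
      exact le_trans h1 (avg_bound h2)
    exact le_liminf_of_le hcb hev
  · -- Hstar tends to infinity
    have hq : Tendsto (fun n : ℕ => Real.sqrt (Real.sqrt n) / 32768) atTop atTop :=
      (tendsto_sqrt_atTop.comp (tendsto_sqrt_atTop.comp tendsto_natCast_atTop_atTop)).atTop_div_const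
        (by norm_num)
    apply tendsto_atTop_mono' atTop _ hq
    filter_upwards [eventually_ge_atTop 256] with n hn
    exact hstar_bound hn
end
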